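/- arXiv:1111.1073 — 11 statements merged into one kernel-verified Lean document; each statement's English description precedes it below -/
import Mathlib

section
/- Let τ ∈ ℂ with Im τ > 0 and let L_τ = {m + k·τ : m, k ∈ ℤ}. The following are equivalent: (1) there exist an integer n ≥ 2, a complex number g with g ∉ L_τ and n·g ∈ L_τ, and a complex number λ such that λ·L_τ = L_τ + ℤ·g (i.e. the elliptic curve ℂ/L_τ admits a nontrivial finite cyclic subgroup C with (ℂ/L_τ)/C ≅ ℂ/L_τ); (2) there exist u, v ∈ ℚ with τ² = u·τ + v. Moreover, when (2) holds one necessarily has u² + 4v < 0 (i.e. the curve has complex multiplication). -/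
noncomputable section

/-- The lattice `ℤ + ℤτ` as a subset of `ℂ`. -/
def latt (τ : ℂ) : Set ℂ := {z | ∃ m k : ℤ, z = (m : ℂ) + (k : ℂ) * τ}

/-- The additive subgroup of `ℂ` generated by the lattice `ℤ + ℤτ` and a point `g`. -/
def lattAdj (τ g : ℂ) : Set ℂ := {z | ∃ m k l : ℤ, z = (m : ℂ) + (k : ℂ) * τ + (l : ℂ) * g}

lemma indepZ {τ : ℂ} (hτ : τ.im ≠ 0) {A B : ℤ} (h : (A:ℂ) + (B:ℂ) * τ = 0) :
    A = 0 ∧ B = 0 := by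
  have hB : (B:ℝ) * τ.im = 0 := by
    have := congrArg Complex.im h
    simpa [Complex.add_im, Complex.mul_im] using this
  have hB0 : B = 0 := by
    have : (B:ℝ) = 0 := by
      rcases mul_eq_zero.1 hB with h' | h'
      · exact h'
      · exact absurd h' hτ
    exact_mod_cast this
  refine ⟨?_, hB0⟩
  rw [hB0] at h
  simpa using h

theorem stmt_0 (τ : ℂ) (hτ : 0 < τ.im) :
    ((∃ n : ℕ, 2 ≤ n ∧ ∃ g : ℂ, g ∉ latt τ ∧ (n : ℂ) * g ∈ latt τ ∧
        ∃ lam : ℂ, (fun x => lam * x) '' latt τ = lattAdj τ g) ↔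
      (∃ u v : ℚ, τ ^ 2 = (u : ℂ) * τ + (v : ℂ))) ∧
    (∀ u v : ℚ, τ ^ 2 = (u : ℂ) * τ + (v : ℂ) → u ^ 2 + 4 * v < 0) := by
  have hτ0 : τ.im ≠ 0 := ne_of_gt hτ
  constructor
  · constructor
    · -- (1) → (2)
      rintro ⟨n, hn, g, hg, hng, lam, hlam⟩
      have h1 : (1:ℂ) ∈ lattAdj τ g := ⟨1, 0, 0, by push_cast; ring⟩
      have hτmem : τ ∈ lattAdj τ g := ⟨0, 1, 0, by push_cast; ring⟩
      have hgmem : g ∈ lattAdj τ g := ⟨0, 0, 1, by push_cast; ring⟩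
      rw [← hlam] at h1 hτmem hgmem
      obtain ⟨x1, ⟨a, b, rfl⟩, e1⟩ := h1
      obtain ⟨x2, ⟨c, d, rfl⟩, e2⟩ := hτmem
      obtain ⟨x3, ⟨e, f, rfl⟩, e3⟩ := hgmem
      simp only at e1 e2 e3
      have hlam0 : lam ≠ 0 := by
        intro h; rw [h, zero_mul] at e1; exact one_ne_zero e1.symm
      by_cases hb : b = 0
      · -- degenerate case: lam = 1/a, derive contradiction
        exfalso
        subst hb
        simp only [Int.cast_zero, zero_mul, add_zero] at e1
        have ha0 : (a:ℂ) ≠ 0 := by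
          intro h; rw [h, mul_zero] at e1; exact one_ne_zero e1.symm
        -- lam and lam*τ are in lattAdj
        have hl1 : lam ∈ lattAdj τ g := by
          rw [← hlam]; exact ⟨1, ⟨1, 0, by push_cast; ring⟩, by simp⟩
        have hl2 : lam * τ ∈ lattAdj τ g := by
          rw [← hlam]; exact ⟨τ, ⟨0, 1, by push_cast; ring⟩, rfl⟩
        obtain ⟨m1, k1, l1, hm1⟩ := hl1
        obtain ⟨m2, k2, l2, hm2⟩ := hl2
        -- a * g = e + f τ
        have hag : (a:ℂ) * g = (e:ℂ) + (f:ℂ) * τ := by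
          rw [← e3]; rw [mul_comm lam _] at e1
          calc (a:ℂ) * (lam * ((e:ℂ) + (f:ℂ)*τ))
              = ((a:ℂ) * lam) * ((e:ℂ) + (f:ℂ)*τ) := by ring
            _ = (e:ℂ) + (f:ℂ)*τ := by rw [e1, one_mul]
        -- multiply hm1, hm2 by a
        have k1' : ((a*m1 + l1*e : ℤ):ℂ) + ((a*k1 + l1*f : ℤ):ℂ) * τ = 1 := by
          have := congrArg (fun z => (a:ℂ) * z) hm1
          rw [mul_comm lam _] at e1
          push_cast
          calc ((a:ℂ)*m1 + (l1:ℂ)*e) + ((a:ℂ)*k1 + (l1:ℂ)*f) * τ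
              = (a:ℂ) * ((m1:ℂ) + (k1:ℂ)*τ) + (l1:ℂ) * ((a:ℂ) * g) := by rw [hag]; ring
            _ = (a:ℂ) * ((m1:ℂ) + (k1:ℂ)*τ + (l1:ℂ)*g) := by ring
            _ = (a:ℂ) * lam := by rw [← hm1]
            _ = 1 := e1
        have k2' : ((a*m2 + l2*e : ℤ):ℂ) + ((a*k2 + l2*f : ℤ):ℂ) * τ = τ := by
          rw [mul_comm lam _] at e1
          push_cast
          calc ((a:ℂ)*m2 + (l2:ℂ)*e) + ((a:ℂ)*k2 + (l2:ℂ)*f) * τ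
              = (a:ℂ) * ((m2:ℂ) + (k2:ℂ)*τ) + (l2:ℂ) * ((a:ℂ) * g) := by rw [hag]; ring
            _ = (a:ℂ) * ((m2:ℂ) + (k2:ℂ)*τ + (l2:ℂ)*g) := by ring
            _ = (a:ℂ) * (lam * τ) := by rw [← hm2]
            _ = ((a:ℂ) * lam) * τ := by ring
            _ = τ := by rw [e1, one_mul]
        -- linear independence
        have i1 : (a*m1 + l1*e - 1 : ℤ) = 0 ∧ (a*k1 + l1*f : ℤ) = 0 := by
          apply indepZ hτ0
          push_cast
          push_cast at k1'
          linear_combination k1'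
        have i2 : (a*m2 + l2*e : ℤ) = 0 ∧ (a*k2 + l2*f - 1 : ℤ) = 0 := by
          apply indepZ hτ0
          push_cast
          push_cast at k2'
          linear_combination k2'
        obtain ⟨i11, i12⟩ := i1
        obtain ⟨i21, i22⟩ := i2
        -- a divides 1
        have hdvd : a ∣ 1 := by
          refine ⟨a*m1*k2 - a*k1*m2 + m1*l2*f + l1*e*k2 - k1*l2*e - l1*f*m2, ?_⟩
          linear_combination -(a*k2 + l2*f) * i11 - i22 + (a*m2 + l2*e) * i12
        have ha1 : a = 1 ∨ a = -1 := Int.isUnit_iff.mp (isUnit_of_dvd_one hdvd)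
        -- then g ∈ latt τ
        apply hg
        rcases ha1 with h | h
        · refine ⟨e, f, ?_⟩
          rw [← hag, h]; push_cast; ring
        · refine ⟨-e, -f, ?_⟩
          have : ((-1:ℤ):ℂ) * g = (e:ℂ) + (f:ℂ) * τ := by rw [← h]; exact hag
          push_cast at this ⊢
          linear_combination -this
      · -- main case: b ≠ 0
        have key : (b:ℂ) * τ^2 = (c:ℂ) + ((d:ℂ) - (a:ℂ)) * τ := by
          have h2 : lam * (((a:ℂ) + (b:ℂ)*τ) * τ) = lam * ((c:ℂ) + (d:ℂ)*τ) := by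
            calc lam * (((a:ℂ) + (b:ℂ)*τ) * τ) = (lam * ((a:ℂ) + (b:ℂ)*τ)) * τ := by ring
              _ = 1 * τ := by rw [e1]
              _ = τ := one_mul τ
              _ = lam * ((c:ℂ) + (d:ℂ)*τ) := e2.symm
          have h3 := mul_left_cancel₀ hlam0 h2
          linear_combination h3
        refine ⟨((d:ℚ) - (a:ℚ))/(b:ℚ), (c:ℚ)/(b:ℚ), ?_⟩
        have hbC : (b:ℂ) ≠ 0 := by exact_mod_cast hb
        have hbQ : (b:ℚ) ≠ 0 := by exact_mod_cast hb
        push_cast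
        field_simp
        linear_combination key
    · -- (2) → (1)
      rintro ⟨u, v, huv⟩
      obtain ⟨p, q, r, hq, hC⟩ : ∃ p q r : ℤ, 0 < q ∧ (q:ℂ) * τ^2 = (p:ℂ) * τ + (r:ℂ) := by
        refine ⟨u.num * v.den, (u.den : ℤ) * v.den, v.num * u.den, by positivity, ?_⟩
        have hp : ((u.num * v.den : ℤ) : ℚ) = u * ((u.den : ℤ) * v.den : ℤ) := by
          push_cast; rw [← Rat.mul_den_eq_num]; ring
        have hr : ((v.num * u.den : ℤ) : ℚ) = v * ((u.den : ℤ) * v.den : ℤ) := by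
          push_cast; rw [← Rat.mul_den_eq_num]; ring
        have hpC : ((u.num * v.den : ℤ) : ℂ) = (u:ℂ) * (((u.den : ℤ) * v.den : ℤ):ℂ) := by
          exact_mod_cast congrArg (fun x : ℚ => (x : ℂ)) hp
        have hrC : ((v.num * u.den : ℤ) : ℂ) = (v:ℂ) * (((u.den : ℤ) * v.den : ℤ):ℂ) := by
          exact_mod_cast congrArg (fun x : ℚ => (x : ℂ)) hr
        rw [huv, hpC, hrC]; ring
      set K : ℤ := |p| + |r| + q + 2 with hK
      set m : ℤ := 1 - p + q * K with hm
      set N : ℤ := m * (m + p) - q * r with hN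
      have hq1 : 1 ≤ q := hq
      have hNq : q + 2 ≤ N := by
        have h1 : p ≤ |p| := le_abs_self p
        have h2 : -p ≤ |p| := neg_le_abs p
        have h3 : r ≤ |r| := le_abs_self r
        have h4 : -r ≤ |r| := neg_le_abs r
        have hK0 : 0 < K := by omega
        have ht : K ≤ q * K := le_mul_of_one_le_left hK0.le hq1
        nlinarith [mul_pos hK0 hK0, mul_nonneg (abs_nonneg p) (abs_nonneg r),
          mul_nonneg (sub_nonneg.2 ht) (abs_nonneg r), mul_nonneg (sub_nonneg.2 ht) (abs_nonneg p),
          mul_nonneg (sub_nonneg.2 ht) (by omega : (0:ℤ) ≤ q), sq_nonneg (q*K - |p|), sq_nonneg (q*K)]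
      set α : ℂ := (m:ℂ) + (q:ℂ) * τ with hα_def
      have hα : α ≠ 0 := by
        intro h
        have h2 := congrArg Complex.im h
        simp [hα_def, Complex.add_im, Complex.mul_im] at h2
        rcases h2 with h2 | h2
        · exact absurd h2 (by exact_mod_cast (by omega : q ≠ 0))
        · exact absurd h2 hτ0
      have hmC : (m:ℂ) = 1 - (p:ℂ) + (q:ℂ) * (K:ℂ) := by exact_mod_cast hm
      have hid1 : (N:ℂ) * α⁻¹ = ((m + p : ℤ):ℂ) + ((-q : ℤ):ℂ) * τ := by
        have hNC : (N:ℂ) = (m:ℂ)*((m:ℂ)+(p:ℂ)) - (q:ℂ)*(r:ℂ) := by exact_mod_cast hN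
        rw [hNC]
        field_simp [hα_def]
        rw [hα_def]
        push_cast
        linear_combination (q:ℂ) * hC
      have hid2 : ∀ m' k' : ℤ, α⁻¹ * ((m':ℂ) + (k':ℂ) * τ)
          = ((-(k'*K) : ℤ):ℂ) + ((k':ℤ):ℂ) * τ + (((m' + k'*(K*m - r)) : ℤ):ℂ) * α⁻¹ := by
        intro m' k'
        field_simp [hα_def]
        rw [hα_def]
        push_cast
        rw [hmC]
        linear_combination (-(k':ℂ)) * hC
      have hid3 : ∀ m' k' l : ℤ, (m':ℂ) + (k':ℂ) * τ + (l:ℂ) * α⁻¹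
          = α⁻¹ * (((m'*m + k'*r + l : ℤ):ℂ) + ((m'*q + k'*(m+p) : ℤ):ℂ) * τ) := by
        intro m' k' l
        field_simp [hα_def]
        rw [hα_def]
        push_cast
        linear_combination ((k':ℂ)) * hC
      refine ⟨N.toNat, by omega, α⁻¹, ?_, ?_, α⁻¹, ?_⟩
      · -- g ∉ latt τ
        rintro ⟨c, d, hcd⟩
        have hac : α * ((c:ℂ) + (d:ℂ)*τ) = 1 := by
          rw [← hcd]; exact mul_inv_cancel₀ hα
        have hexp : ((c*m + d*r - 1 : ℤ):ℂ) + ((c*q + d*(m+p) : ℤ):ℂ) * τ = 0 := by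
          push_cast
          rw [hα_def] at hac
          linear_combination hac - (d:ℂ) * hC
        obtain ⟨j1, j2⟩ := indepZ hτ0 hexp
        have hdN : d * N = -q := by
          rw [hN]
          linear_combination m * j2 - q * j1
        have hN0 : 0 ≤ N := by omega
        rcases lt_trichotomy d 0 with h | h | h
        · have hh : d * N ≤ -1 * N := mul_le_mul_of_nonneg_right (by omega) hN0
          linarith [hdN, hNq, hq1]
        · rw [h, zero_mul] at hdN
          omega
        · have hh : 1 * N ≤ d * N := mul_le_mul_of_nonneg_right (by omega) hN0
          linarith [hdN, hNq, hq1]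
      · -- n * g ∈ latt
        refine ⟨m + p, -q, ?_⟩
        have hNn : ((N.toNat : ℕ) : ℂ) = (N:ℂ) := by
          exact_mod_cast Int.toNat_of_nonneg (by omega : (0:ℤ) ≤ N)
        rw [hNn]
        exact hid1
      · -- set equality
        ext z
        constructor
        · rintro ⟨x, ⟨m', k', rfl⟩, rfl⟩
          exact ⟨-(k'*K), k', m' + k'*(K*m - r), hid2 m' k'⟩
        · rintro ⟨m', k', l, rfl⟩
          exact ⟨((m'*m + k'*r + l : ℤ):ℂ) + ((m'*q + k'*(m+p) : ℤ):ℂ) * τ,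
            ⟨m'*m + k'*r + l, m'*q + k'*(m+p), rfl⟩, (hid3 m' k' l).symm⟩
  · -- discriminant
    intro u v h
    have h1 := congrArg Complex.im h
    have h2 := congrArg Complex.re h
    simp [pow_two, Complex.mul_im, Complex.mul_re, Complex.add_im, Complex.add_re,
      Complex.ratCast_im, Complex.ratCast_re] at h1 h2
    have hu : (u:ℝ) = 2 * τ.re := by
      have : (2 * τ.re - (u:ℝ)) * τ.im = 0 := by linarith [h1]
      rcases mul_eq_zero.1 this with h' | h'
      · linarith
      · exact absurd h' hτ0
    have goalR : ((u:ℝ))^2 + 4*(v:ℝ) < 0 := by nlinarith [hτ, h2, hu, mul_pos hτ hτ]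
    have : ((u^2 + 4*v : ℚ):ℝ) < 0 := by push_cast; linarith
    exact_mod_cast this
end
end

section
/- Let τ ∈ ℂ with Im τ > 0, L_τ = {m + k·τ : m, k ∈ ℤ}, and let n ≥ 1 be an integer. There exist g ∈ ℂ and λ ∈ ℂ such that the coset g + L_τ has order exactly n in ℂ/L_τ (i.e. n·g ∈ L_τ and m·g ∉ L_τ for all integers 0 < m < n) and λ·L_τ = L_τ + ℤ·g, if and only if there exist integers a, b, A, B with gcd(a, A, b, B) = 1, a·B − b·A = n, and (a + b·τ)·τ = A + B·τ. -/
noncomputable section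

lemma indep' {τ : ℂ} (hτ : 0 < τ.im) {m k m' k' : ℤ} (h : (m:ℂ) + (k:ℂ)*τ = (m':ℂ) + (k':ℂ)*τ) :
    m = m' ∧ k = k' := by
  have him : (k:ℝ) * τ.im = (k':ℝ) * τ.im := by
    simpa using congrArg Complex.im h
  have hk : (k:ℝ) = k' := by
    field_simp [hτ.ne'] at him; exact_mod_cast him
  have hk' : k = k' := by exact_mod_cast hk
  subst hk'
  have hre : (m:ℝ) = m' := by simpa using congrArg Complex.re h
  exact ⟨by exact_mod_cast hre, rfl⟩

lemma coprime_select (α β : ℤ) (d : ℕ) (hd : d ≠ 0)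
    (h : Int.gcd (Int.gcd α β : ℤ) (d : ℤ) = 1) :
    ∃ x : ℤ, Int.gcd (α + β * x) (d : ℤ) = 1 := by
  classical
  set s : Finset ℕ := d.primeFactors.filter (fun p : ℕ => ¬ (p:ℤ) ∣ α) with hs
  set x : ℕ := ∏ p ∈ s, p with hx
  refine ⟨(x:ℤ), ?_⟩
  by_contra hne
  obtain ⟨ℓ, hℓp, hℓd⟩ := Nat.exists_prime_and_dvd hne
  have hℓ1 : (ℓ:ℤ) ∣ α + β * x :=
    dvd_trans (Int.natCast_dvd_natCast.mpr hℓd) (Int.gcd_dvd_left _ _)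
  have hℓ2 : (ℓ:ℤ) ∣ (d:ℤ) :=
    dvd_trans (Int.natCast_dvd_natCast.mpr hℓd) (Int.gcd_dvd_right _ _)
  have hℓd' : ℓ ∣ d := Int.natCast_dvd_natCast.mp hℓ2
  by_cases hα : (ℓ:ℤ) ∣ α
  · have hβ : ¬ (ℓ:ℤ) ∣ β := by
      intro hβ
      have h1 : (ℓ:ℤ) ∣ (Int.gcd α β : ℤ) := Int.dvd_coe_gcd hα hβ
      have h2 : (ℓ:ℤ) ∣ (Int.gcd (Int.gcd α β : ℤ) (d:ℤ) : ℤ) := Int.dvd_coe_gcd h1 hℓ2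
      rw [h] at h2
      have : ℓ ∣ 1 := by exact_mod_cast h2
      exact hℓp.one_lt.ne' (Nat.dvd_one.mp this)
    have hxdvd : ¬ ℓ ∣ x := by
      intro hdx
      obtain ⟨q, hq, hℓq⟩ := (Nat.Prime.prime hℓp).dvd_finset_prod_iff _ |>.mp hdx
      rw [hs, Finset.mem_filter, Nat.mem_primeFactors] at hq
      have : ℓ = q := (Nat.prime_dvd_prime_iff_eq hℓp hq.1.1).mp hℓq
      exact hq.2 (this ▸ hα)
    have hβx : (ℓ:ℤ) ∣ β * x := (dvd_add_right hα).mp hℓ1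
    rcases (Int.Prime.dvd_mul' (by exact_mod_cast hℓp) hβx) with h' | h'
    · exact hβ h'
    · exact hxdvd (by exact_mod_cast h')
  · have hmem : ℓ ∈ s := by
      rw [hs, Finset.mem_filter, Nat.mem_primeFactors]
      exact ⟨⟨hℓp, hℓd', hd⟩, hα⟩
    have hdx : ℓ ∣ x := Finset.dvd_prod_of_mem _ hmem
    have hβx : (ℓ:ℤ) ∣ β * x := Dvd.dvd.mul_left (Int.natCast_dvd_natCast.mpr hdx) β
    have : (ℓ:ℤ) ∣ α := by
      have := dvd_sub hℓ1 hβx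
      simpa using this
    exact hα this

theorem stmt_1 (τ : ℂ) (hτ : 0 < τ.im) (n : ℕ) (hn : 1 ≤ n) :
    (∃ g lam : ℂ,
        ((n : ℂ) * g ∈ latt τ ∧ ∀ m : ℕ, 0 < m → m < n → (m : ℂ) * g ∉ latt τ) ∧
        (fun x => lam * x) '' latt τ = lattAdj τ g) ↔
    (∃ a b A B : ℤ, Int.gcd (Int.gcd a A) (Int.gcd b B) = 1 ∧
        a * B - b * A = (n : ℤ) ∧
        ((a : ℂ) + (b : ℂ) * τ) * τ = (A : ℂ) + (B : ℂ) * τ) := by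
  have hτ0 : τ.im ≠ 0 := hτ.ne'
  constructor
  · rintro ⟨g, lam, ⟨hng, hord⟩, hset⟩
    -- extract basic data
    have h1mem : (1:ℂ) ∈ (fun x => lam * x) '' latt τ := by
      rw [hset]; exact ⟨1, 0, 0, by norm_num⟩
    obtain ⟨z1, ⟨a, b, rfl⟩, h1e⟩ := h1mem
    have hμ1 : lam * ((a:ℂ) + (b:ℂ)*τ) = 1 := h1e
    have hτmem : τ ∈ (fun x => lam * x) '' latt τ := by
      rw [hset]; exact ⟨0, 1, 0, by norm_num⟩
    obtain ⟨z2, ⟨A, B, rfl⟩, h2e⟩ := hτmem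
    have hμ2 : lam * ((A:ℂ) + (B:ℂ)*τ) = τ := h2e
    have hgmem : g ∈ (fun x => lam * x) '' latt τ := by
      rw [hset]; exact ⟨0, 0, 1, by norm_num⟩
    obtain ⟨z3, ⟨p, q, rfl⟩, h3e⟩ := hgmem
    have hg : lam * ((p:ℂ) + (q:ℂ)*τ) = g := h3e
    have hlam : lam ≠ 0 := by
      intro h0; rw [h0, zero_mul] at hμ1; exact one_ne_zero hμ1.symm
    have hμ : (a:ℂ) + (b:ℂ)*τ ≠ 0 := by
      intro h0; rw [h0, mul_zero] at hμ1; exact one_ne_zero hμ1.symm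
    have hQ : ((a:ℂ) + (b:ℂ)*τ) * τ = (A:ℂ) + (B:ℂ)*τ := by
      calc ((a:ℂ) + (b:ℂ)*τ) * τ = ((a:ℂ) + (b:ℂ)*τ) * (lam * ((A:ℂ) + (B:ℂ)*τ)) := by
            rw [hμ2]
        _ = (lam * ((a:ℂ) + (b:ℂ)*τ)) * ((A:ℂ) + (B:ℂ)*τ) := by ring
        _ = (A:ℂ) + (B:ℂ)*τ := by rw [hμ1, one_mul]
    have μg : ((a:ℂ) + (b:ℂ)*τ) * g = (p:ℂ) + (q:ℂ)*τ := by
      linear_combination (-((a:ℂ)+(b:ℂ)*τ))*hg + ((p:ℂ)+(q:ℂ)*τ)*hμ1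
    -- lam and lam*τ in lattAdj
    have hlmem : lam ∈ lattAdj τ g := by
      rw [← hset]; exact ⟨1, ⟨1, 0, by norm_num⟩, mul_one lam⟩
    obtain ⟨m₁, k₁, l₁, hlam1⟩ := hlmem
    have hltmem : lam * τ ∈ lattAdj τ g := by
      rw [← hset]; exact ⟨τ, ⟨0, 1, by norm_num⟩, rfl⟩
    obtain ⟨m₂, k₂, l₂, hlam2⟩ := hltmem
    -- integer equations G1..G4
    have C1 : ((m₁*a + k₁*A + l₁*p : ℤ):ℂ) + ((m₁*b + k₁*B + l₁*q : ℤ):ℂ)*τ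
        = ((1:ℤ):ℂ) + ((0:ℤ):ℂ)*τ := by
      push_cast
      linear_combination hμ1 - ((a:ℂ)+(b:ℂ)*τ)*hlam1 - (k₁:ℂ)*hQ - (l₁:ℂ)*μg
    obtain ⟨G1, G2⟩ := indep' hτ C1
    have C2 : ((m₂*a + k₂*A + l₂*p : ℤ):ℂ) + ((m₂*b + k₂*B + l₂*q : ℤ):ℂ)*τ
        = ((0:ℤ):ℂ) + ((1:ℤ):ℂ)*τ := by
      push_cast
      linear_combination τ*hμ1 - ((a:ℂ)+(b:ℂ)*τ)*hlam2 - (k₂:ℂ)*hQ - (l₂:ℂ)*μg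
    obtain ⟨G3, G4⟩ := indep' hτ C2
    -- n g ∈ latt
    obtain ⟨c, dd, hcd⟩ := hng
    have C3 : (((n:ℤ)*p : ℤ):ℂ) + (((n:ℤ)*q : ℤ):ℂ)*τ
        = ((c*a + dd*A : ℤ):ℂ) + ((c*b + dd*B : ℤ):ℂ)*τ := by
      push_cast
      linear_combination ((a:ℂ)+(b:ℂ)*τ)*hcd - (n:ℂ)*μg + (dd:ℂ)*hQ
    obtain ⟨E1, E2⟩ := indep' hτ C3
    -- positivity of determinant
    have hrei := congrArg Complex.re hQ
    have himi := congrArg Complex.im hQ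
    simp [Complex.add_re, Complex.add_im, Complex.mul_re, Complex.mul_im] at hrei himi
    have hB : (B:ℝ) = a + 2*b*τ.re := by
      have h5 : τ.im * ((B:ℝ) - a - 2*(b:ℝ)*τ.re) = 0 := by linear_combination -himi
      rcases mul_eq_zero.mp h5 with h' | h'
      · exact absurd h' hτ0
      · linarith
    have hA : (A:ℝ) = -(b:ℝ)*(τ.re^2 + τ.im^2) := by
      rw [hB] at hrei; nlinarith [hrei]
    have hab : ((a:ℝ) + b*τ.re ≠ 0) ∨ ((b:ℝ)*τ.im ≠ 0) := by
      by_contra hc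
      push_neg at hc
      obtain ⟨h1', h2'⟩ := hc
      have hb0 : (b:ℝ) = 0 := by
        rcases mul_eq_zero.mp h2' with h' | h'
        · exact h'
        · exact absurd h' hτ0
      have ha0 : (a:ℝ) = 0 := by rw [hb0] at h1'; simpa using h1'
      apply hμ
      have : (a:ℂ) = 0 := by exact_mod_cast (by exact_mod_cast ha0 : (a:ℤ) = 0)
      have hb' : (b:ℂ) = 0 := by exact_mod_cast (by exact_mod_cast hb0 : (b:ℤ) = 0)
      rw [this, hb']; ring
    have hDr : ((a*B - b*A : ℤ):ℝ) = ((a:ℝ) + b*τ.re)^2 + ((b:ℝ)*τ.im)^2 := by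
      push_cast
      rw [hA, hB]; ring
    have hD : 0 < a*B - b*A := by
      have : (0:ℝ) < ((a*B - b*A : ℤ):ℝ) := by
        rw [hDr]
        rcases hab with h' | h'
        · have := sq_nonneg ((b:ℝ)*τ.im); have := pow_pos (abs_pos.mpr h') 2
          nlinarith [sq_nonneg ((a:ℝ) + b*τ.re), sq_abs ((a:ℝ) + b*τ.re)]
        · nlinarith [sq_nonneg ((a:ℝ) + b*τ.re), sq_nonneg ((b:ℝ)*τ.im),
            sq_abs ((b:ℝ)*τ.im), pow_pos (abs_pos.mpr h') 2]
      exact_mod_cast this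
    set D : ℤ := a*B - b*A with hDdef
    have hn0 : (0:ℤ) < (n:ℤ) := by exact_mod_cast hn
    -- n ∣ D
    have hnD : (n:ℤ) ∣ D := by
      set r : ℤ := D % (n:ℤ) with hrdef
      set s : ℤ := D / (n:ℤ) with hsdef
      have hDr' : (n:ℤ) * s + r = D := Int.mul_ediv_add_emod D (n:ℤ)
      have hr0 : 0 ≤ r := Int.emod_nonneg D hn0.ne'
      have hrn : r < (n:ℤ) := Int.emod_lt_of_pos D hn0
      by_cases hr : r = 0
      · exact ⟨s, by omega⟩
      · exfalso
        have hrpos : 0 < r := lt_of_le_of_ne hr0 (Ne.symm hr)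
        set x' : ℤ := B*p - A*q - s*c with hx'def
        set y' : ℤ := a*q - b*p - s*dd with hy'def
        have I1 : r*p = x'*a + y'*A := by
          rw [hx'def, hy'def]
          linear_combination p*hDr' + p*hDdef - s*E1
        have I2 : r*q = x'*b + y'*B := by
          rw [hx'def, hy'def]
          linear_combination q*hDr' + q*hDdef - s*E2
        have I1c : ((r:ℤ):ℂ)*(p:ℂ) = (x':ℂ)*a + (y':ℂ)*A := by exact_mod_cast congrArg (Int.cast : ℤ → ℂ) I1
        have I2c : ((r:ℤ):ℂ)*(q:ℂ) = (x':ℂ)*b + (y':ℂ)*B := by exact_mod_cast congrArg (Int.cast : ℤ → ℂ) I2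
        have hmem : ((r.toNat : ℕ):ℂ) * g ∈ latt τ := by
          refine ⟨x', y', ?_⟩
          have hrc : ((r.toNat : ℕ):ℂ) = ((r:ℤ):ℂ) := by
            have := Int.toNat_of_nonneg hr0
            exact_mod_cast congrArg (Int.cast : ℤ → ℂ) this
          rw [hrc]
          apply mul_left_cancel₀ hμ
          linear_combination ((r:ℤ):ℂ)*μg + I1c + τ*I2c - (y':ℂ)*hQ
        exact hord r.toNat (by omega) (by omega) hmem
    -- D ∣ n
    have S1 : ((n:ℤ):ℤ) = (n:ℤ) * ((m₁*a + k₁*A + l₁*p)*(m₂*b + k₂*B + l₂*q)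
        - (m₁*b + k₁*B + l₁*q)*(m₂*a + k₂*A + l₂*p)) := by
      linear_combination (-(n:ℤ)*(m₂*b + k₂*B + l₂*q))*G1 - (n:ℤ)*G4
        + ((n:ℤ)*(m₂*a + k₂*A + l₂*p))*G2
    have T1 : (n:ℤ) * ((m₁*a + k₁*A)*q - (m₁*b + k₁*B)*p) = D * (m₁*dd - k₁*c) := by
      rw [hDdef]
      linear_combination (m₁*a + k₁*A)*E2 - (m₁*b + k₁*B)*E1
    have T2 : (n:ℤ) * ((m₂*a + k₂*A)*q - (m₂*b + k₂*B)*p) = D * (m₂*dd - k₂*c) := by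
      rw [hDdef]
      linear_combination (m₂*a + k₂*A)*E2 - (m₂*b + k₂*B)*E1
    have hfin : (n:ℤ) = D * ((n:ℤ)*(m₁*k₂ - m₂*k₁) + l₂*(m₁*dd - k₁*c) - l₁*(m₂*dd - k₂*c)) := by
      rw [hDdef]
      linear_combination S1 + l₂*T1 - l₁*T2 + ((n:ℤ)*(m₁*k₂ - m₂*k₁) + l₂*(m₁*dd - k₁*c) - l₁*(m₂*dd - k₂*c))*hDdef.symm
    have hDn : D ∣ (n:ℤ) := ⟨_, hfin⟩
    have hDeq : D = (n:ℤ) := Int.dvd_antisymm hD.le hn0.le hDn hnD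
    -- gcd = 1
    have hX1 : (m₁*a + k₁*A + l₁*p)*(m₂*b + k₂*B + l₂*q)
        - (m₁*b + k₁*B + l₁*q)*(m₂*a + k₂*A + l₂*p) = 1 := by
      rw [G1, G2, G3, G4]; ring
    set t : ℕ := Int.gcd (Int.gcd a A : ℤ) (Int.gcd b B : ℤ) with htdef
    have hta : (t:ℤ) ∣ a := dvd_trans (Int.gcd_dvd_left _ _) (Int.gcd_dvd_left _ _)
    have htA : (t:ℤ) ∣ A := dvd_trans (Int.gcd_dvd_left _ _) (Int.gcd_dvd_right _ _)
    have htb : (t:ℤ) ∣ b := dvd_trans (Int.gcd_dvd_right _ _) (Int.gcd_dvd_left _ _)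
    have htB : (t:ℤ) ∣ B := dvd_trans (Int.gcd_dvd_right _ _) (Int.gcd_dvd_right _ _)
    have hdecomp : (m₁*a + k₁*A + l₁*p)*(m₂*b + k₂*B + l₂*q)
        - (m₁*b + k₁*B + l₁*q)*(m₂*a + k₂*A + l₂*p)
        = a*(m₁*(m₂*b + k₂*B + l₂*q) - l₁*q*m₂) + A*(k₁*(m₂*b + k₂*B + l₂*q) - l₁*q*k₂)
        + b*(-(m₁*(m₂*a + k₂*A + l₂*p)) + l₁*p*m₂) + B*(-(k₁*(m₂*a + k₂*A + l₂*p)) + l₁*p*k₂) := by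
      ring
    have ht1 : (t:ℤ) ∣ 1 := by
      rw [← hX1, hdecomp]
      exact dvd_add (dvd_add (dvd_add (hta.mul_right _) (htA.mul_right _)) (htb.mul_right _)) (htB.mul_right _)
    have ht : t = 1 := Nat.dvd_one.mp (by exact_mod_cast ht1)
    exact ⟨a, b, A, B, ht, hDeq, hQ⟩
  · rintro ⟨a, b, A, B, hgcd, hdet, hQ⟩
    have hn0 : (0:ℤ) < (n:ℤ) := by exact_mod_cast hn
    -- (a,b) ≠ (0,0)
    have hab : ¬(a = 0 ∧ b = 0) := by
      rintro ⟨rfl, rfl⟩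
      simp at hdet
      omega
    have hμ : (a:ℂ) + (b:ℂ)*τ ≠ 0 := by
      intro h0
      have hb : (b:ℝ) * τ.im = 0 := by simpa using congrArg Complex.im h0
      have hb0 : (b:ℝ) = 0 := by
        rcases mul_eq_zero.mp hb with h' | h'
        · exact h'
        · exact absurd h' hτ0
      have hbz : b = 0 := by exact_mod_cast hb0
      have ha : (a:ℝ) = 0 := by
        have := congrArg Complex.re h0
        simp [hbz] at this
        exact_mod_cast this
      exact hab ⟨by exact_mod_cast ha, hbz⟩
    set d : ℕ := Int.gcd a b with hddef
    have hd0 : d ≠ 0 := by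
      rw [hddef]
      simp only [ne_eq, Int.gcd_eq_zero_iff]
      tauto
    obtain ⟨a₀, ha₀⟩ : (d:ℤ) ∣ a := (Int.gcd_dvd_left _ _)
    obtain ⟨b₀, hb₀⟩ : (d:ℤ) ∣ b := (Int.gcd_dvd_right _ _)
    have hbez : (d:ℤ) = a * Int.gcdA a b + b * Int.gcdB a b := Int.gcd_eq_gcd_ab a b
    set u : ℤ := Int.gcdA a b with hudef
    set v : ℤ := Int.gcdB a b with hvdef
    have huv : a₀*u + b₀*v = 1 := by
      have hdz : (d:ℤ) ≠ 0 := by exact_mod_cast hd0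
      apply mul_left_cancel₀ hdz
      rw [mul_one]
      linear_combination -hbez - u*ha₀ - v*hb₀
    obtain ⟨α, hα⟩ : ∃ α : ℤ, α = u*A + v*B := ⟨_, rfl⟩
    obtain ⟨β, hβ⟩ : ∃ β : ℤ, β = a₀*B - b₀*A := ⟨_, rfl⟩
    have hdβ : (d:ℤ)*β = (n:ℤ) := by
      linear_combination hdet - B*ha₀ + A*hb₀ + (d:ℤ)*hβ
    have hA' : A = a₀*α - v*β := by
      linear_combination (-A)*huv - a₀*hα + v*hβ
    have hB' : B = b₀*α + u*β := by
      linear_combination (-B)*huv - b₀*hα - u*hβ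
    -- gcd(gcd α β, d) = 1
    have hgcd3 : Int.gcd (Int.gcd α β : ℤ) (d:ℤ) = 1 := by
      set t : ℕ := Int.gcd (Int.gcd α β : ℤ) (d:ℤ) with htdef
      have htα : (t:ℤ) ∣ α := dvd_trans (Int.gcd_dvd_left _ _) (Int.gcd_dvd_left _ _)
      have htβ : (t:ℤ) ∣ β := dvd_trans (Int.gcd_dvd_left _ _) (Int.gcd_dvd_right _ _)
      have htd : (t:ℤ) ∣ (d:ℤ) := (Int.gcd_dvd_right _ _)
      have htA : (t:ℤ) ∣ A := by
        rw [hA']; exact dvd_sub (htα.mul_left _) (htβ.mul_left _)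
      have htB : (t:ℤ) ∣ B := by
        rw [hB']; exact dvd_add (htα.mul_left _) (htβ.mul_left _)
      have hta : (t:ℤ) ∣ a := by rw [ha₀]; exact htd.mul_right _
      have htb : (t:ℤ) ∣ b := by rw [hb₀]; exact htd.mul_right _
      have h1 : (t:ℤ) ∣ (Int.gcd (Int.gcd a A : ℤ) (Int.gcd b B : ℤ) : ℤ) :=
        Int.dvd_coe_gcd (Int.dvd_coe_gcd hta htA) (Int.dvd_coe_gcd htb htB)
      rw [hgcd] at h1
      exact Nat.dvd_one.mp (by exact_mod_cast h1)
    obtain ⟨x₀, hx₀⟩ := coprime_select α β d hd0 hgcd3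
    obtain ⟨x, hxdef⟩ : ∃ x : ℤ, x = -x₀ := ⟨_, rfl⟩
    have hgx : Int.gcd (x*β - α) (d:ℤ) = 1 := by
      rw [show x*β - α = -(α + β*x₀) by rw [hxdef]; ring]
      rwa [Int.neg_gcd]
    set s : ℤ := Int.gcdA (x*β - α) (d:ℤ) with hsdef
    set tt : ℤ := Int.gcdB (x*β - α) (d:ℤ) with httdef
    have hst : (1:ℤ) = (x*β - α)*s + (d:ℤ)*tt := by
      have := Int.gcd_eq_gcd_ab (x*β - α) (d:ℤ)
      rw [hgx] at this
      exact_mod_cast this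
    obtain ⟨p, hpdef⟩ : ∃ p : ℤ, p = x*a₀ - v := ⟨_, rfl⟩
    obtain ⟨q, hqdef⟩ : ∃ q : ℤ, q = x*b₀ + u := ⟨_, rfl⟩
    have hqa_pb : q*a - p*b = (d:ℤ) := by
      linear_combination q*ha₀ - p*hb₀ + (d:ℤ)*huv + ((d:ℤ)*a₀)*hqdef - ((d:ℤ)*b₀)*hpdef
    have hm2 : p*B - q*A = x*β - α := by
      linear_combination B*hpdef - A*hqdef - x*hβ + hα
    obtain ⟨X1, hX1⟩ : ∃ X1 : ℤ, X1 = s*B - tt*b := ⟨_, rfl⟩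
    obtain ⟨Y1, hY1⟩ : ∃ Y1 : ℤ, Y1 = tt*q := ⟨_, rfl⟩
    obtain ⟨Z1, hZ1⟩ : ∃ Z1 : ℤ, Z1 = -(s*q) := ⟨_, rfl⟩
    obtain ⟨X2, hX2⟩ : ∃ X2 : ℤ, X2 = tt*a - s*A := ⟨_, rfl⟩
    obtain ⟨Y2, hY2⟩ : ∃ Y2 : ℤ, Y2 = -(tt*p) := ⟨_, rfl⟩
    obtain ⟨Z2, hZ2⟩ : ∃ Z2 : ℤ, Z2 = s*p := ⟨_, rfl⟩
    have G1 : X1*p + Y1*a + Z1*A = 1 := by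
      linear_combination s*hm2 + tt*hqa_pb - hst + p*hX1 + a*hY1 + A*hZ1
    have G2 : X1*q + Y1*b + Z1*B = 0 := by
      linear_combination q*hX1 + b*hY1 + B*hZ1
    have G3 : X2*p + Y2*a + Z2*A = 0 := by
      linear_combination p*hX2 + a*hY2 + A*hZ2
    have G4 : X2*q + Y2*b + Z2*B = 1 := by
      linear_combination s*hm2 + tt*hqa_pb - hst + q*hX2 + b*hY2 + B*hZ2
    -- define lam and g
    set lam : ℂ := ((a:ℂ) + (b:ℂ)*τ)⁻¹ with hlamdef
    set g : ℂ := lam * ((p:ℂ) + (q:ℂ)*τ) with hgdef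
    have hlam1 : lam * ((a:ℂ) + (b:ℂ)*τ) = 1 := inv_mul_cancel₀ hμ
    have hlamτ : lam * ((A:ℂ) + (B:ℂ)*τ) = τ := by
      rw [← hQ, ← mul_assoc, hlam1, one_mul]
    have hμg : ((a:ℂ) + (b:ℂ)*τ) * g = (p:ℂ) + (q:ℂ)*τ := by
      rw [hgdef]
      calc ((a:ℂ) + (b:ℂ)*τ) * (lam * ((p:ℂ) + (q:ℂ)*τ))
          = (lam * ((a:ℂ) + (b:ℂ)*τ)) * ((p:ℂ) + (q:ℂ)*τ) := by ring
        _ = (p:ℂ) + (q:ℂ)*τ := by rw [hlam1, one_mul]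
    -- the workhorse identity
    have W : ∀ m k l : ℤ, lam * (((m*a + k*A + l*p : ℤ):ℂ) + ((m*b + k*B + l*q : ℤ):ℂ)*τ)
        = (m:ℂ) + (k:ℂ)*τ + (l:ℂ)*g := by
      intro m k l
      push_cast
      linear_combination (m:ℂ)*hlam1 + (k:ℂ)*hlamτ - (l:ℂ)*hgdef
    refine ⟨g, lam, ⟨⟨?_, ?_⟩, ?_⟩⟩
    · -- n g ∈ latt
      refine ⟨B*p - A*q, a*q - b*p, ?_⟩
      have J1 : (n:ℤ)*p = a*(B*p - A*q) + A*(a*q - b*p) := by linear_combination (-p)*hdet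
      have J2 : (n:ℤ)*q = b*(B*p - A*q) + B*(a*q - b*p) := by linear_combination (-q)*hdet
      have J1c : ((n:ℕ):ℂ)*(p:ℂ) = (a:ℂ)*((B*p - A*q : ℤ):ℂ) + (A:ℂ)*((a*q - b*p : ℤ):ℂ) := by
        exact_mod_cast congrArg (Int.cast : ℤ → ℂ) J1
      have J2c : ((n:ℕ):ℂ)*(q:ℂ) = (b:ℂ)*((B*p - A*q : ℤ):ℂ) + (B:ℂ)*((a*q - b*p : ℤ):ℂ) := by
        exact_mod_cast congrArg (Int.cast : ℤ → ℂ) J2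
      apply mul_left_cancel₀ hμ
      linear_combination ((n:ℕ):ℂ)*hμg + J1c + τ*J2c - ((a*q - b*p : ℤ):ℂ)*hQ
    · -- order exactly n
      rintro m hm0 hmn ⟨c, dd, hcd⟩
      have key : ((m:ℕ):ℂ)*((p:ℂ) + (q:ℂ)*τ) = (c:ℂ)*((a:ℂ)+(b:ℂ)*τ) + (dd:ℂ)*((A:ℂ)+(B:ℂ)*τ) := by
        linear_combination (-((m:ℕ):ℂ))*hμg + ((a:ℂ)+(b:ℂ)*τ)*hcd + (dd:ℂ)*hQ
      have key2 : (((m:ℤ)*p : ℤ):ℂ) + (((m:ℤ)*q : ℤ):ℂ)*τ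
          = ((c*a + dd*A : ℤ):ℂ) + ((c*b + dd*B : ℤ):ℂ)*τ := by
        push_cast
        push_cast at key
        linear_combination key
      obtain ⟨E1, E2⟩ := indep' hτ key2
      have h1 : (0:ℤ) = a*(X2*c + (m:ℤ)*Y2) + A*(X2*dd + (m:ℤ)*Z2) := by
        linear_combination X2*E1 - (m:ℤ)*G3
      have h2 : ((m:ℤ):ℤ) = b*(X2*c + (m:ℤ)*Y2) + B*(X2*dd + (m:ℤ)*Z2) := by
        linear_combination X2*E2 - (m:ℤ)*G4
      have h3 : ((m:ℤ):ℤ) = a*(X1*c + (m:ℤ)*Y1) + A*(X1*dd + (m:ℤ)*Z1) := by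
        linear_combination X1*E1 - (m:ℤ)*G1
      have h4 : (0:ℤ) = b*(X1*c + (m:ℤ)*Y1) + B*(X1*dd + (m:ℤ)*Z1) := by
        linear_combination X1*E2 - (m:ℤ)*G2
      have hma : (n:ℤ) ∣ (m:ℤ)*a :=
        ⟨X2*dd + (m:ℤ)*Z2, by linear_combination a*h2 - b*h1 + (X2*dd + (m:ℤ)*Z2)*hdet⟩
      have hmA : (n:ℤ) ∣ (m:ℤ)*A :=
        ⟨-(X2*c + (m:ℤ)*Y2), by linear_combination A*h2 - B*h1 - (X2*c + (m:ℤ)*Y2)*hdet⟩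
      have hmB : (n:ℤ) ∣ (m:ℤ)*B :=
        ⟨X1*c + (m:ℤ)*Y1, by linear_combination B*h3 - A*h4 + (X1*c + (m:ℤ)*Y1)*hdet⟩
      have hmb : (n:ℤ) ∣ (m:ℤ)*b :=
        ⟨-(X1*dd + (m:ℤ)*Z1), by linear_combination b*h3 - a*h4 - (X1*dd + (m:ℤ)*Z1)*hdet⟩
      have hg1 : (n:ℤ) ∣ (Int.gcd ((m:ℤ)*a) ((m:ℤ)*A) : ℤ) := Int.dvd_coe_gcd hma hmA
      have hg2 : (n:ℤ) ∣ (Int.gcd ((m:ℤ)*b) ((m:ℤ)*B) : ℤ) := Int.dvd_coe_gcd hmb hmB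
      rw [Int.gcd_mul_left] at hg1 hg2
      have hg1' : (n:ℤ) ∣ (m:ℤ) * (Int.gcd a A : ℤ) := by
        simpa [Int.natAbs_natCast] using hg1
      have hg2' : (n:ℤ) ∣ (m:ℤ) * (Int.gcd b B : ℤ) := by
        simpa [Int.natAbs_natCast] using hg2
      have hgm : (n:ℤ) ∣ (Int.gcd ((m:ℤ) * (Int.gcd a A : ℤ)) ((m:ℤ) * (Int.gcd b B : ℤ)) : ℤ) :=
        Int.dvd_coe_gcd hg1' hg2'
      rw [Int.gcd_mul_left] at hgm
      rw [hgcd] at hgm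
      have : (n:ℤ) ∣ (m:ℤ) := by
        simpa [Int.natAbs_natCast] using hgm
      have : n ∣ m := by exact_mod_cast this
      have := Nat.le_of_dvd hm0 this
      omega
    · -- set equality
      ext z
      simp only [Set.mem_image]
      constructor
      · rintro ⟨w, ⟨m', k', rfl⟩, rfl⟩
        refine ⟨m'*Y1 + k'*Y2, m'*Z1 + k'*Z2, m'*X1 + k'*X2, ?_⟩
        have c1 : (m'*Y1 + k'*Y2)*a + (m'*Z1 + k'*Z2)*A + (m'*X1 + k'*X2)*p = m' := by
          linear_combination m'*G1 + k'*G3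
        have c2 : (m'*Y1 + k'*Y2)*b + (m'*Z1 + k'*Z2)*B + (m'*X1 + k'*X2)*q = k' := by
          linear_combination m'*G2 + k'*G4
        have := W (m'*Y1 + k'*Y2) (m'*Z1 + k'*Z2) (m'*X1 + k'*X2)
        rw [c1, c2] at this
        exact this
      · rintro ⟨m, k, l, rfl⟩
        exact ⟨((m*a + k*A + l*p : ℤ):ℂ) + ((m*b + k*B + l*q : ℤ):ℂ)*τ,
          ⟨m*a + k*A + l*p, m*b + k*B + l*q, rfl⟩, W m k l⟩
end
end

section
/- Let u, v ∈ ℚ with Δ = u² + 4v < 0, written u = u₁/u₂ and v = v₁/v₂ in lowest terms with u₂, v₂ > 0, and let d = gcd(u₂, v₂). Let τ ∈ ℂ with Im τ > 0 satisfy τ² = u·τ + v, let L_τ = {m + k·τ : m, k ∈ ℤ}, and let n ≥ 1 be an integer. Then there exist g ∈ ℂ and λ ∈ ℂ such that the coset g + L_τ has order exactly n in ℂ/L_τ and λ·L_τ = L_τ + ℤ·g, if and only if there exist integers a, b' with gcd(a, b') = 1 and n = a·(a + (u₁v₂/d)·b') − ((u₂v₂/d)·b')·((u₂v₁/d)·b').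 -/
noncomputable section

/-- coordinates map -/
private def phi (τ : ℂ) (z : Fin 2 → ℤ) : ℂ := (z 0 : ℂ) + (z 1 : ℂ) * τ

private lemma mem_latt_phi {τ z} : z ∈ latt τ ↔ ∃ w : Fin 2 → ℤ, z = phi τ w := by
  constructor
  · rintro ⟨m, k, rfl⟩
    exact ⟨![m, k], by simp [phi]⟩
  · rintro ⟨w, rfl⟩
    exact ⟨w 0, w 1, rfl⟩

private lemma phi_mem_latt {τ : ℂ} (w : Fin 2 → ℤ) : phi τ w ∈ latt τ := ⟨w 0, w 1, rfl⟩

private lemma coordQ {τ : ℂ} (hτ : τ.im ≠ 0) {r s r' s' : ℚ}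
    (h : (r : ℂ) + (s : ℂ) * τ = (r' : ℂ) + (s' : ℂ) * τ) : r = r' ∧ s = s' := by
  have him := congrArg Complex.im h
  simp only [Complex.add_im, Complex.mul_im, Complex.ratCast_im, Complex.ratCast_re,
    zero_add, zero_mul, add_zero] at him
  have hs : (s : ℝ) = (s' : ℝ) := mul_right_cancel₀ hτ him
  have hs' : s = s' := by exact_mod_cast hs
  subst hs'
  have hr : (r : ℂ) = (r' : ℂ) := by
    have := add_right_cancel h
    exact this
  exact ⟨by exact_mod_cast hr, rfl⟩

private lemma coordZ {τ : ℂ} (hτ : τ.im ≠ 0) {m k m' k' : ℤ}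
    (h : (m : ℂ) + (k : ℂ) * τ = (m' : ℂ) + (k' : ℂ) * τ) : m = m' ∧ k = k' := by
  have h' : ((m : ℚ) : ℂ) + ((k : ℚ) : ℂ) * τ = ((m' : ℚ) : ℂ) + ((k' : ℚ) : ℂ) * τ := by
    push_cast at h ⊢
    exact h
  obtain ⟨h1, h2⟩ := coordQ hτ h'
  exact ⟨by exact_mod_cast h1, by exact_mod_cast h2⟩

private lemma phi_inj {τ : ℂ} (hτ : τ.im ≠ 0) {w w' : Fin 2 → ℤ}
    (h : phi τ w = phi τ w') : w = w' := by
  obtain ⟨h1, h2⟩ := coordZ hτ h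
  funext i
  fin_cases i
  · exact h1
  · exact h2

private lemma phi_smul {τ : ℂ} (c : ℤ) (w : Fin 2 → ℤ) :
    phi τ (c • w) = (c : ℂ) * phi τ w := by
  simp only [phi, Pi.smul_apply, smul_eq_mul]
  push_cast
  ring

private lemma phi_add {τ : ℂ} (w w' : Fin 2 → ℤ) :
    phi τ (w + w') = phi τ w + phi τ w' := by
  simp only [phi, Pi.add_apply]
  push_cast
  ring

/-- the matrix of multiplication by `X + C·Y·τ` -/
private def matXY (P Q C X Y : ℤ) : Matrix (Fin 2) (Fin 2) ℤ :=
  !![X, Q * Y; C * Y, X + P * Y]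

private lemma matXY_det (P Q C X Y : ℤ) :
    (matXY P Q C X Y).det = X * (X + P * Y) - (C * Y) * (Q * Y) := by
  simp [matXY, Matrix.det_fin_two]
  ring

private lemma matXY_mulVec (P Q C X Y : ℤ) (y : Fin 2 → ℤ) :
    (matXY P Q C X Y).mulVec y
      = ![X * y 0 + Q * Y * y 1, C * Y * y 0 + (X + P * Y) * y 1] := by
  funext i
  fin_cases i <;>
    simp [matXY, Matrix.mulVec, dotProduct, Fin.sum_univ_two]

private lemma Cquad {τ : ℂ} {u v : ℚ} (hquad : τ ^ 2 = (u : ℂ) * τ + (v : ℂ))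
    {P Q C : ℤ} (hCu : (C : ℂ) * (u : ℂ) = (P : ℂ)) (hCv : (C : ℂ) * (v : ℂ) = (Q : ℂ)) :
    (C : ℂ) * τ ^ 2 = (P : ℂ) * τ + (Q : ℂ) := by
  calc (C : ℂ) * τ ^ 2 = ((C : ℂ) * (u : ℂ)) * τ + (C : ℂ) * (v : ℂ) := by rw [hquad]; ring
  _ = (P : ℂ) * τ + (Q : ℂ) := by rw [hCu, hCv]

-- key multiplication identity
private lemma keymul {τ : ℂ} {u v : ℚ} (hquad : τ ^ 2 = (u : ℂ) * τ + (v : ℂ))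
    {P Q C : ℤ} (hCu : (C : ℂ) * (u : ℂ) = (P : ℂ)) (hCv : (C : ℂ) * (v : ℂ) = (Q : ℂ))
    (X Y : ℤ) (y : Fin 2 → ℤ) :
    ((X : ℂ) + ((C * Y : ℤ) : ℂ) * τ) * phi τ y = phi τ ((matXY P Q C X Y).mulVec y) := by
  rw [matXY_mulVec]
  have hCquad := Cquad hquad hCu hCv
  simp only [phi, Matrix.cons_val_zero, Matrix.cons_val_one, Matrix.head_cons]
  push_cast
  linear_combination ((Y : ℂ) * (y 1 : ℂ)) * hCquad

-- conjugate multiplication identity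
private lemma conjmul {τ : ℂ} {u v : ℚ} (hquad : τ ^ 2 = (u : ℂ) * τ + (v : ℂ))
    {P Q C : ℤ} (hCu : (C : ℂ) * (u : ℂ) = (P : ℂ)) (hCv : (C : ℂ) * (v : ℂ) = (Q : ℂ))
    (X Y : ℤ) (y : Fin 2 → ℤ) :
    (((X + P * Y : ℤ) : ℂ) - ((C * Y : ℤ) : ℂ) * τ) * phi τ y
      = phi τ (![(X + P * Y) * y 0 - Q * Y * y 1, X * y 1 - C * Y * y 0]) := by
  have hCquad := Cquad hquad hCu hCv
  simp only [phi, Matrix.cons_val_zero, Matrix.cons_val_one, Matrix.head_cons]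
  push_cast
  linear_combination (-(Y : ℂ) * (y 1 : ℂ)) * hCquad

-- norm identity
private lemma normident {τ : ℂ} {u v : ℚ} (hquad : τ ^ 2 = (u : ℂ) * τ + (v : ℂ))
    {P Q C : ℤ} (hCu : (C : ℂ) * (u : ℂ) = (P : ℂ)) (hCv : (C : ℂ) * (v : ℂ) = (Q : ℂ))
    (X Y : ℤ) :
    ((X : ℂ) + ((C * Y : ℤ) : ℂ) * τ) * (((X + P * Y : ℤ) : ℂ) - ((C * Y : ℤ) : ℂ) * τ)
      = ((X * (X + P * Y) - (C * Y) * (Q * Y) : ℤ) : ℂ) := by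
  have hCquad := Cquad hquad hCu hCv
  push_cast
  linear_combination (-(C : ℂ) * (Y : ℂ)^2) * hCquad





lemma master2 (M : Matrix (Fin 2) (Fin 2) ℤ) (hdet : M.det ≠ 0) :
    ∃ (a0 a1 : ℤ) (B0 B1 : Fin 2 → ℤ),
      (∀ z : Fin 2 → ℤ, (∃ y, z = M.mulVec y) ↔ ∃ c0 c1 : ℤ, z = (c0 * a0) • B0 + (c1 * a1) • B1) ∧
      (∀ z : Fin 2 → ℤ, ∃ s t : ℤ, z = s • B0 + t • B1) ∧
      (∀ s t : ℤ, s • B0 + t • B1 = 0 → s = 0 ∧ t = 0) ∧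
      (a0 * a1).natAbs = M.det.natAbs := by
  classical
  set N : Submodule ℤ (Fin 2 → ℤ) := LinearMap.range M.mulVecLin with hN
  obtain ⟨k, snf⟩ := N.smithNormalForm (Pi.basisFun ℤ (Fin 2))
  have hmemN : ∀ z : Fin 2 → ℤ, z ∈ N ↔ ∃ y, z = M.mulVec y := by
    intro z
    constructor
    · rintro ⟨y, rfl⟩; exact ⟨y, rfl⟩
    · rintro ⟨y, rfl⟩; exact ⟨y, rfl⟩
  have hcolmem : ∀ j, M.mulVec (Pi.single j 1) ∈ N := fun j => ⟨Pi.single j 1, rfl⟩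
  have hsum : ∀ g : Fin 2 → ℤ, ∑ j, g j • M.mulVec (Pi.single j 1) = M.mulVec g := by
    intro g
    funext i
    simp [Matrix.mulVec, dotProduct, Fin.sum_univ_two, Pi.single_apply]
    ring
  have hinj : ∀ g : Fin 2 → ℤ, M.mulVec g = 0 → g = 0 := by
    intro g hg
    have h1 : M.adjugate.mulVec (M.mulVec g) = M.det • g := by
      rw [Matrix.mulVec_mulVec, Matrix.adjugate_mul, Matrix.smul_mulVec,
        Matrix.one_mulVec]
    rw [hg, Matrix.mulVec_zero] at h1
    rcases smul_eq_zero.mp h1.symm with h | h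
    · exact absurd h hdet
    · exact h
  have hliA : LinearIndependent ℤ (fun j : Fin 2 => M.mulVec (Pi.single j 1)) := by
    rw [Fintype.linearIndependent_iff]
    intro g hg j
    rw [hsum] at hg
    have := hinj g hg
    simp [this]
  have hliN : LinearIndependent ℤ (fun j : Fin 2 => (⟨M.mulVec (Pi.single j 1), hcolmem j⟩ : N)) := by
    apply LinearIndependent.of_comp N.subtype
    convert hliA
    rfl
  have hk2 : k = 2 := by
    have h1 : Fintype.card (Fin 2) ≤ Fintype.card (Fin k) :=
      Module.Basis.card_le_card_of_linearIndependent snf.bN hliN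
    have h2 : Fintype.card (Fin k) ≤ Fintype.card (Fin 2) :=
      Fintype.card_le_of_embedding snf.f
    simp at h1 h2
    omega
  subst hk2
  have hfbij : Function.Bijective snf.f := by
    rw [← Finite.injective_iff_bijective]
    exact snf.f.injective
  have hne : snf.f 0 ≠ snf.f 1 := snf.f.injective.ne (by decide)
  set a0 := snf.a 0 with ha0
  set a1 := snf.a 1 with ha1
  set B0 := snf.bM (snf.f 0) with hB0
  set B1 := snf.bM (snf.f 1) with hB1
  -- membership characterization
  have hmem : ∀ z : Fin 2 → ℤ,
      (∃ y, z = M.mulVec y) ↔ ∃ c0 c1 : ℤ, z = (c0 * a0) • B0 + (c1 * a1) • B1 := by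
    intro z
    constructor
    · intro hz
      have hzN : z ∈ N := (hmemN z).mpr hz
      set m : N := ⟨z, hzN⟩ with hm
      refine ⟨snf.bN.repr m 0, snf.bN.repr m 1, ?_⟩
      have hz0 : z = (snf.bN.repr m 0) • ((snf.bN 0 : N) : Fin 2 → ℤ)
          + (snf.bN.repr m 1) • ((snf.bN 1 : N) : Fin 2 → ℤ) := by
        have h := congrArg (N.subtype) (snf.bN.sum_repr m)
        simp only [Fin.sum_univ_two, map_add, map_smul, Submodule.subtype_apply] at h
        exact h.symm
      rw [snf.snf 0, snf.snf 1] at hz0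
      rw [hz0, smul_smul, smul_smul]
    · rintro ⟨c0, c1, rfl⟩
      apply (hmemN _).mp
      apply Submodule.add_mem
      · rw [← smul_smul, ← snf.snf 0]
        exact Submodule.smul_mem _ _ (snf.bN 0).2
      · rw [← smul_smul, ← snf.snf 1]
        exact Submodule.smul_mem _ _ (snf.bN 1).2
  have hspan : ∀ z : Fin 2 → ℤ, ∃ s t : ℤ, z = s • B0 + t • B1 := by
    intro z
    have h1 := snf.bM.sum_repr z
    have h2 : ∑ i, snf.bM.repr z (snf.f i) • snf.bM (snf.f i)
        = ∑ i, snf.bM.repr z i • snf.bM i :=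
      Fintype.sum_bijective snf.f hfbij _ _ (fun i => rfl)
    have key := h2.trans h1
    rw [Fin.sum_univ_two] at key
    exact ⟨snf.bM.repr z (snf.f 0), snf.bM.repr z (snf.f 1), key.symm⟩
  have huniq : ∀ s t : ℤ, s • B0 + t • B1 = 0 → s = 0 ∧ t = 0 := by
    intro s t h
    have h0 : snf.bM.repr (s • B0 + t • B1) (snf.f 0) = 0 := by rw [h]; simp
    have h1 : snf.bM.repr (s • B0 + t • B1) (snf.f 1) = 0 := by rw [h]; simp
    simp only [map_add, _root_.map_smul, Finsupp.add_apply, Finsupp.smul_apply,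
      hB0, hB1, Module.Basis.repr_self, Finsupp.single_apply, smul_eq_mul] at h0 h1
    simp [hne, Ne.symm hne] at h0 h1
    exact ⟨h0, h1⟩
  refine ⟨a0, a1, B0, B1, hmem, hspan, huniq, ?_⟩
  -- determinant identity
  set det2 : (Fin 2 → ℤ) → (Fin 2 → ℤ) → ℤ := fun z w => z 0 * w 1 - z 1 * w 0 with hdet2
  have d1 : ∀ y y' : Fin 2 → ℤ,
      det2 (M.mulVec y) (M.mulVec y') = M.det * det2 y y' := by
    intro y y'
    simp [hdet2, Matrix.mulVec, dotProduct, Fin.sum_univ_two, Matrix.det_fin_two]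
    ring
  have d2 : ∀ (s t s' t' : ℤ) (w0 w1 : Fin 2 → ℤ),
      det2 (s • w0 + t • w1) (s' • w0 + t' • w1) = (s * t' - t * s') * det2 w0 w1 := by
    intro s t s' t' w0 w1
    simp [hdet2]
    ring
  obtain ⟨x0, y0, hC0⟩ := (hmem (M.mulVec (Pi.single 0 1))).mp ⟨_, rfl⟩
  obtain ⟨x1, y1, hC1⟩ := (hmem (M.mulVec (Pi.single 1 1))).mp ⟨_, rfl⟩
  obtain ⟨ya, hya⟩ := (hmem ((1 * a0) • B0 + (0 * a1) • B1)).mpr ⟨1, 0, rfl⟩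
  obtain ⟨yb, hyb⟩ := (hmem ((0 * a0) • B0 + (1 * a1) • B1)).mpr ⟨0, 1, rfl⟩
  obtain ⟨s0, t0, hE0⟩ := hspan (Pi.single 0 1)
  obtain ⟨s1, t1, hE1⟩ := hspan (Pi.single 1 1)
  set δ := det2 B0 B1 with hδ
  -- M.det = K1 * (a0*a1*δ)
  have step1 : M.det = (x0 * y1 - y0 * x1) * (a0 * a1 * δ) := by
    have e1 : det2 (M.mulVec (Pi.single 0 1)) (M.mulVec (Pi.single 1 1))
        = M.det * det2 (Pi.single 0 1) (Pi.single 1 1) := d1 _ _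
    have e2 : det2 (Pi.single 0 1) (Pi.single 1 1) = 1 := by
      simp [hdet2, Pi.single_apply]
    rw [e2, mul_one] at e1
    rw [← e1, hC0, hC1, d2]
    ring
  have step2 : a0 * a1 * δ = M.det * det2 ya yb := by
    have e1 : det2 ((1 * a0) • B0 + (0 * a1) • B1) ((0 * a0) • B0 + (1 * a1) • B1)
        = ((1 * a0) * (1 * a1) - (0 * a1) * (0 * a0)) * δ := d2 _ _ _ _ _ _
    rw [hya, hyb, d1] at e1
    rw [e1]
    ring
  have step3 : (1 : ℤ) = (s0 * t1 - t0 * s1) * δ := by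
    have e1 : det2 (Pi.single 0 1) (Pi.single 1 1) = 1 := by
      simp [hdet2, Pi.single_apply]
    rw [hE0, hE1, d2] at e1
    rw [← e1]
  have hK : (x0 * y1 - y0 * x1) * det2 ya yb = 1 := by
    have : M.det * 1 = M.det * ((x0 * y1 - y0 * x1) * det2 ya yb) := by
      conv_lhs => rw [mul_one, step1, step2]
      ring
    exact (mul_left_cancel₀ hdet this).symm
  have hu1 : IsUnit (x0 * y1 - y0 * x1) := IsUnit.of_mul_eq_one _ hK
  have hu2 : IsUnit δ := IsUnit.of_mul_eq_one _ (by rw [mul_comm]; exact step3.symm)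
  have hn1 : (x0 * y1 - y0 * x1).natAbs = 1 := Int.isUnit_iff_natAbs_eq.mp hu1
  have hn2 : δ.natAbs = 1 := Int.isUnit_iff_natAbs_eq.mp hu2
  have final : M.det.natAbs = (a0 * a1).natAbs := by
    rw [step1]
    simp [Int.natAbs_mul, hn1, hn2]
  exact final.symm

lemma lemA (M : Matrix (Fin 2) (Fin 2) ℤ) (n : ℤ) (hn : 1 ≤ n) (hdet : M.det = n)
    (hg : ∀ r : ℤ, 0 ≤ r → (∀ i j, r ∣ M i j) → r = 1) :
    ∃ w : Fin 2 → ℤ,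
      (∀ z : Fin 2 → ℤ, ∃ (y : Fin 2 → ℤ) (k : ℤ), z = M.mulVec y + k • w) ∧
      (∃ y, n • w = M.mulVec y) ∧
      (∀ m : ℤ, (∃ y, m • w = M.mulVec y) → n ∣ m) := by
  have hdet0 : M.det ≠ 0 := by rw [hdet]; omega
  obtain ⟨a0, a1, B0, B1, hmem, hspan, huniq, hnat⟩ := master2 M hdet0
  have hMi : ∀ i j : Fin 2, (M.mulVec (Pi.single j 1)) i = M i j := by
    intro i j
    fin_cases j <;>
      simp [Matrix.mulVec, dotProduct, Fin.sum_univ_two, Pi.single_apply] <;> fin_cases i <;> simp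
  have hgcd1 : (Int.gcd a0 a1 : ℤ) = 1 := by
    apply hg _ (Int.natCast_nonneg _)
    intro i j
    obtain ⟨c0, c1, hc⟩ := (hmem (M.mulVec (Pi.single j 1))).mp ⟨_, rfl⟩
    rw [← hMi i j]
    have h := congrFun hc i
    rw [h]
    simp only [Pi.add_apply, Pi.smul_apply, smul_eq_mul]
    exact dvd_add ((dvd_mul_of_dvd_right (Int.gcd_dvd_left _ _) c0).mul_right _)
      ((dvd_mul_of_dvd_right (Int.gcd_dvd_right _ _) c1).mul_right _)
  have hcop : IsCoprime a0 a1 := Int.isCoprime_iff_gcd_eq_one.mpr (by exact_mod_cast hgcd1)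
  obtain ⟨α, β, hαβ⟩ := id hcop
  have habs : a0 * a1 = n ∨ a0 * a1 = -n := by
    apply Int.natAbs_eq_natAbs_iff.mp
    rw [hnat, hdet]
  refine ⟨B0 + B1, ?_, ?_, ?_⟩
  · intro z
    obtain ⟨s, t, hz⟩ := hspan z
    obtain ⟨y, hy⟩ := (hmem ((((s - t) * α) * a0) • B0 + (((t - s) * β) * a1) • B1)).mpr
      ⟨(s - t) * α, (t - s) * β, rfl⟩
    refine ⟨y, t * α * a0 + s * β * a1, ?_⟩
    rw [← hy, hz]
    funext i
    simp only [Pi.add_apply, Pi.smul_apply, smul_eq_mul]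
    linear_combination (-(s * B0 i + t * B1 i)) * hαβ
  · rcases habs with h | h
    · obtain ⟨y, hy⟩ := (hmem ((a1 * a0) • B0 + (a0 * a1) • B1)).mpr ⟨a1, a0, rfl⟩
      refine ⟨y, ?_⟩
      rw [← hy]
      funext i
      simp only [Pi.add_apply, Pi.smul_apply, smul_eq_mul]
      linear_combination (-(B0 i + B1 i)) * h
    · obtain ⟨y, hy⟩ := (hmem (((-a1) * a0) • B0 + ((-a0) * a1) • B1)).mpr ⟨-a1, -a0, rfl⟩
      refine ⟨y, ?_⟩
      rw [← hy]
      funext i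
      simp only [Pi.add_apply, Pi.smul_apply, smul_eq_mul]
      linear_combination (B0 i + B1 i) * h
  · rintro m ⟨y, hy⟩
    obtain ⟨c0, c1, hc⟩ := (hmem (m • (B0 + B1))).mp ⟨y, hy⟩
    have h0 : (m - c0 * a0) • B0 + (m - c1 * a1) • B1 = 0 := by
      funext i
      have h1 := congrFun hc i
      simp only [Pi.add_apply, Pi.smul_apply, smul_eq_mul, Pi.zero_apply] at h1 ⊢
      linarith [h1]
    obtain ⟨e0, e1⟩ := huniq _ _ h0
    have d0 : a0 ∣ m := ⟨c0, by linarith⟩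
    have d1 : a1 ∣ m := ⟨c1, by linarith⟩
    have hdvd : a0 * a1 ∣ m := hcop.mul_dvd d0 d1
    rcases habs with h | h
    · rwa [h] at hdvd
    · rw [h] at hdvd
      exact (Int.neg_dvd).mp hdvd

lemma lemB (M : Matrix (Fin 2) (Fin 2) ℤ) (hdetpos : 0 < M.det) (n : ℤ) (hn : 1 ≤ n)
    (w : Fin 2 → ℤ)
    (hgen : ∀ z : Fin 2 → ℤ, ∃ (y : Fin 2 → ℤ) (k : ℤ), z = M.mulVec y + k • w)
    (hord1 : ∃ y, n • w = M.mulVec y)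
    (hord2 : ∀ m : ℤ, 0 < m → m < n → ¬∃ y, m • w = M.mulVec y) :
    M.det = n := by
  obtain ⟨a0, a1, B0, B1, hmem, hspan, huniq, hnat⟩ := master2 M (ne_of_gt hdetpos)
  obtain ⟨s, t, hw⟩ := hspan w
  -- decompose B0 and B1 via generation
  have hdec : ∀ z : Fin 2 → ℤ, ∃ c0 c1 k : ℤ,
      z = (c0 * a0 + k * s) • B0 + (c1 * a1 + k * t) • B1 := by
    intro z
    obtain ⟨y, k, hz⟩ := hgen z
    obtain ⟨c0, c1, hc⟩ := (hmem (M.mulVec y)).mp ⟨y, rfl⟩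
    refine ⟨c0, c1, k, ?_⟩
    rw [hz, hc, hw]
    funext i
    simp only [Pi.add_apply, Pi.smul_apply, smul_eq_mul]
    ring
  obtain ⟨c0, c1, k, hB0d⟩ := hdec B0
  obtain ⟨c0', c1', k', hB1d⟩ := hdec B1
  -- uniqueness gives the congruences
  have e10 : (1 : ℤ) = c0 * a0 + k * s ∧ (0 : ℤ) = c1 * a1 + k * t := by
    have h0 : (1 - (c0 * a0 + k * s)) • B0 + (0 - (c1 * a1 + k * t)) • B1 = 0 := by
      funext i
      have h1 := congrFun hB0d i
      simp only [Pi.add_apply, Pi.smul_apply, smul_eq_mul, Pi.zero_apply] at h1 ⊢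
      linarith [h1]
    obtain ⟨u0, u1⟩ := huniq _ _ h0
    constructor <;> linarith
  have e01 : (0 : ℤ) = c0' * a0 + k' * s ∧ (1 : ℤ) = c1' * a1 + k' * t := by
    have h0 : (0 - (c0' * a0 + k' * s)) • B0 + (1 - (c1' * a1 + k' * t)) • B1 = 0 := by
      funext i
      have h1 := congrFun hB1d i
      simp only [Pi.add_apply, Pi.smul_apply, smul_eq_mul, Pi.zero_apply] at h1 ⊢
      linarith [h1]
    obtain ⟨u0, u1⟩ := huniq _ _ h0
    constructor <;> linarith
  obtain ⟨f1, f2⟩ := e10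
  obtain ⟨f3, f4⟩ := e01
  have h1 : k * s = 1 - c0 * a0 := by linarith
  have h2 : k * t = -(c1 * a1) := by linarith
  have h3 : k' * s = -(c0' * a0) := by linarith
  have h4 : k' * t = 1 - c1' * a1 := by linarith
  have key : (1 - c0 * a0) * (1 - c1' * a1) = (c1 * a1) * (c0' * a0) := by
    calc (1 - c0 * a0) * (1 - c1' * a1) = (k * s) * (k' * t) := by rw [h1, h4]
    _ = (k * t) * (k' * s) := by ring
    _ = (c1 * a1) * (c0' * a0) := by rw [h2, h3]; ring
  have keyeq : (1 : ℤ) = c0 * a0 + c1' * a1 - c0 * c1' * a0 * a1 + c1 * c0' * a1 * a0 := by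
    linear_combination key
  have hgdvd : (Int.gcd a0 a1 : ℤ) ∣ 1 := by
    rw [keyeq]
    refine dvd_add (dvd_sub (dvd_add ?_ ?_) ?_) ?_
    · exact Dvd.dvd.mul_left (Int.gcd_dvd_left _ _) c0
    · exact Dvd.dvd.mul_left (Int.gcd_dvd_right _ _) c1'
    · exact Dvd.dvd.mul_left (Int.gcd_dvd_right _ _) (c0 * c1' * a0)
    · exact Dvd.dvd.mul_left (Int.gcd_dvd_left _ _) (c1 * c0' * a1)
  have hgcd1 : Int.gcd a0 a1 = 1 := by
    have := Int.eq_one_of_dvd_one (Int.natCast_nonneg _) hgdvd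
    exact_mod_cast this
  have hcop : IsCoprime a0 a1 := Int.isCoprime_iff_gcd_eq_one.mpr hgcd1
  -- membership characterization
  have hchar : ∀ m : ℤ, (∃ y, m • w = M.mulVec y) ↔ (a0 ∣ m * s ∧ a1 ∣ m * t) := by
    intro m
    constructor
    · rintro ⟨y, hy⟩
      obtain ⟨d0, d1, hc⟩ := (hmem (m • w)).mp ⟨y, hy⟩
      have h0 : (m * s - d0 * a0) • B0 + (m * t - d1 * a1) • B1 = 0 := by
        funext i
        have hh := congrFun hc i
        rw [hw] at hh
        simp only [Pi.add_apply, Pi.smul_apply, smul_eq_mul, Pi.zero_apply] at hh ⊢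
        linarith [hh]
      obtain ⟨u0, u1⟩ := huniq _ _ h0
      exact ⟨⟨d0, by linarith⟩, ⟨d1, by linarith⟩⟩
    · rintro ⟨⟨d0, hd0⟩, ⟨d1, hd1⟩⟩
      obtain ⟨y, hy⟩ := (hmem ((d0 * a0) • B0 + (d1 * a1) • B1)).mpr ⟨d0, d1, rfl⟩
      refine ⟨y, ?_⟩
      rw [← hy, hw]
      funext i
      simp only [Pi.add_apply, Pi.smul_apply, smul_eq_mul]
      linear_combination B0 i * hd0 + B1 i * hd1
  -- a0 | m*s → a0 | m  and similarly a1
  have habs0 : ∀ m : ℤ, a0 ∣ m * s → a0 ∣ m := by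
    intro m hm
    have hmeq : m = (m * s) * k + m * (c0 * a0) := by linear_combination (-m) * h1
    rw [hmeq]
    exact dvd_add (hm.mul_right k) (Dvd.dvd.mul_left ⟨c0, mul_comm c0 a0⟩ m)
  have habs1 : ∀ m : ℤ, a1 ∣ m * t → a1 ∣ m := by
    intro m hm
    have hmeq : m = (m * t) * k' + m * (c1' * a1) := by linear_combination (-m) * h4
    rw [hmeq]
    exact dvd_add (hm.mul_right k') (Dvd.dvd.mul_left ⟨c1', mul_comm c1' a1⟩ m)
  -- n is a multiple of a0*a1
  have hn1 : a0 * a1 ∣ n := by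
    obtain ⟨hh0, hh1⟩ := (hchar n).mp hord1
    exact hcop.mul_dvd (habs0 n hh0) (habs1 n hh1)
  -- |a0*a1| • w is a multiple
  set m0 : ℤ := ((a0 * a1).natAbs : ℤ) with hm0
  have hm0dvd : a0 * a1 ∣ m0 := Int.dvd_natAbs.mpr dvd_rfl
  have hm0mem : ∃ y, m0 • w = M.mulVec y := by
    apply (hchar m0).mpr
    constructor
    · exact ((dvd_mul_right a0 a1).trans hm0dvd).mul_right s
    · exact ((dvd_mul_left a1 a0).trans hm0dvd).mul_right t
  have hm0pos : 0 < m0 := by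
    have : (a0 * a1).natAbs ≠ 0 := by
      rw [hnat]
      simpa using ne_of_gt hdetpos
    omega
  have hm0ge : n ≤ m0 := by
    by_contra hlt
    push_neg at hlt
    exact hord2 m0 hm0pos hlt hm0mem
  have hm0le : m0 ≤ n := by
    apply Int.le_of_dvd (by omega)
    exact (Int.natAbs_dvd).mpr hn1
  have hm0n : m0 = n := le_antisymm hm0le hm0ge
  have : (M.det.natAbs : ℤ) = n := by rw [← hnat, ← hm0, hm0n]
  rw [← this]
  exact (Int.natAbs_of_nonneg (le_of_lt hdetpos)).symm

lemma dir_mpr {τ : ℂ} {u v : ℚ} (hτ : 0 < τ.im)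
    (hquad : τ ^ 2 = (u : ℂ) * τ + (v : ℂ))
    {P Q C : ℤ} (hCu : (C : ℂ) * (u : ℂ) = (P : ℂ)) (hCv : (C : ℂ) * (v : ℂ) = (Q : ℂ))
    (hPQC : ∀ ρ : ℤ, Prime ρ → ρ ∣ P → ρ ∣ Q → ρ ∣ C → False)
    (n : ℕ) (hn : 1 ≤ n) (a b' : ℤ) (hab : Int.gcd a b' = 1)
    (hneq : (n : ℤ) = a * (a + P * b') - (C * b') * (Q * b')) :
    ∃ g lam : ℂ,
      ((n : ℂ) * g ∈ latt τ ∧ ∀ m : ℕ, 0 < m → m < n → (m : ℂ) * g ∉ latt τ) ∧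
      (fun x => lam * x) '' latt τ = lattAdj τ g := by
  have hτ0 : τ.im ≠ 0 := ne_of_gt hτ
  set M := matXY P Q C a b' with hM
  have hdetM : M.det = (n : ℤ) := by rw [hM, matXY_det]; exact hneq.symm
  have hnZ : (1 : ℤ) ≤ (n : ℤ) := by exact_mod_cast hn
  have hent : ∀ r : ℤ, 0 ≤ r → (∀ i j, r ∣ M i j) → r = 1 := by
    intro r hr hdvd
    have h00 : r ∣ a := by have := hdvd 0 0; simpa [hM, matXY] using this
    have h01 : r ∣ Q * b' := by have := hdvd 0 1; simpa [hM, matXY] using this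
    have h10 : r ∣ C * b' := by have := hdvd 1 0; simpa [hM, matXY] using this
    have h11 : r ∣ a + P * b' := by have := hdvd 1 1; simpa [hM, matXY] using this
    have hPb : r ∣ P * b' := by
      have := dvd_sub h11 h00
      simpa using this
    rcases eq_or_lt_of_le hr with h0 | hpos
    · exfalso
      have ha : a = 0 := zero_dvd_iff.mp (h0 ▸ h00)
      have hq0 : Q * b' = 0 := zero_dvd_iff.mp (h0 ▸ h01)
      have hc0 : C * b' = 0 := zero_dvd_iff.mp (h0 ▸ h10)
      have hp0 : P * b' = 0 := zero_dvd_iff.mp (h0 ▸ hPb)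
      rw [ha, hp0, hq0, hc0] at hneq
      simp at hneq
      omega
    · by_contra hr1
      have hr2 : 2 ≤ r := by omega
      obtain ⟨ρ, hρ, hρr⟩ := Int.exists_prime_and_dvd (n := r) (by omega)
      have hρa : ρ ∣ a := hρr.trans h00
      have hρQb : ρ ∣ Q * b' := hρr.trans h01
      have hρCb : ρ ∣ C * b' := hρr.trans h10
      have hρPb : ρ ∣ P * b' := hρr.trans hPb
      by_cases hb : ρ ∣ b'
      · have hdg := Int.dvd_coe_gcd hρa hb
        rw [hab] at hdg
        exact hρ.not_unit (isUnit_of_dvd_one (by exact_mod_cast hdg))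
      · have hρQ : ρ ∣ Q := (hρ.dvd_mul.mp hρQb).resolve_right hb
        have hρC : ρ ∣ C := (hρ.dvd_mul.mp hρCb).resolve_right hb
        have hρP : ρ ∣ P := (hρ.dvd_mul.mp hρPb).resolve_right hb
        exact hPQC ρ hρ hρP hρQ hρC
  obtain ⟨w, hgen, hordn, horddvd⟩ := lemA M (n : ℤ) hnZ hdetM hent
  set μ : ℂ := (a : ℂ) + ((C * b' : ℤ) : ℂ) * τ with hμ
  have hNc : μ * (((a + P * b' : ℤ) : ℂ) - ((C * b' : ℤ) : ℂ) * τ) = ((n : ℤ) : ℂ) := by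
    rw [hμ, normident hquad hCu hCv a b']
    exact_mod_cast congrArg (fun x : ℤ => (x : ℂ)) hneq.symm
  have hμ0 : μ ≠ 0 := by
    intro h
    rw [h, zero_mul] at hNc
    have hne : ((n : ℤ) : ℂ) ≠ 0 := by
      exact_mod_cast (by omega : (n : ℤ) ≠ 0)
    exact hne hNc.symm
  have hkey : ∀ y, μ * phi τ y = phi τ (M.mulVec y) := fun y => keymul hquad hCu hCv a b' y
  refine ⟨μ⁻¹ * phi τ w, μ⁻¹, ⟨?_, ?_⟩, ?_⟩
  · obtain ⟨y, hy⟩ := hordn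
    have h1 : (n : ℂ) * (μ⁻¹ * phi τ w) = phi τ y := by
      have h2 : phi τ ((n : ℤ) • w) = μ * phi τ y := by rw [hy, hkey y]
      rw [phi_smul] at h2
      push_cast at h2
      field_simp
      push_cast
      linear_combination h2
    rw [h1]
    exact phi_mem_latt y
  · intro m hm hmn hmem
    obtain ⟨z, hz⟩ := mem_latt_phi.mp hmem
    have h1 : phi τ ((m : ℤ) • w) = phi τ (M.mulVec z) := by
      rw [phi_smul, ← hkey z, ← hz]
      push_cast
      field_simp
    have h2 := phi_inj hτ0 h1
    have h3 : (n : ℤ) ∣ (m : ℤ) := horddvd _ ⟨z, h2⟩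
    have h4 := Int.le_of_dvd (by exact_mod_cast hm) h3
    omega
  · ext z
    constructor
    · rintro ⟨x, hx, rfl⟩
      obtain ⟨xv, rfl⟩ := mem_latt_phi.mp hx
      obtain ⟨y, k, hyk⟩ := hgen xv
      refine ⟨y 0, y 1, k, ?_⟩
      have h1 : phi τ xv = μ * phi τ y + (k : ℂ) * phi τ w := by
        rw [hyk, phi_add, phi_smul, hkey y]
      have hyphi : (y 0 : ℂ) + (y 1 : ℂ) * τ = phi τ y := rfl
      simp only [h1, hyphi]
      field_simp
    · rintro ⟨m, k, l, rfl⟩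
      refine ⟨phi τ (M.mulVec ![m, k] + l • w), phi_mem_latt _, ?_⟩
      have h1 : phi τ (M.mulVec ![m, k] + l • w) = μ * phi τ ![m, k] + (l : ℂ) * phi τ w := by
        rw [phi_add, phi_smul, hkey ![m, k]]
      have h2 : phi τ ![m, k] = (m : ℂ) + (k : ℂ) * τ := by simp [phi]
      simp only [h1, h2]
      field_simp

set_option maxHeartbeats 1000000 in
lemma dir_mp {τ : ℂ} {u v : ℚ} (hτ : 0 < τ.im)
    (hquad : τ ^ 2 = (u : ℂ) * τ + (v : ℂ))
    {u₁ u₂ v₁ v₂ P Q C : ℤ}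
    (hu₂ : u₂ ≠ 0) (hv₂ : v₂ ≠ 0)
    (hu : u = (u₁ : ℚ) / (u₂ : ℚ)) (hv : v = (v₁ : ℚ) / (v₂ : ℚ))
    (hcu : Int.gcd u₁ u₂ = 1) (hcv : Int.gcd v₁ v₂ = 1)
    (hCu : (C : ℂ) * (u : ℂ) = (P : ℂ)) (hCv : (C : ℂ) * (v : ℂ) = (Q : ℂ))
    (hCdvd : ∀ B : ℤ, u₂ ∣ B → v₂ ∣ B → C ∣ B)
    (n : ℕ) (hn : 1 ≤ n) (g lam : ℂ)
    (hng : (n : ℂ) * g ∈ latt τ)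
    (hord : ∀ m : ℕ, 0 < m → m < n → (m : ℂ) * g ∉ latt τ)
    (himg : (fun x => lam * x) '' latt τ = lattAdj τ g) :
    ∃ a b' : ℤ, Int.gcd a b' = 1 ∧ (n : ℤ) = a * (a + P * b') - (C * b') * (Q * b') := by
  have hτ0 : τ.im ≠ 0 := ne_of_gt hτ
  have h1adj : (1 : ℂ) ∈ lattAdj τ g := ⟨1, 0, 0, by push_cast; ring⟩
  have hτadj : τ ∈ lattAdj τ g := ⟨0, 1, 0, by push_cast; ring⟩
  have hgadj : g ∈ lattAdj τ g := ⟨0, 0, 1, by push_cast; ring⟩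
  rw [← himg] at h1adj hτadj hgadj
  obtain ⟨ν, hνl, hν1⟩ := h1adj
  obtain ⟨z', hz'l, hz'1⟩ := hτadj
  obtain ⟨wc, hwl, hw1⟩ := hgadj
  simp only at hν1 hz'1 hw1
  have hν0 : ν ≠ 0 := by
    intro h
    rw [h, mul_zero] at hν1
    exact one_ne_zero hν1.symm
  have hlam0 : lam ≠ 0 := by
    intro h
    rw [h, zero_mul] at hν1
    exact one_ne_zero hν1.symm
  obtain ⟨νv, hνv⟩ := mem_latt_phi.mp hνl
  obtain ⟨wv, hwv⟩ := mem_latt_phi.mp hwl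
  obtain ⟨zv, hzv⟩ := mem_latt_phi.mp hz'l
  have hz'eq : z' = ν * τ := by
    apply mul_left_cancel₀ hlam0
    rw [hz'1, ← mul_assoc, hν1, one_mul]
  -- extraction of coordinates of ν·τ
  have h5 : ν * τ = phi τ zv := hz'eq ▸ hzv
  have hext : (((νv 1 : ℚ) * v : ℚ) : ℂ) + (((νv 0 : ℚ) + (νv 1 : ℚ) * u : ℚ) : ℂ) * τ
      = (((zv 0 : ℚ)) : ℂ) + (((zv 1 : ℚ)) : ℂ) * τ := by
    have h6 : ν * τ = ((zv 0 : ℤ) : ℂ) + ((zv 1 : ℤ) : ℂ) * τ := h5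
    rw [hνv] at h6
    push_cast
    push_cast at h6
    simp only [phi] at h6
    linear_combination h6 - (νv 1 : ℂ) * hquad
  obtain ⟨hr, hs⟩ := coordQ hτ0 hext
  -- divisibility u₂ ∣ νv 1
  have hBu : νv 1 * u₁ = (zv 1 - νv 0) * u₂ := by
    rw [hu] at hs
    have h7 : (νv 1 : ℚ) * (u₁ : ℚ) = ((zv 1 : ℚ) - (νv 0 : ℚ)) * (u₂ : ℚ) := by
      have hu₂Q : (u₂ : ℚ) ≠ 0 := Int.cast_ne_zero.mpr hu₂
      field_simp at hs
      linarith [hs]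
    exact_mod_cast h7
  have hu2B : u₂ ∣ νv 1 := by
    have h8 : u₂ ∣ νv 1 * u₁ := ⟨zv 1 - νv 0, by linarith [hBu]⟩
    exact (Int.isCoprime_iff_gcd_eq_one.mpr hcu).symm.dvd_of_dvd_mul_right h8
  have hBv : νv 1 * v₁ = zv 0 * v₂ := by
    rw [hv] at hr
    have h7 : (νv 1 : ℚ) * (v₁ : ℚ) = (zv 0 : ℚ) * (v₂ : ℚ) := by
      have hv₂Q : (v₂ : ℚ) ≠ 0 := Int.cast_ne_zero.mpr hv₂
      field_simp at hr
      linarith [hr]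
    exact_mod_cast h7
  have hv2B : v₂ ∣ νv 1 := by
    have h8 : v₂ ∣ νv 1 * v₁ := ⟨zv 0, by linarith [hBv]⟩
    exact (Int.isCoprime_iff_gcd_eq_one.mpr hcv).symm.dvd_of_dvd_mul_right h8
  obtain ⟨b₁, hb₁⟩ := hCdvd (νv 1) hu2B hv2B
  -- standard form of ν
  have hνA : ν = ((νv 0 : ℤ) : ℂ) + ((C * b₁ : ℤ) : ℂ) * τ := by
    rw [hνv]
    simp only [phi, hb₁]
  set N : ℤ := νv 0 * (νv 0 + P * b₁) - (C * b₁) * (Q * b₁) with hN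
  set M := matXY P Q C (νv 0) b₁ with hM
  have hdetM : M.det = N := by rw [hM, matXY_det, hN]
  have hkey : ∀ y, ν * phi τ y = phi τ (M.mulVec y) := by
    intro y
    rw [hνA, hM]
    exact keymul hquad hCu hCv (νv 0) b₁ y
  have hNc : ν * (((νv 0 + P * b₁ : ℤ) : ℂ) - ((C * b₁ : ℤ) : ℂ) * τ) = (N : ℂ) := by
    rw [hνA, normident hquad hCu hCv, hN]
  -- conjugation
  have hconjτ : (starRingEnd ℂ) τ = (u : ℂ) - τ := by
    have h1 : ((starRingEnd ℂ) τ) ^ 2 = (u : ℂ) * ((starRingEnd ℂ) τ) + (v : ℂ) := by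
      have h2 := congrArg (starRingEnd ℂ) hquad
      simpa using h2
    have h2 : ((starRingEnd ℂ) τ - τ) * ((starRingEnd ℂ) τ - ((u : ℂ) - τ)) = 0 := by
      linear_combination h1 - hquad
    rcases mul_eq_zero.mp h2 with h | h
    · exfalso
      have h3 : (starRingEnd ℂ) τ = τ := sub_eq_zero.mp h
      have h4 : τ.im = 0 := by
        have := congrArg Complex.im h3
        simp [Complex.conj_im] at this
        linarith
      exact hτ0 h4
    · exact sub_eq_zero.mp h
  have hconjν : (starRingEnd ℂ) ν = ((νv 0 + P * b₁ : ℤ) : ℂ) - ((C * b₁ : ℤ) : ℂ) * τ := by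
    rw [hνA, map_add, _root_.map_mul, map_intCast, map_intCast, hconjτ]
    push_cast
    linear_combination (b₁ : ℂ) * hCu
  have hNpos : 0 < N := by
    have h1 : (N : ℂ) = Complex.normSq ν := by rw [← hNc, ← hconjν, Complex.mul_conj]
    have h2 : (N : ℝ) = Complex.normSq ν := by exact_mod_cast h1
    have h3 : 0 < Complex.normSq ν := Complex.normSq_pos.mpr hν0
    rw [← h2] at h3
    exact_mod_cast h3
  have hgw : g = lam * phi τ wv := by rw [← hw1, hwv]
  have hνlam : ν * lam = 1 := by rw [mul_comm]; exact hν1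
  -- generation on the ℤ² level
  have hgenZ : ∀ z : Fin 2 → ℤ, ∃ (y : Fin 2 → ℤ) (k : ℤ), z = M.mulVec y + k • wv := by
    intro z
    have hmem : lam * phi τ z ∈ lattAdj τ g := by
      rw [← himg]
      exact ⟨phi τ z, phi_mem_latt z, rfl⟩
    obtain ⟨m, k, l, hmkl⟩ := hmem
    refine ⟨![m, k], l, ?_⟩
    apply phi_inj hτ0
    rw [phi_add, phi_smul, ← hkey ![m, k]]
    have hφmk : phi τ ![m, k] = (m : ℂ) + (k : ℂ) * τ := by simp [phi]
    rw [hgw] at hmkl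
    rw [hφmk]
    have h6 : ν * (lam * phi τ z) = ν * ((m : ℂ) + (k : ℂ) * τ + (l : ℂ) * (lam * phi τ wv)) := by
      rw [hmkl]
    linear_combination h6 - (phi τ z - (l : ℂ) * phi τ wv) * hνlam
  have hordZ1 : ∃ y, (n : ℤ) • wv = M.mulVec y := by
    obtain ⟨zz, hzz⟩ := mem_latt_phi.mp hng
    refine ⟨zz, ?_⟩
    apply phi_inj hτ0
    rw [phi_smul, ← hkey zz, ← hzz, hgw]
    push_cast
    linear_combination (-(n : ℂ) * phi τ wv) * hνlam
  have hordZ2 : ∀ m : ℤ, 0 < m → m < (n : ℤ) → ¬∃ y, m • wv = M.mulVec y := by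
    rintro m hm hmn ⟨y, hy⟩
    have h7 : (m : ℂ) * g = phi τ y := by
      rw [hgw]
      have h8 : phi τ (m • wv) = phi τ (M.mulVec y) := by rw [hy]
      rw [phi_smul, ← hkey y] at h8
      calc (m : ℂ) * (lam * phi τ wv) = lam * ((m : ℂ) * phi τ wv) := by ring
      _ = lam * (ν * phi τ y) := by rw [h8]
      _ = phi τ y := by rw [← mul_assoc, hν1, one_mul]
    have hcast : ((m.toNat : ℕ) : ℂ) = (m : ℂ) := by
      have h9 : ((m.toNat : ℕ) : ℤ) = m := Int.toNat_of_nonneg hm.le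
      exact_mod_cast congrArg (fun x : ℤ => (x : ℂ)) h9
    refine hord m.toNat (by omega) (by omega) ?_
    rw [hcast, h7]
    exact phi_mem_latt y
  have hdetn : M.det = (n : ℤ) :=
    lemB M (hdetM ▸ hNpos) (n : ℤ) (by exact_mod_cast hn) wv hgenZ hordZ1 hordZ2
  have hNn : N = (n : ℤ) := by rw [← hdetM, hdetn]
  -- gcd (νv 0) b₁ = 1
  have hθ1 : Int.gcd (νv 0) b₁ = 1 := by
    by_contra hθne
    set θ := Int.gcd (νv 0) b₁ with hθ
    have hθdvd0 : (θ : ℤ) ∣ νv 0 := Int.gcd_dvd_left _ _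
    have hθdvd1 : (θ : ℤ) ∣ b₁ := Int.gcd_dvd_right _ _
    rcases Nat.eq_zero_or_pos θ with h0 | hpos
    · obtain ⟨e0, e1⟩ := Int.gcd_eq_zero_iff.mp (hθ ▸ h0)
      rw [e0, e1] at hN
      simp at hN
      omega
    · have hθ2 : 2 ≤ (θ : ℤ) := by
        have : θ ≠ 1 := hθne
        omega
      obtain ⟨A₀, hA₀⟩ := hθdvd0
      obtain ⟨B₀, hB₀⟩ := hθdvd1
      set N₀ : ℤ := A₀ * (A₀ + P * B₀) - (C * B₀) * (Q * B₀) with hN₀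
      have hNθ : N = (θ : ℤ) ^ 2 * N₀ := by rw [hN, hA₀, hB₀, hN₀]; ring
      have hN₀pos : 0 < N₀ := by nlinarith [hNpos, hNθ]
      set m : ℤ := (θ : ℤ) * N₀ with hm
      set ν₀ : ℂ := (A₀ : ℂ) + ((C * B₀ : ℤ) : ℂ) * τ with hν₀d
      have hν₀ : ν = (θ : ℂ) * ν₀ := by
        rw [hνA, hν₀d, hA₀, hB₀]
        push_cast
        ring
      have e₂ : ν₀ * (((A₀ + P * B₀ : ℤ) : ℂ) - ((C * B₀ : ℤ) : ℂ) * τ) = (N₀ : ℂ) := by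
        rw [hν₀d, normident hquad hCu hCv, hN₀]
      have hmg : (m : ℂ) * g = (((A₀ + P * B₀ : ℤ) : ℂ) - ((C * B₀ : ℤ) : ℂ) * τ) * phi τ wv := by
        apply mul_left_cancel₀ hν0
        rw [hgw]
        calc ν * ((m : ℂ) * (lam * phi τ wv)) = (m : ℂ) * (ν * lam) * phi τ wv := by ring
        _ = (m : ℂ) * phi τ wv := by rw [hνlam]; ring
        _ = (θ : ℂ) * (N₀ : ℂ) * phi τ wv := by rw [hm]; push_cast; ring
        _ = (θ : ℂ) * (ν₀ * (((A₀ + P * B₀ : ℤ) : ℂ) - ((C * B₀ : ℤ) : ℂ) * τ)) * phi τ wv := by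
              rw [e₂]
        _ = ν * ((((A₀ + P * B₀ : ℤ) : ℂ) - ((C * B₀ : ℤ) : ℂ) * τ) * phi τ wv) := by
              rw [hν₀]; ring
      have hmlatt : (m : ℂ) * g ∈ latt τ := by
        rw [hmg, conjmul hquad hCu hCv A₀ B₀ wv]
        exact phi_mem_latt _
      have hmpos : 0 < m := by nlinarith
      have hmlt : m < (n : ℤ) := by rw [← hNn, hNθ]; nlinarith
      have hcast : ((m.toNat : ℕ) : ℂ) = (m : ℂ) := by
        have h9 : ((m.toNat : ℕ) : ℤ) = m := Int.toNat_of_nonneg hmpos.le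
        exact_mod_cast congrArg (fun x : ℤ => (x : ℂ)) h9
      refine hord m.toNat (by omega) (by omega) ?_
      rw [hcast]
      exact hmlatt
  exact ⟨νv 0, b₁, hθ1, hNn.symm.trans hN⟩


theorem stmt_3 (u v : ℚ) (u₁ u₂ v₁ v₂ : ℤ) (hu₂ : 0 < u₂) (hv₂ : 0 < v₂)
    (hu : u = (u₁ : ℚ) / (u₂ : ℚ)) (hv : v = (v₁ : ℚ) / (v₂ : ℚ))
    (hcu : Int.gcd u₁ u₂ = 1) (hcv : Int.gcd v₁ v₂ = 1)
    (d : ℤ) (hd : d = Int.gcd u₂ v₂)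
    (hΔ : u ^ 2 + 4 * v < 0)
    (τ : ℂ) (hτ : 0 < τ.im) (hquad : τ ^ 2 = (u : ℂ) * τ + (v : ℂ))
    (n : ℕ) (hn : 1 ≤ n) :
    (∃ g lam : ℂ,
        ((n : ℂ) * g ∈ latt τ ∧ ∀ m : ℕ, 0 < m → m < n → (m : ℂ) * g ∉ latt τ) ∧
        (fun x => lam * x) '' latt τ = lattAdj τ g) ↔
    (∃ a b' : ℤ, Int.gcd a b' = 1 ∧
        (n : ℤ) = a * (a + u₁ * v₂ / d * b') -
          (u₂ * v₂ / d * b') * (u₂ * v₁ / d * b')) := by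
  have hu₂0 : u₂ ≠ 0 := ne_of_gt hu₂
  have hv₂0 : v₂ ≠ 0 := ne_of_gt hv₂
  have hgpos : 0 < Int.gcd u₂ v₂ := Int.gcd_pos_iff.mpr (Or.inl hu₂0)
  have hdpos : 0 < d := by rw [hd]; exact_mod_cast hgpos
  have hd0 : d ≠ 0 := ne_of_gt hdpos
  have hdu : d ∣ u₂ := hd ▸ Int.gcd_dvd_left _ _
  have hdv : d ∣ v₂ := hd ▸ Int.gcd_dvd_right _ _
  set P : ℤ := u₁ * v₂ / d with hPdef
  set Q : ℤ := u₂ * v₁ / d with hQdef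
  set C : ℤ := u₂ * v₂ / d with hCdef
  have hP : d * P = u₁ * v₂ := Int.mul_ediv_cancel' (hdv.mul_left u₁)
  have hC : d * C = u₂ * v₂ := Int.mul_ediv_cancel' (hdv.mul_left u₂)
  have hQ' : d * Q = u₂ * v₁ := Int.mul_ediv_cancel' (hdu.mul_right v₁)
  -- complex identities
  have hCuZ : C * u₁ = P * u₂ := by
    apply mul_left_cancel₀ hd0
    rw [← mul_assoc, ← mul_assoc, hC, hP]
    ring
  have hCvZ : C * v₁ = Q * v₂ := by
    apply mul_left_cancel₀ hd0
    rw [← mul_assoc, ← mul_assoc, hC, hQ']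
    ring
  have hCu : (C : ℂ) * (u : ℂ) = (P : ℂ) := by
    have hu' : (u : ℂ) = (u₁ : ℂ) / (u₂ : ℂ) := by rw [hu]; push_cast; ring
    have hu₂C : (u₂ : ℂ) ≠ 0 := Int.cast_ne_zero.mpr hu₂0
    rw [hu', div_eq_iff hu₂C] at *
    field_simp
    exact_mod_cast hCuZ.trans (mul_comm _ _)
  have hCv : (C : ℂ) * (v : ℂ) = (Q : ℂ) := by
    have hv' : (v : ℂ) = (v₁ : ℂ) / (v₂ : ℂ) := by rw [hv]; push_cast; ring
    have hv₂C : (v₂ : ℂ) ≠ 0 := Int.cast_ne_zero.mpr hv₂0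
    rw [hv']
    field_simp
    exact_mod_cast hCvZ.trans (mul_comm _ _)
  -- prime coprimality of P Q C
  set s : ℤ := u₂ / d with hsdef
  set t : ℤ := v₂ / d with htdef
  have hs : d * s = u₂ := Int.mul_ediv_cancel' hdu
  have ht : d * t = v₂ := Int.mul_ediv_cancel' hdv
  have hst : Int.gcd s t = 1 := by
    rw [hsdef, htdef, hd]
    exact Int.gcd_div_gcd_div_gcd hgpos
  have hPt : P = u₁ * t := by
    apply mul_left_cancel₀ hd0
    rw [hP, show d * (u₁ * t) = u₁ * (d * t) by ring, ht]
  have hQs : Q = s * v₁ := by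
    apply mul_left_cancel₀ hd0
    rw [hQ', show d * (s * v₁) = (d * s) * v₁ by ring, hs]
  have hCs : C = s * v₂ := by
    apply mul_left_cancel₀ hd0
    rw [hC, show d * (s * v₂) = (d * s) * v₂ by ring, hs]
  have hsu₂ : s ∣ u₂ := ⟨d, by linarith [hs]⟩
  have hPQC : ∀ ρ : ℤ, Prime ρ → ρ ∣ P → ρ ∣ Q → ρ ∣ C → False := by
    intro ρ hρ hρP hρQ hρC
    have hnotu : ρ ∣ u₁ → ρ ∣ s → False := by
      intro h1 h2
      have h3 : ρ ∣ (Int.gcd u₁ u₂ : ℤ) := Int.dvd_coe_gcd h1 (h2.trans hsu₂)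
      rw [hcu] at h3
      exact hρ.not_unit (isUnit_of_dvd_one (by exact_mod_cast h3))
    have hnotst : ρ ∣ s → ρ ∣ t → False := by
      intro h1 h2
      have h3 : ρ ∣ (Int.gcd s t : ℤ) := Int.dvd_coe_gcd h1 h2
      rw [hst] at h3
      exact hρ.not_unit (isUnit_of_dvd_one (by exact_mod_cast h3))
    have hcases : ρ ∣ s → False := by
      intro h1
      rcases hρ.dvd_mul.mp (hPt ▸ hρP) with h2 | h2
      · exact hnotu h2 h1
      · exact hnotst h1 h2
    rcases hρ.dvd_mul.mp (hCs ▸ hρC) with h1 | h1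
    · exact hcases h1
    · rcases hρ.dvd_mul.mp (hQs ▸ hρQ) with h2 | h2
      · exact hcases h2
      · have h3 : ρ ∣ (Int.gcd v₁ v₂ : ℤ) := Int.dvd_coe_gcd h2 h1
        rw [hcv] at h3
        exact hρ.not_unit (isUnit_of_dvd_one (by exact_mod_cast h3))
  -- C is the lcm
  have hCdvd : ∀ B : ℤ, u₂ ∣ B → v₂ ∣ B → C ∣ B := by
    intro B h1 h2
    have h3 := Int.gcd_mul_lcm u₂ v₂
    have h5 : (((u₂ * v₂).natAbs : ℕ) : ℤ) = u₂ * v₂ :=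
      Int.natAbs_of_nonneg (by positivity)
    have h4 : ((Int.gcd u₂ v₂ : ℤ)) * (Int.lcm u₂ v₂ : ℤ) = u₂ * v₂ := by
      rw [← h5]
      rw [← Int.natAbs_mul] at h3
      exact_mod_cast congrArg (fun x : ℕ => (x : ℤ)) h3
    have hlcm : (Int.lcm u₂ v₂ : ℤ) = C := by
      apply mul_left_cancel₀ hd0
      rw [hC, ← h4, hd]
    rw [← hlcm]
    exact Int.coe_lcm_dvd h1 h2
  constructor
  · rintro ⟨g, lam, ⟨hng, hord⟩, himg⟩
    exact dir_mp hτ hquad hu₂0 hv₂0 hu hv hcu hcv hCu hCv hCdvd n hn g lam hng hord himg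
  · rintro ⟨a, b', hab, hneq⟩
    exact dir_mpr hτ hquad hCu hCv hPQC n hn a b' hab hneq

end
end

section
/- Let u, v ∈ ℚ, written u = u₁/u₂ and v = v₁/v₂ in lowest terms with u₂, v₂ > 0, and let d = gcd(u₂, v₂). Let τ ∈ ℂ be a non-real complex number with τ² = u·τ + v, and let a, b, A, B be integers satisfying (a + b·τ)·τ = A + B·τ. Then there exists an integer b' such that b = (u₂v₂/d)·b', A = (u₂v₁/d)·b', and B = a + (u₁v₂/d)·b'. -/
noncomputable section

theorem stmt_4 (u v : ℚ) (u₁ u₂ v₁ v₂ : ℤ) (hu₂ : 0 < u₂) (hv₂ : 0 < v₂)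
    (hu : u = (u₁ : ℚ) / (u₂ : ℚ)) (hv : v = (v₁ : ℚ) / (v₂ : ℚ))
    (hcu : Int.gcd u₁ u₂ = 1) (hcv : Int.gcd v₁ v₂ = 1)
    (d : ℤ) (hd : d = Int.gcd u₂ v₂)
    (τ : ℂ) (hτ : τ.im ≠ 0) (hquad : τ ^ 2 = (u : ℂ) * τ + (v : ℂ))
    (a b A B : ℤ)
    (h : ((a : ℂ) + (b : ℂ) * τ) * τ = (A : ℂ) + (B : ℂ) * τ) :
    ∃ b' : ℤ, b = u₂ * v₂ / d * b' ∧ A = u₂ * v₁ / d * b' ∧ B = a + u₁ * v₂ / d * b' := by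
  -- Step 1: compare coefficients
  have key : (((a : ℚ) + b * u - B : ℚ) : ℂ) * τ = (((A : ℚ) - b * v : ℚ) : ℂ) := by
    push_cast
    linear_combination h - (b : ℂ) * hquad
  have him := congrArg Complex.im key
  simp [Complex.mul_im] at him
  have hc : (a : ℚ) + b * u - B = 0 := by
    rcases him with h' | h'
    · exact_mod_cast h'
    · exact absurd h' hτ
  rw [hc] at key
  simp at key
  have hAq : (A : ℚ) = b * v := by
    have : ((A : ℚ) - b * v : ℚ) = 0 := by exact_mod_cast key.symm
    linarith
  have hBq : (B : ℚ) = a + b * u := by linarith [hc]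
  -- Step 2: integer identities
  have hu₂' : (u₂ : ℚ) ≠ 0 := by positivity
  have hv₂' : (v₂ : ℚ) ≠ 0 := by positivity
  have hA : A * v₂ = b * v₁ := by
    have : (A : ℚ) * v₂ = b * v₁ := by rw [hAq, hv]; field_simp
    exact_mod_cast this
  have hB : (B - a) * u₂ = b * u₁ := by
    have : ((B : ℚ) - a) * u₂ = b * u₁ := by rw [hBq, hu]; field_simp; ring
    exact_mod_cast this
  -- divisibility
  have hv₂b : v₂ ∣ b := by
    have hcop : IsCoprime v₂ v₁ := (Int.isCoprime_iff_gcd_eq_one.mpr hcv).symm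
    exact hcop.dvd_of_dvd_mul_right ⟨A, by linarith [hA]⟩
  have hu₂b : u₂ ∣ b := by
    have hcop : IsCoprime u₂ u₁ := (Int.isCoprime_iff_gcd_eq_one.mpr hcu).symm
    exact hcop.dvd_of_dvd_mul_right ⟨B - a, by linarith [hB]⟩
  set L : ℤ := (Int.lcm u₂ v₂ : ℤ) with hL
  have hLb : L ∣ b := Int.coe_lcm_dvd_iff.mpr ⟨hu₂b, hv₂b⟩
  have hdne : d ≠ 0 := by
    rw [hd]
    simp only [ne_eq, Int.natCast_eq_zero]
    intro hgz
    exact absurd (Int.gcd_eq_zero_iff.mp hgz).1 hu₂.ne'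
  have hdL : d * L = u₂ * v₂ := by
    rw [hd, hL]
    have := Int.gcd_mul_lcm u₂ v₂
    have habs : ((u₂ * v₂).natAbs : ℤ) = u₂ * v₂ :=
      Int.natAbs_of_nonneg (by positivity)
    push_cast [← this] at habs ⊢
    have h2 : ((u₂.gcd v₂ * u₂.lcm v₂ : ℕ) : ℤ) = u₂ * v₂ := by
      rw [this]; push_cast; rw [abs_of_pos hu₂, abs_of_pos hv₂]
    push_cast at h2
    linarith [h2]
  obtain ⟨b', hb'⟩ := hLb
  obtain ⟨x, hx⟩ : d ∣ u₂ := hd ▸ Int.gcd_dvd_left u₂ v₂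
  obtain ⟨y, hy⟩ : d ∣ v₂ := hd ▸ Int.gcd_dvd_right u₂ v₂
  have hLx : L = x * v₂ := by
    have : d * L = d * (x * v₂) := by rw [hdL, hx]; ring
    exact mul_left_cancel₀ hdne this
  have hLy : L = u₂ * y := by
    have : d * L = d * (u₂ * y) := by rw [hdL, hy]; ring
    exact mul_left_cancel₀ hdne this
  refine ⟨b', ?_, ?_, ?_⟩
  · rw [hb', show u₂ * v₂ / d = L from ?_]
    rw [← hdL, Int.mul_ediv_cancel_left _ hdne]
  · have hdiv : u₂ * v₁ / d = x * v₁ := by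
      rw [hx, mul_assoc, Int.mul_ediv_cancel_left _ hdne]
    rw [hdiv]
    have hv₂z : v₂ ≠ 0 := hv₂.ne'
    apply mul_right_cancel₀ hv₂z
    rw [hA, hb', hLx]; ring
  · have hdiv : u₁ * v₂ / d = u₁ * y := by
      rw [hy, mul_comm u₁ (d * y), mul_assoc, Int.mul_ediv_cancel_left _ hdne, mul_comm]
    rw [hdiv]
    have hu₂z : u₂ ≠ 0 := hu₂.ne'
    have : (B - a) * u₂ = (u₁ * y * b') * u₂ := by
      rw [hB, hb', hLy]; ring
    have := mul_right_cancel₀ hu₂z this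
    linarith
end
end

section
/- Let u₁, u₂, v₁, v₂ be integers with u₂, v₂ > 0, gcd(u₁, u₂) = 1 and gcd(v₁, v₂) = 1, and let d = gcd(u₂, v₂). Let a, b' be integers and set A = (u₂v₁/d)·b', b = (u₂v₂/d)·b', B = a + (u₁v₂/d)·b'. Then gcd(a, A, b, B) = 1 if and only if gcd(a, b') = 1. -/
noncomputable section

lemma nat_dvd_int_gcd_iff (p : ℕ) (x y : ℤ) :
    p ∣ Int.gcd x y ↔ (p : ℤ) ∣ x ∧ (p : ℤ) ∣ y := by
  constructor
  · intro h
    exact ⟨dvd_trans (Int.natCast_dvd_natCast.mpr h) (Int.gcd_dvd_left x y),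
      dvd_trans (Int.natCast_dvd_natCast.mpr h) (Int.gcd_dvd_right x y)⟩
  · rintro ⟨h1, h2⟩
    exact Int.natCast_dvd_natCast.mp (Int.dvd_coe_gcd h1 h2)

theorem stmt_5 (u₁ u₂ v₁ v₂ : ℤ) (hu₂ : 0 < u₂) (hv₂ : 0 < v₂)
    (hcu : Int.gcd u₁ u₂ = 1) (hcv : Int.gcd v₁ v₂ = 1)
    (d : ℤ) (hd : d = Int.gcd u₂ v₂) (a b' : ℤ) :
    Int.gcd (Int.gcd a (u₂ * v₁ / d * b'))
        (Int.gcd (u₂ * v₂ / d * b') (a + u₁ * v₂ / d * b')) = 1 ↔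
      Int.gcd a b' = 1 := by
  have hgpos : 0 < Int.gcd u₂ v₂ := Int.gcd_pos_iff.mpr (Or.inl hu₂.ne')
  have hd0 : d ≠ 0 := by rw [hd]; exact_mod_cast hgpos.ne'
  have hdu : d ∣ u₂ := hd ▸ Int.gcd_dvd_left u₂ v₂
  have hdv : d ∣ v₂ := hd ▸ Int.gcd_dvd_right u₂ v₂
  set m := u₂ / d with hm_def
  set n := v₂ / d with hn_def
  have hm : d * m = u₂ := Int.mul_ediv_cancel' hdu
  have hn : d * n = v₂ := Int.mul_ediv_cancel' hdv
  have hmn : Int.gcd m n = 1 := by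
    rw [hm_def, hn_def, hd]
    exact Int.gcd_div_gcd_div_gcd hgpos
  have hA : u₂ * v₁ / d = m * v₁ := by
    rw [← hm, mul_assoc, Int.mul_ediv_cancel_left _ hd0]
  have hb : u₂ * v₂ / d = m * v₂ := by
    rw [← hm, mul_assoc, Int.mul_ediv_cancel_left _ hd0]
  have hB : u₁ * v₂ / d = u₁ * n := by
    rw [← hn, mul_left_comm, Int.mul_ediv_cancel_left _ hd0]
  rw [hA, hb, hB]
  rw [Nat.eq_one_iff_not_exists_prime_dvd, Nat.eq_one_iff_not_exists_prime_dvd]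
  refine forall_congr' fun p => imp_congr_right fun hp => not_congr ?_
  rw [Int.gcd_natCast_natCast, Nat.dvd_gcd_iff, nat_dvd_int_gcd_iff,
    nat_dvd_int_gcd_iff, nat_dvd_int_gcd_iff]
  have hpz : Prime (p : ℤ) := Nat.prime_iff_prime_int.mp hp
  constructor
  · rintro ⟨⟨ha, hA'⟩, hb', hB'⟩
    refine ⟨ha, ?_⟩
    by_contra hnb
    -- p does not divide b', derive contradiction
    have h1 : (p : ℤ) ∣ m * v₁ := ((hpz.dvd_mul.mp hA').resolve_right hnb)
    have h2 : (p : ℤ) ∣ m * v₂ := ((hpz.dvd_mul.mp hb').resolve_right hnb)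
    have h3 : (p : ℤ) ∣ u₁ * n := by
      have h := dvd_sub hB' ha
      have h' : (p : ℤ) ∣ u₁ * n * b' := by simpa using h
      exact (hpz.dvd_mul.mp h').resolve_right hnb
    have hpm_contra : ¬ (p : ℤ) ∣ m := by
      intro hpm
      have hpu₂ : (p : ℤ) ∣ u₂ := hm ▸ Dvd.dvd.mul_left hpm d
      rcases hpz.dvd_mul.mp h3 with h | h
      · have : p ∣ Int.gcd u₁ u₂ := (nat_dvd_int_gcd_iff p u₁ u₂).mpr ⟨h, hpu₂⟩
        rw [hcu] at this
        exact hp.one_lt.ne' (Nat.dvd_one.mp this)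
      · have : p ∣ Int.gcd m n := (nat_dvd_int_gcd_iff p m n).mpr ⟨hpm, h⟩
        rw [hmn] at this
        exact hp.one_lt.ne' (Nat.dvd_one.mp this)
    have hpv₁ : (p : ℤ) ∣ v₁ := (hpz.dvd_mul.mp h1).resolve_left hpm_contra
    have hpv₂ : (p : ℤ) ∣ v₂ := (hpz.dvd_mul.mp h2).resolve_left hpm_contra
    have : p ∣ Int.gcd v₁ v₂ := (nat_dvd_int_gcd_iff p v₁ v₂).mpr ⟨hpv₁, hpv₂⟩
    rw [hcv] at this
    exact hp.one_lt.ne' (Nat.dvd_one.mp this)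
  · rintro ⟨ha, hb''⟩
    exact ⟨⟨ha, Dvd.dvd.mul_left hb'' _⟩, Dvd.dvd.mul_left hb'' _,
      dvd_add ha (Dvd.dvd.mul_left hb'' _)⟩
end
end

section
/- Let u, v ∈ ℚ with Δ = u² + 4v < 0, written u = u₁/u₂ and v = v₁/v₂ in lowest terms with u₂, v₂ > 0, and let d = gcd(u₂, v₂). Let τ ∈ ℂ with Im τ > 0 satisfy τ² = u·τ + v, let L_τ = {m + k·τ : m, k ∈ ℤ}, and let n ≥ 1 be an integer. Then the following are equivalent: (1) there exist g ∈ ℂ and λ ∈ ℂ such that the coset g + L_τ has order exactly n in ℂ/L_τ, λ·L_τ = L_τ + ℤ·g, and λ·(L_τ + ℤ·g) = (1/n)·L_τ (i.e. there is a cyclic subgroup C of order n of E = ℂ/L_τ with (E, C) equivalent to (E/C, E[n]/C)); (2) there exist integers a, b' with gcd(a, b') = 1 such that n = a·(a + (u₁v₂/d)·b') − ((u₂v₂/d)·b')·((u₂v₁/d)·b') and n divides 2a + (u₁v₂/d)·b'. -/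
noncomputable section

private lemma bezout4 {x y z w : ℤ} (h : Int.gcd (Int.gcd x y) (Int.gcd z w) = 1) :
    ∃ e1 e2 e3 e4 : ℤ, e1*x + e2*y + e3*z + e4*w = 1 := by
  have h1 := Int.gcd_eq_gcd_ab x y
  have h2 := Int.gcd_eq_gcd_ab z w
  have h3 := Int.gcd_eq_gcd_ab ((Int.gcd x y : ℤ)) ((Int.gcd z w : ℤ))
  rw [h] at h3
  refine ⟨Int.gcdA x y * Int.gcdA (Int.gcd x y : ℤ) (Int.gcd z w : ℤ),
    Int.gcdB x y * Int.gcdA (Int.gcd x y : ℤ) (Int.gcd z w : ℤ),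
    Int.gcdA z w * Int.gcdB (Int.gcd x y : ℤ) (Int.gcd z w : ℤ),
    Int.gcdB z w * Int.gcdB (Int.gcd x y : ℤ) (Int.gcd z w : ℤ), ?_⟩
  push_cast at h3
  linear_combination -h3 - Int.gcdA (Int.gcd x y : ℤ) (Int.gcd z w : ℤ) * h1
    - Int.gcdB (Int.gcd x y : ℤ) (Int.gcd z w : ℤ) * h2

private lemma bezout3 {x y z : ℤ} (h : Int.gcd (Int.gcd x y) z = 1) :
    ∃ e1 e2 e3 : ℤ, e1*x + e2*y + e3*z = 1 := by
  have h1 := Int.gcd_eq_gcd_ab x y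
  have h3 := Int.gcd_eq_gcd_ab ((Int.gcd x y : ℤ)) z
  rw [h] at h3
  refine ⟨Int.gcdA x y * Int.gcdA (Int.gcd x y : ℤ) z,
    Int.gcdB x y * Int.gcdA (Int.gcd x y : ℤ) z,
    Int.gcdB (Int.gcd x y : ℤ) z, ?_⟩
  push_cast at h3
  linear_combination -h3 - Int.gcdA (Int.gcd x y : ℤ) z * h1

private lemma gen (p q r s : ℤ) (hD : p*s - q*r ≠ 0)
    (hco : ∃ e1 e2 e3 e4 : ℤ, e1*p + e2*q + e3*r + e4*s = 1) :
    ∃ x y X1 X2 X3 Y1 Y2 Y3 : ℤ,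
      (1 = X1*x + X2*p + X3*q ∧ 0 = X1*y + X2*r + X3*s) ∧
      (0 = Y1*x + Y2*p + Y3*q ∧ 1 = Y1*y + Y2*r + Y3*s) := by
  classical
  obtain ⟨e1,e2,e3,e4,hbez⟩ := hco
  set m : ℕ := (p*s - q*r).natAbs with hm
  have hm0 : m ≠ 0 := by simpa [hm, Int.natAbs_eq_zero] using hD
  set Φ : Finset ℕ := m.primeFactors with hΦ
  set fx : ℕ → ℤ := fun ℓ => if ((ℓ:ℤ) ∣ r ∧ (ℓ:ℤ) ∣ s) then 0 else 1 with hfx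
  set fy : ℕ → ℤ := fun ℓ => if ((ℓ:ℤ) ∣ r ∧ (ℓ:ℤ) ∣ s) then -1 else 0 with hfy
  set R : ℕ → ℤ := fun ℓ => ∏ j ∈ Φ.erase ℓ, (j : ℤ) with hR
  set x : ℤ := ∑ ℓ ∈ Φ, R ℓ * fx ℓ with hx
  set y : ℤ := ∑ ℓ ∈ Φ, R ℓ * fy ℓ with hy
  have key : ∀ ℓ : ℕ, ℓ.Prime → (ℓ:ℤ) ∣ (x*r - y*p) → (ℓ:ℤ) ∣ (x*s - y*q) →
      ¬ ((ℓ:ℤ) ∣ (p*s - q*r)) := by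
    intro ℓ hℓ h1 h2 hdvd
    have hℓP : Prime (ℓ:ℤ) := Nat.prime_iff_prime_int.mp hℓ
    have hℓm : ℓ ∣ m := by
      have := Int.natAbs_dvd_natAbs.mpr hdvd
      simpa [hm] using this
    have hℓΦ : ℓ ∈ Φ := Nat.mem_primeFactors.mpr ⟨hℓ, hℓm, hm0⟩
    -- ℓ divides R ℓ' for ℓ' ≠ ℓ in Φ
    have hdvdR : ∀ ℓ' ∈ Φ.erase ℓ, (ℓ:ℤ) ∣ R ℓ' := by
      intro ℓ' hℓ'
      have hne : ℓ' ≠ ℓ := (Finset.mem_erase.mp hℓ').1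
      have hmem : ℓ ∈ Φ.erase ℓ' := Finset.mem_erase.mpr ⟨fun h => hne h.symm, hℓΦ⟩
      have : (ℓ:ℤ) ∣ ∏ j ∈ Φ.erase ℓ', (j : ℤ) :=
        Finset.dvd_prod_of_mem (f := fun j : ℕ => (j:ℤ)) hmem
      simpa [hR] using this
    -- ℓ does not divide R ℓ
    have hnotR : ¬ (ℓ:ℤ) ∣ R ℓ := by
      intro hdvd'
      rw [hR] at hdvd'
      obtain ⟨j, hj, hdj⟩ := (Prime.dvd_finset_prod_iff hℓP _).mp hdvd'
      have hjP : j.Prime := Nat.prime_of_mem_primeFactors ((Finset.mem_erase.mp hj).2)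
      have : ℓ = j := (Nat.prime_dvd_prime_iff_eq hℓ hjP).mp (Int.natCast_dvd_natCast.mp hdj)
      exact (Finset.mem_erase.mp hj).1 this.symm
    -- sums
    have hsum1 : x*r - y*p = ∑ ℓ' ∈ Φ, (R ℓ' * (fx ℓ' * r - fy ℓ' * p)) := by
      rw [hx, hy, Finset.sum_mul, Finset.sum_mul, ← Finset.sum_sub_distrib]
      exact Finset.sum_congr rfl (fun i _ => by ring)
    have hsum2 : x*s - y*q = ∑ ℓ' ∈ Φ, (R ℓ' * (fx ℓ' * s - fy ℓ' * q)) := by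
      rw [hx, hy, Finset.sum_mul, Finset.sum_mul, ← Finset.sum_sub_distrib]
      exact Finset.sum_congr rfl (fun i _ => by ring)
    have hsplit : ∀ (A B : ℤ), (ℓ:ℤ) ∣ (∑ ℓ' ∈ Φ, (R ℓ' * (fx ℓ' * A - fy ℓ' * B))) →
        (ℓ:ℤ) ∣ (fx ℓ * A - fy ℓ * B) := by
      intro A B hS
      have hsplit' : ∑ ℓ' ∈ Φ.erase ℓ, (R ℓ' * (fx ℓ' * A - fy ℓ' * B))
          + (R ℓ * (fx ℓ * A - fy ℓ * B)) = ∑ ℓ' ∈ Φ, (R ℓ' * (fx ℓ' * A - fy ℓ' * B)) :=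
        Finset.sum_erase_add _ _ hℓΦ
      have hde : (ℓ:ℤ) ∣ ∑ ℓ' ∈ Φ.erase ℓ, (R ℓ' * (fx ℓ' * A - fy ℓ' * B)) :=
        Finset.dvd_sum (fun i hi => Dvd.dvd.mul_right (hdvdR i hi) _)
      have : (ℓ:ℤ) ∣ (R ℓ * (fx ℓ * A - fy ℓ * B)) := by
        have := dvd_sub hS hde
        rw [← hsplit'] at this
        simpa using this
      rcases hℓP.dvd_mul.mp this with h | h
      · exact absurd h hnotR
      · exact h
    have hv1 : (ℓ:ℤ) ∣ (fx ℓ * r - fy ℓ * p) := hsplit r p (hsum1 ▸ h1)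
    have hv2 : (ℓ:ℤ) ∣ (fx ℓ * s - fy ℓ * q) := hsplit s q (hsum2 ▸ h2)
    by_cases hc : ((ℓ:ℤ) ∣ r ∧ (ℓ:ℤ) ∣ s)
    · rw [hfx, hfy] at hv1 hv2
      simp only [if_pos hc] at hv1 hv2
      have hp' : (ℓ:ℤ) ∣ p := by simpa using hv1
      have hq' : (ℓ:ℤ) ∣ q := by simpa using hv2
      have : (ℓ:ℤ) ∣ 1 := by
        rw [← hbez]
        exact dvd_add (dvd_add (dvd_add (hp'.mul_left e1) (hq'.mul_left e2))
          ((hc.1).mul_left e3)) ((hc.2).mul_left e4)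
      exact hℓP.not_dvd_one this
    · rw [hfx, hfy] at hv1 hv2
      simp only [if_neg hc] at hv1 hv2
      have hr' : (ℓ:ℤ) ∣ r := by simpa using hv1
      have hs' : (ℓ:ℤ) ∣ s := by simpa using hv2
      exact hc ⟨hr', hs'⟩
  -- now gcd is 1
  set F₁ : ℤ := x*r - y*p with hF₁
  set F₂ : ℤ := x*s - y*q with hF₂
  have hG : Int.gcd (Int.gcd F₁ F₂) (p*s - q*r) = 1 := by
    by_contra hG
    obtain ⟨ℓ, hℓ, hℓdvd⟩ := Nat.exists_prime_and_dvd hG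
    have hgf : ((Int.gcd (Int.gcd F₁ F₂) (p*s - q*r) : ℕ) : ℤ) ∣ (Int.gcd F₁ F₂ : ℤ) :=
      Int.gcd_dvd_left _ _
    have hgd : ((Int.gcd (Int.gcd F₁ F₂) (p*s - q*r) : ℕ) : ℤ) ∣ (p*s - q*r) :=
      Int.gcd_dvd_right _ _
    have hℓZ : (ℓ:ℤ) ∣ (Int.gcd (Int.gcd F₁ F₂) (p*s - q*r) : ℕ) := Int.natCast_dvd_natCast.mpr hℓdvd
    have h1 : (ℓ:ℤ) ∣ F₁ := (hℓZ.trans hgf).trans (Int.gcd_dvd_left _ _)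
    have h2 : (ℓ:ℤ) ∣ F₂ := (hℓZ.trans hgf).trans (Int.gcd_dvd_right _ _)
    exact key ℓ hℓ h1 h2 (hℓZ.trans hgd)
  obtain ⟨z1, z2, z3, hz⟩ := bezout3 hG
  refine ⟨x, y, z1*r + z2*s, -z1*y + z3*s, -z2*y - z3*r,
    -z1*p - z2*q, z1*x - z3*q, z2*x + z3*p, ⟨?_, ?_⟩, ?_, ?_⟩
  · rw [hF₁, hF₂] at hz; linear_combination -hz
  · rw [hF₁, hF₂] at hz; linear_combination
  · rw [hF₁, hF₂] at hz; linear_combination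
  · rw [hF₁, hF₂] at hz; linear_combination -hz

set_option maxHeartbeats 4000000 in
theorem stmt_8 (u v : ℚ) (u₁ u₂ v₁ v₂ : ℤ) (hu₂ : 0 < u₂) (hv₂ : 0 < v₂)
    (hu : u = (u₁ : ℚ) / (u₂ : ℚ)) (hv : v = (v₁ : ℚ) / (v₂ : ℚ))
    (hcu : Int.gcd u₁ u₂ = 1) (hcv : Int.gcd v₁ v₂ = 1)
    (d : ℤ) (hd : d = Int.gcd u₂ v₂)
    (hΔ : u ^ 2 + 4 * v < 0)
    (τ : ℂ) (hτ : 0 < τ.im) (hquad : τ ^ 2 = (u : ℂ) * τ + (v : ℂ))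
    (n : ℕ) (hn : 1 ≤ n) :
    (∃ g lam : ℂ,
        ((n : ℂ) * g ∈ latt τ ∧ ∀ m : ℕ, 0 < m → m < n → (m : ℂ) * g ∉ latt τ) ∧
        (fun x => lam * x) '' latt τ = lattAdj τ g ∧
        (fun x => lam * x) '' lattAdj τ g = (fun x => x / (n : ℂ)) '' latt τ) ↔
    (∃ a b' : ℤ, Int.gcd a b' = 1 ∧
        (n : ℤ) = a * (a + u₁ * v₂ / d * b') - (u₂ * v₂ / d * b') * (u₂ * v₁ / d * b') ∧
        (n : ℤ) ∣ 2 * a + u₁ * v₂ / d * b') := by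
  have hτim : τ.im ≠ 0 := ne_of_gt hτ
  have hdpos : (0:ℤ) < d := by
    rw [hd]
    exact_mod_cast Nat.pos_of_ne_zero (fun h => by
      have := Int.gcd_eq_zero_iff.mp h
      omega)
  have hd0 : d ≠ 0 := ne_of_gt hdpos
  set U : ℤ := u₁ * v₂ / d with hU
  set c : ℤ := u₂ * v₂ / d with hc
  set V : ℤ := u₂ * v₁ / d with hV
  have hdu : d ∣ u₂ := hd ▸ Int.gcd_dvd_left _ _
  have hdv : d ∣ v₂ := hd ▸ Int.gcd_dvd_right _ _
  obtain ⟨Q, hQ⟩ := hdu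
  obtain ⟨P, hP⟩ := hdv
  have hUeq : U = u₁ * P := by
    rw [hU, hP, show u₁ * (d * P) = d * (u₁ * P) by ring, Int.mul_ediv_cancel_left _ hd0]
  have hceq : c = u₂ * P := by
    rw [hc, hP, show u₂ * (d * P) = d * (u₂ * P) by ring, Int.mul_ediv_cancel_left _ hd0]
  have hVeq : V = Q * v₁ := by
    rw [hV, hQ, show d * Q * v₁ = d * (Q * v₁) by ring, Int.mul_ediv_cancel_left _ hd0]
  have hP0 : P ≠ 0 := fun h => by rw [h, mul_zero] at hP; omega
  have hu₂0 : (u₂:ℚ) ≠ 0 := Int.cast_ne_zero.mpr (by omega)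
  have hv₂0 : (v₂:ℚ) ≠ 0 := Int.cast_ne_zero.mpr (by omega)
  have hcuQ : (c:ℚ) * u = (U:ℚ) := by
    rw [hceq, hUeq, hu]; push_cast; field_simp
  have hcvQ : (c:ℚ) * v = (V:ℚ) := by
    rw [hceq, hVeq, hv, hQ, hP]; push_cast
    field_simp
  have hcuC : (c:ℂ) * ((u:ℚ):ℂ) = (U:ℂ) := by exact_mod_cast hcuQ
  have hcvC : (c:ℂ) * ((v:ℚ):ℂ) = (V:ℂ) := by exact_mod_cast hcvQ
  have hcτ2 : (c:ℂ) * τ^2 = (U:ℂ)*τ + (V:ℂ) := by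
    linear_combination (c:ℂ)*hquad + τ*hcuC + hcvC
  have hn0 : (n:ℂ) ≠ 0 := Nat.cast_ne_zero.mpr (by omega)
  have hLIQ : ∀ A B : ℚ, (A:ℂ) + (B:ℂ)*τ = 0 → A = 0 ∧ B = 0 := by
    intro A B h
    have him : (B:ℝ) * τ.im = 0 := by
      have := congrArg Complex.im h
      simpa [Complex.add_im, Complex.mul_im] using this
    have hB : B = 0 := by
      rcases mul_eq_zero.mp him with h' | h'
      · exact_mod_cast h'
      · exact absurd h' hτim
    refine ⟨?_, hB⟩
    rw [hB] at h
    push_cast at h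
    have : (A:ℂ) = 0 := by linear_combination h
    exact_mod_cast this
  have hLI2 : ∀ A B A' B' : ℤ, (A:ℂ) + (B:ℂ)*τ = (A':ℂ) + (B':ℂ)*τ → A = A' ∧ B = B' := by
    intro A B A' B' h
    have := hLIQ ((A:ℚ) - A') ((B:ℚ) - B') (by push_cast; linear_combination h)
    obtain ⟨h1, h2⟩ := this
    have h1' : (A:ℚ) = A' := by linarith
    have h2' : (B:ℚ) = B' := by linarith
    exact ⟨by exact_mod_cast h1', by exact_mod_cast h2'⟩
  have hLIQ2 : ∀ A B A' B' : ℚ, (A:ℂ) + (B:ℂ)*τ = (A':ℂ) + (B':ℂ)*τ → A = A' ∧ B = B' := by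
    intro A B A' B' h
    obtain ⟨h1, h2⟩ := hLIQ (A - A') (B - B') (by push_cast; linear_combination h)
    exact ⟨by linarith, by linarith⟩
  have PAIR : ∀ (A B Pp Qq R S : ℤ), A*Pp + B*Qq*V = R → A*Qq + B*Pp*c + B*Qq*U = S →
      ((A:ℂ) + (c:ℂ)*(B:ℂ)*τ) * ((Pp:ℂ) + (Qq:ℂ)*τ) = (R:ℂ) + (S:ℂ)*τ := by
    intro A B Pp Qq R S h1 h2
    have h1C : (A:ℂ)*Pp + (B:ℂ)*Qq*V = (R:ℂ) := by exact_mod_cast h1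
    have h2C : (A:ℂ)*Qq + (B:ℂ)*Pp*c + (B:ℂ)*Qq*U = (S:ℂ) := by exact_mod_cast h2
    linear_combination ((B:ℂ)*(Qq:ℂ))*hcτ2 + h1C + τ*h2C
  -- content lemma
  have content : ∀ a b : ℤ, Int.gcd a b = 1 →
      Int.gcd (Int.gcd a (c*b)) (Int.gcd (U*b) (V*b)) = 1 := by
    intro a b hab
    set G : ℕ := Int.gcd (Int.gcd a (c*b)) (Int.gcd (U*b) (V*b)) with hG
    have hGa : (G:ℤ) ∣ a := (Int.gcd_dvd_left _ _).trans (Int.gcd_dvd_left _ _)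
    have hGcb : (G:ℤ) ∣ c*b := (Int.gcd_dvd_left _ _).trans (Int.gcd_dvd_right _ _)
    have hGUb : (G:ℤ) ∣ U*b := (Int.gcd_dvd_right _ _).trans (Int.gcd_dvd_left _ _)
    have hGVb : (G:ℤ) ∣ V*b := (Int.gcd_dvd_right _ _).trans (Int.gcd_dvd_right _ _)
    have habco : IsCoprime a b := Int.isCoprime_iff_gcd_eq_one.mpr hab
    have hGbco : IsCoprime ((G:ℤ)) b := IsCoprime.of_isCoprime_of_dvd_left habco hGa
    have hGc : (G:ℤ) ∣ c := hGbco.dvd_of_dvd_mul_right hGcb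
    have hGU : (G:ℤ) ∣ U := hGbco.dvd_of_dvd_mul_right hGUb
    have hGV : (G:ℤ) ∣ V := hGbco.dvd_of_dvd_mul_right hGVb
    have hGgcd : (G:ℤ) ∣ (Int.gcd (u₂*P) (u₁*P) : ℤ) :=
      Int.dvd_coe_gcd (hceq ▸ hGc) (hUeq ▸ hGU)
    have hgcdP : Int.gcd (u₂*P) (u₁*P) = P.natAbs := by
      rw [Int.gcd_mul_right, Int.gcd_comm, hcu, one_mul]
    have hGP : (G:ℤ) ∣ P := by
      rw [hgcdP] at hGgcd
      exact hGgcd.trans (Int.natAbs_dvd.mpr dvd_rfl)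
    have hGv₂ : (G:ℤ) ∣ v₂ := hGP.trans ⟨d, by rw [hP]; ring⟩
    have hv₁v₂ : IsCoprime (v₂ : ℤ) v₁ := by
      rw [Int.isCoprime_iff_gcd_eq_one, Int.gcd_comm]; exact hcv
    have hGv₁co : IsCoprime ((G:ℤ)) v₁ := IsCoprime.of_isCoprime_of_dvd_left hv₁v₂ hGv₂
    have hGQ : (G:ℤ) ∣ Q := by
      have : (G:ℤ) ∣ Q * v₁ := hVeq ▸ hGV
      exact hGv₁co.dvd_of_dvd_mul_right this
    have hQP : Int.gcd Q P = 1 := by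
      have h1 : 0 < Int.gcd u₂ v₂ := by
        have : Int.gcd u₂ v₂ ≠ 0 := fun h => by
          have := Int.gcd_eq_zero_iff.mp h; omega
        omega
      have h2 := Int.gcd_div_gcd_div_gcd (i := u₂) (j := v₂) h1
      have hQ' : u₂ / (Int.gcd u₂ v₂ : ℤ) = Q := by
        rw [← hd, hQ, Int.mul_ediv_cancel_left _ hd0]
      have hP' : v₂ / (Int.gcd u₂ v₂ : ℤ) = P := by
        rw [← hd, hP, Int.mul_ediv_cancel_left _ hd0]
      rwa [hQ', hP'] at h2
    have : (G:ℤ) ∣ (Int.gcd Q P : ℤ) := Int.dvd_coe_gcd hGQ hGP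
    rw [hQP] at this
    have : (G:ℤ) = 1 := Int.eq_one_of_dvd_one (by positivity) this
    exact_mod_cast this
  have bez : ∀ a b : ℤ, Int.gcd a b = 1 →
      ∃ e1 e2 e3 e4 : ℤ, e1*a + e2*(c*b) + e3*(U*b) + e4*(V*b) = 1 :=
    fun a b hab => bezout4 (content a b hab)
  have dvd4 : ∀ a b m : ℤ, Int.gcd a b = 1 → (n:ℤ) ∣ m*a → (n:ℤ) ∣ m*(c*b) →
      (n:ℤ) ∣ m*(U*b) → (n:ℤ) ∣ m*(V*b) → (n:ℤ) ∣ m := by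
    intro a b m hab h1 h2 h3 h4
    obtain ⟨e1,e2,e3,e4,hb⟩ := bez a b hab
    have hmm1 : m = e1*(m*a) + e2*(m*(c*b)) + e3*(m*(U*b)) + e4*(m*(V*b)) := by
      linear_combination (-m)*hb
    rw [hmm1]
    exact dvd_add (dvd_add (dvd_add (h1.mul_left e1) (h2.mul_left e2))
      (h3.mul_left e3)) (h4.mul_left e4)
  constructor
  · rintro ⟨g, lam, ⟨⟨⟨p, q, hpg⟩, hord⟩, h1, h2⟩⟩
    have hnZ : (1:ℤ) ≤ (n:ℤ) := by exact_mod_cast hn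
    -- membership helpers
    have memAdj : ∀ ξ : ℂ, ξ ∈ latt τ → ∃ m' k' l' : ℤ, lam*ξ = (m':ℂ) + (k':ℂ)*τ + (l':ℂ)*g := by
      intro ξ hξ
      have : lam*ξ ∈ lattAdj τ g := by rw [← h1]; exact ⟨ξ, hξ, rfl⟩
      exact this
    have memDiv : ∀ ξ : ℂ, ξ ∈ lattAdj τ g → ∃ m' k' : ℤ, lam*ξ = ((m':ℂ) + (k':ℂ)*τ)/(n:ℂ) := by
      intro ξ hξ
      have : lam*ξ ∈ (fun x => x/(n:ℂ)) '' latt τ := by rw [← h2]; exact ⟨ξ, hξ, rfl⟩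
      obtain ⟨w1, ⟨m',k',rfl⟩, hw⟩ := this
      exact ⟨m', k', hw.symm⟩
    have memAdjInv : ∀ m k l : ℤ, ∃ m' k' : ℤ, ((m:ℂ) + (k:ℂ)*τ + (l:ℂ)*g : ℂ) = lam*((m':ℂ) + (k':ℂ)*τ) := by
      intro m k l
      have : ((m:ℂ) + (k:ℂ)*τ + (l:ℂ)*g : ℂ) ∈ lattAdj τ g := ⟨m,k,l,rfl⟩
      rw [← h1] at this
      obtain ⟨w1, ⟨m',k',rfl⟩, hw⟩ := this
      exact ⟨m',k', hw.symm⟩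
    have memDivInv : ∀ m k : ℤ, ∃ m' k' l' : ℤ,
        (((m:ℂ) + (k:ℂ)*τ)/(n:ℂ) : ℂ) = lam*((m':ℂ) + (k':ℂ)*τ + (l':ℂ)*g) := by
      intro m k
      have : (((m:ℂ)+(k:ℂ)*τ)/(n:ℂ) : ℂ) ∈ (fun x => x/(n:ℂ)) '' latt τ := ⟨(m:ℂ)+(k:ℂ)*τ, ⟨m,k,rfl⟩, rfl⟩
      rw [← h2] at this
      obtain ⟨w1, ⟨m',k',l',rfl⟩, hw⟩ := this
      exact ⟨m',k',l', hw.symm⟩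
    obtain ⟨m1,k1,l1,hl1⟩ := memAdj 1 ⟨1,0, by push_cast; ring⟩
    obtain ⟨m2,k2,l2,hl2⟩ := memAdj τ ⟨0,1, by push_cast; ring⟩
    obtain ⟨m4,k4,hg4⟩ := memAdjInv 0 0 1
    have hg4' : g = lam*((m4:ℂ) + (k4:ℂ)*τ) := by
      rw [← hg4]; push_cast; ring
    rw [mul_one] at hl1
    set a0 : ℤ := n*m1 + l1*p with ha0
    set q0 : ℤ := n*k1 + l1*q with hq0
    have hαco : (n:ℂ)*lam = (a0:ℂ) + (q0:ℂ)*τ := by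
      rw [ha0, hq0]; push_cast
      linear_combination (n:ℂ)*hl1 + (l1:ℂ)*hpg
    have hατ : (n:ℂ)*(lam*τ) = ((n:ℂ)*(m2:ℂ) + (l2:ℂ)*(p:ℂ)) + ((n:ℂ)*(k2:ℂ) + (l2:ℂ)*(q:ℂ))*τ := by
      push_cast
      linear_combination (n:ℂ)*hl2 + (l2:ℂ)*hpg
    -- rational coordinate relations for α τ
    obtain ⟨hCE1, hCE2⟩ := hLIQ2 ((q0:ℚ)*v) ((a0:ℚ) + (q0:ℚ)*u) ((n*m2 + l2*p : ℤ):ℚ) ((n*k2 + l2*q : ℤ):ℚ)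
      (by push_cast
          linear_combination hατ - τ*hαco - (q0:ℂ)*hquad)
    -- divisibility: v₂ ∣ q0, u₂ ∣ q0
    have hv2q : v₂ ∣ q0 := by
      have hq0v : q0*v₁ = (n*m2 + l2*p)*v₂ := by
        have := hCE1
        rw [hv] at this
        field_simp at this
        have h' : q0 * v₁ = v₂ * (↑n * m2 + l2 * p) := by exact_mod_cast this
        linear_combination h'
      have hco : IsCoprime (v₂:ℤ) v₁ := by
        rw [Int.isCoprime_iff_gcd_eq_one, Int.gcd_comm]; exact hcv
      exact hco.dvd_of_dvd_mul_right ⟨n*m2 + l2*p, by linear_combination hq0v⟩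
    have hu2q : u₂ ∣ q0 := by
      have hq0u : q0*u₁ = ((n*k2 + l2*q : ℤ) - a0)*u₂ := by
        have h' := hCE2
        rw [hu] at h'
        field_simp at h'
        have h'' : (q0:ℚ)*(u₁:ℚ) = (((n:ℤ)*k2 + l2*q : ℤ):ℚ)*(u₂:ℚ) - (a0:ℚ)*(u₂:ℚ) := by
          push_cast at h' ⊢
          linarith [h']
        have h3 : (q0:ℚ)*(u₁:ℚ) = (((n*k2 + l2*q : ℤ) - a0 : ℤ):ℚ)*(u₂:ℚ) := by
          push_cast
          push_cast at h''
          linarith [h'']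
        exact_mod_cast h3
      have hco : IsCoprime (u₂:ℤ) u₁ := by
        rw [Int.isCoprime_iff_gcd_eq_one, Int.gcd_comm]; exact hcu
      exact hco.dvd_of_dvd_mul_right ⟨(n*k2 + l2*q : ℤ) - a0, by linear_combination hq0u⟩
    have hcq0 : c ∣ q0 := by
      have hlcm : (Int.lcm u₂ v₂ : ℤ) = c := by
        have h1 := Int.gcd_mul_lcm u₂ v₂
        have h2 : (Int.gcd u₂ v₂ : ℤ) * (Int.lcm u₂ v₂ : ℤ) = u₂*v₂ := by
          have h1' : ((Int.gcd u₂ v₂ * Int.lcm u₂ v₂ : ℕ) : ℤ) = (((u₂*v₂).natAbs : ℕ) : ℤ) := by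
            exact_mod_cast congrArg (fun t : ℕ => (t:ℤ)) (h1.trans (Int.natAbs_mul u₂ v₂).symm)
          rw [Int.natAbs_of_nonneg (le_of_lt (mul_pos hu₂ hv₂))] at h1'
          push_cast at h1'
          linarith [h1']
        have h3 : d * (Int.lcm u₂ v₂ : ℤ) = u₂*v₂ := by rw [hd]; exact h2
        have h4 : d * c = u₂*v₂ := by rw [hceq, hP]; ring
        have := h3.trans h4.symm
        exact mul_left_cancel₀ hd0 this
      rw [← hlcm]
      exact Int.coe_lcm_dvd hu2q hv2q
    obtain ⟨b1, hb1⟩ := hcq0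
    -- α in standard form
    have hαco' : (n:ℂ)*lam = (a0:ℂ) + (c:ℂ)*(b1:ℂ)*τ := by
      rw [hαco, hb1]; push_cast; ring
    -- the four norm memberships
    obtain ⟨A, B, hAB⟩ := memDiv (lam*1) ⟨m1, k1, l1, by rw [mul_one]; exact hl1⟩
    obtain ⟨CC, EE, hCCEE⟩ := memDiv (lam*τ) ⟨m2, k2, l2, hl2⟩
    have hA : ((n:ℂ)*lam)*((n:ℂ)*lam) = (n:ℂ)*((A:ℂ) + (B:ℂ)*τ) := by
      have h2' : (n:ℂ)*(lam*(lam*1)) = (A:ℂ) + (B:ℂ)*τ := by rw [hAB]; field_simp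
      linear_combination (n:ℂ)*h2'
    have hC : ((n:ℂ)*lam)*(((n:ℂ)*lam)*τ) = (n:ℂ)*((CC:ℂ) + (EE:ℂ)*τ) := by
      have h2' : (n:ℂ)*(lam*(lam*τ)) = (CC:ℂ) + (EE:ℂ)*τ := by rw [hCCEE]; field_simp
      linear_combination (n:ℂ)*h2'
    have nLsub : ∀ m k : ℤ, ∃ m' k' : ℤ, (n:ℂ)*((m:ℂ) + (k:ℂ)*τ) = ((n:ℂ)*lam)*((m':ℂ) + (k':ℂ)*τ) := by
      intro m k
      obtain ⟨m',k',h⟩ := memAdjInv m k 0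
      refine ⟨m',k', ?_⟩
      push_cast at h
      linear_combination (n:ℂ)*h
    obtain ⟨m3,k3,l3,h13⟩ := memDivInv 1 0
    obtain ⟨m5,k5,h5⟩ := nLsub m3 k3
    have h13' : (1:ℂ) = (n:ℂ)*(lam*((m3:ℂ) + (k3:ℂ)*τ + (l3:ℂ)*g)) := by
      have : ((1:ℂ) + (0:ℂ)*τ)/(n:ℂ) = lam*((m3:ℂ) + (k3:ℂ)*τ + (l3:ℂ)*g) := by
        rw [← h13]; push_cast; ring
      field_simp at this
      linear_combination this
    have hA' : (n:ℂ) = (((n:ℂ)*lam)*((n:ℂ)*lam))*(((m5 + l3*m4 : ℤ):ℂ) + ((k5 + l3*k4 : ℤ):ℂ)*τ) := by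
      push_cast
      linear_combination (n:ℂ)*h13' + ((n:ℂ)*lam)*h5 + (l3:ℂ)*(n:ℂ)*(n:ℂ)*lam*hg4'
    obtain ⟨m3',k3',l3',h13τ⟩ := memDivInv 0 1
    obtain ⟨m5',k5',h5'⟩ := nLsub m3' k3'
    have h13τ' : τ = (n:ℂ)*(lam*((m3':ℂ) + (k3':ℂ)*τ + (l3':ℂ)*g)) := by
      have : ((0:ℂ) + (1:ℂ)*τ)/(n:ℂ) = lam*((m3':ℂ) + (k3':ℂ)*τ + (l3':ℂ)*g) := by
        rw [← h13τ]; push_cast; ring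
      field_simp at this
      linear_combination this
    have hC' : (n:ℂ)*τ = (((n:ℂ)*lam)*((n:ℂ)*lam))*(((m5' + l3'*m4 : ℤ):ℂ) + ((k5' + l3'*k4 : ℤ):ℂ)*τ) := by
      push_cast
      linear_combination (n:ℂ)*h13τ' + ((n:ℂ)*lam)*h5' + (l3':ℂ)*(n:ℂ)*(n:ℂ)*lam*hg4'
    set A' : ℤ := m5 + l3*m4 with hA'd
    set B' : ℤ := k5 + l3*k4 with hB'd
    set C' : ℤ := m5' + l3'*m4 with hC'd
    set E' : ℤ := k5' + l3'*k4 with hE'd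
    -- gamma equations
    have hγ1 : ((A:ℂ) + (B:ℂ)*τ)*((A':ℂ) + (B':ℂ)*τ) = 1 := by
      apply mul_left_cancel₀ hn0
      linear_combination -hA' - ((A':ℂ) + (B':ℂ)*τ)*hA
    have hγ2 : ((A:ℂ) + (B:ℂ)*τ)*τ = (CC:ℂ) + (EE:ℂ)*τ := by
      apply mul_left_cancel₀ hn0
      linear_combination hC - τ*hA
    have hγ3 : τ = ((A:ℂ) + (B:ℂ)*τ)*((C':ℂ) + (E':ℂ)*τ) := by
      apply mul_left_cancel₀ hn0
      linear_combination hC' + ((C':ℂ) + (E':ℂ)*τ)*hA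
    have hγ0 : ((A:ℂ) + (B:ℂ)*τ) ≠ 0 := by
      intro h
      rw [h, zero_mul] at hγ1
      exact one_ne_zero hγ1.symm
    have hγ4 : (C':ℂ) + (E':ℂ)*τ = ((A':ℂ) + (B':ℂ)*τ)*τ := by
      apply mul_left_cancel₀ hγ0
      linear_combination -hγ3 - τ*hγ1
    -- rational coordinates
    obtain ⟨hCEq1, hCEq2⟩ := hLIQ2 ((B:ℚ)*v) ((A:ℚ) + (B:ℚ)*u) ((CC:ℤ):ℚ) ((EE:ℤ):ℚ)
      (by push_cast; linear_combination hγ2 - (B:ℂ)*hquad)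
    obtain ⟨hCEq1', hCEq2'⟩ := hLIQ2 ((B':ℚ)*v) ((A':ℚ) + (B':ℚ)*u) ((C':ℤ):ℚ) ((E':ℤ):ℚ)
      (by push_cast; linear_combination -hγ4 - (B':ℂ)*hquad)
    obtain ⟨hR1, hR2⟩ := hLIQ2 ((A:ℚ)*A' + (B:ℚ)*B'*v) ((A:ℚ)*B' + (A':ℚ)*B + (B:ℚ)*B'*u) 1 0
      (by push_cast; linear_combination hγ1 - (B:ℂ)*(B':ℂ)*hquad)
    -- J J' = 1
    set J : ℤ := A*EE - B*CC with hJd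
    set J' : ℤ := A'*E' - B'*C' with hJ'd
    have hJQ : (J:ℚ) = (A:ℚ)*((A:ℚ) + (B:ℚ)*u) - (B:ℚ)^2*v := by
      rw [hJd]; push_cast
      linear_combination -((A:ℚ)*hCEq2) + (B:ℚ)*hCEq1
    have hJ'Q : (J':ℚ) = (A':ℚ)*((A':ℚ) + (B':ℚ)*u) - (B':ℚ)^2*v := by
      rw [hJ'd]; push_cast
      linear_combination -((A':ℚ)*hCEq2') + (B':ℚ)*hCEq1'
    have hJJ'Q : (J:ℚ)*(J':ℚ) = 1 := by
      rw [hJQ, hJ'Q]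
      linear_combination ((A:ℚ)*A' + (B:ℚ)*B'*v + 1)*hR1
        + (((A:ℚ)*A' + (B:ℚ)*B'*v)*u - ((A:ℚ)*B' + (A':ℚ)*B + (B:ℚ)*B'*u)*v)*hR2
    have hJJ' : J*J' = 1 := by exact_mod_cast hJJ'Q
    have hJpm : J = 1 ∨ J = -1 := Int.isUnit_iff.mp (IsUnit.of_mul_eq_one (a := J) J' hJJ')
    -- D and conjugation
    set D : ℤ := a0*(a0 + U*b1) - (c*b1)*(V*b1) with hDd
    have hre : 2*τ.re = ((u:ℚ):ℝ) := by
      have him := congrArg Complex.im hquad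
      rw [pow_two] at him
      simp only [Complex.mul_im, Complex.add_im, Complex.ratCast_im, Complex.ratCast_re,
        zero_mul, add_zero, mul_zero, zero_add] at him
      have : τ.re * τ.im + τ.im * τ.re = ((u:ℚ):ℝ) * τ.im := by linarith [him]
      have h2 : (τ.re * 2 - ((u:ℚ):ℝ)) * τ.im = 0 := by ring_nf; linarith [this]
      rcases mul_eq_zero.mp h2 with h | h
      · linarith [h]
      · exact absurd h hτim
    have hconjτ : (starRingEnd ℂ) τ = ((u:ℚ):ℂ) - τ := by
      apply Complex.ext
      · simp only [Complex.conj_re, Complex.sub_re, Complex.ratCast_re, Complex.ratCast_im]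
        linarith [hre]
      · simp [Complex.conj_im, Complex.sub_im]
    have hconjα : (starRingEnd ℂ) ((n:ℂ)*lam) = (a0:ℂ) + (U:ℂ)*(b1:ℂ) - (c:ℂ)*(b1:ℂ)*τ := by
      rw [hαco']
      simp only [map_add, map_mul, map_intCast, hconjτ]
      linear_combination (b1:ℂ)*hcuC
    have hDC : (D:ℂ) = ((n:ℂ)*lam) * ((starRingEnd ℂ) ((n:ℂ)*lam)) := by
      rw [hconjα, hαco', hDd]
      push_cast
      linear_combination ((c:ℂ)*(b1:ℂ)^2)*hcτ2
    -- D² = n² J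
    have hJC : (J:ℂ) = (A:ℂ)*((A:ℂ) + (B:ℂ)*((u:ℚ):ℂ)) - (B:ℂ)^2*((v:ℚ):ℂ) := by
      exact_mod_cast congrArg (fun t : ℚ => (t:ℂ)) hJQ
    have hconjA : (starRingEnd ℂ) (((n:ℂ)*lam)*((n:ℂ)*lam))
        = (n:ℂ)*((A:ℂ) + (B:ℂ)*((u:ℚ):ℂ) - (B:ℂ)*τ) := by
      rw [hA]
      simp only [map_mul, map_add, map_natCast, map_intCast, hconjτ]
      ring
    have hDsq : (D:ℂ)^2 = (n:ℂ)^2*(J:ℂ) := by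
      have e1 : (D:ℂ)^2 = (((n:ℂ)*lam)*((n:ℂ)*lam)) * ((starRingEnd ℂ) (((n:ℂ)*lam)*((n:ℂ)*lam))) := by
        rw [map_mul, hDC]; ring
      rw [e1, hconjA, hA, hJC]
      linear_combination -(n:ℂ)^2*(B:ℂ)^2*hquad
    have hDsqZ : D^2 = (n:ℤ)^2*J := by
      have hcast : ((D^2 : ℤ):ℂ) = (((n:ℤ)^2*J : ℤ):ℂ) := by
        push_cast
        push_cast at hDsq
        linear_combination hDsq
      exact_mod_cast hcast
    -- D ≥ 0
    have hDnn : 0 ≤ D := by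
      have h1 : (D:ℂ) = ((Complex.normSq ((n:ℂ)*lam) : ℝ):ℂ) := by
        rw [hDC, Complex.mul_conj]
      have h2 : (D:ℝ) = Complex.normSq ((n:ℂ)*lam) := by exact_mod_cast h1
      have := Complex.normSq_nonneg ((n:ℂ)*lam)
      rw [← h2] at this
      exact_mod_cast this
    have hJ1 : J = 1 := by
      rcases hJpm with h | h
      · exact h
      · exfalso
        rw [h] at hDsqZ
        nlinarith [sq_nonneg D, hnZ]
    have hDn : D = (n:ℤ) := by
      rw [hJ1, mul_one] at hDsqZ
      have hfac : (D - n)*(D + n) = 0 := by linear_combination hDsqZ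
      rcases mul_eq_zero.mp hfac with h | h
      · linarith
      · linarith
    -- gcd(a0, b1) = 1 via the order hypothesis
    have hgcd : Int.gcd a0 b1 = 1 := by
      by_contra hne
      set e : ℕ := Int.gcd a0 b1 with hed
      have hea : (e:ℤ) ∣ a0 := Int.gcd_dvd_left _ _
      have heb : (e:ℤ) ∣ b1 := Int.gcd_dvd_right _ _
      obtain ⟨a0', ha0'⟩ := hea
      obtain ⟨b1', hb1'⟩ := heb
      have he2n : (e:ℤ)^2 ∣ (n:ℤ) := ⟨a0'*(a0' + U*b1') - (c*b1')*(V*b1'), by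
        rw [← hDn, hDd, ha0', hb1']; ring⟩
      have he0 : e ≠ 0 := by
        intro h0
        rw [h0] at ha0' hb1'
        push_cast at ha0' hb1'
        rw [← hDn, hDd, ha0', hb1'] at hnZ
        simp at hnZ
      have he2 : 2 ≤ e := by omega
      have hen : (e:ℤ) ∣ (n:ℤ) := dvd_trans ⟨e, by ring⟩ he2n
      have henN : e ∣ n := by exact_mod_cast hen
      obtain ⟨f, hf⟩ := henN
      have hf0 : 0 < f := by
        rcases Nat.eq_zero_or_pos f with h | h
        · rw [h, mul_zero] at hf; omega
        · exact h
      have hfn : f < n := by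
        calc f < e*f := by
              have : 1*f < e*f := (Nat.mul_lt_mul_right hf0).mpr (by omega)
              simpa using this
        _ = n := hf.symm
      -- (f:ℂ)*g ∈ latt τ
      have hgα : (n:ℂ)*g = ((n:ℂ)*lam)*((m4:ℂ) + (k4:ℂ)*τ) := by
        rw [hg4']; ring
      have hgcoord : (n:ℂ)*g = ((a0*m4 + b1*k4*V : ℤ):ℂ) + ((a0*k4 + b1*m4*c + b1*k4*U : ℤ):ℂ)*τ := by
        rw [hgα, hαco']
        push_cast
        linear_combination ((b1:ℂ)*(k4:ℂ))*hcτ2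
      have hXd : (e:ℤ) ∣ a0*m4 + b1*k4*V := ⟨a0'*m4 + b1'*(k4*V), by rw [ha0', hb1']; ring⟩
      have hYd : (e:ℤ) ∣ a0*k4 + b1*m4*c + b1*k4*U :=
        ⟨a0'*k4 + b1'*(m4*c) + b1'*(k4*U), by rw [ha0', hb1']; ring⟩
      obtain ⟨X, hX⟩ := hXd
      obtain ⟨Y, hY⟩ := hYd
      have he0C : (e:ℂ) ≠ 0 := Nat.cast_ne_zero.mpr he0
      have hfg : (f:ℂ)*g = (X:ℂ) + (Y:ℂ)*τ := by
        apply mul_left_cancel₀ he0C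
        have hef : (e:ℂ)*(f:ℂ) = (n:ℂ) := by exact_mod_cast congrArg (fun t : ℕ => (t:ℂ)) hf.symm
        calc (e:ℂ)*((f:ℂ)*g) = ((e:ℂ)*(f:ℂ))*g := by ring
        _ = (n:ℂ)*g := by rw [hef]
        _ = ((a0*m4 + b1*k4*V : ℤ):ℂ) + ((a0*k4 + b1*m4*c + b1*k4*U : ℤ):ℂ)*τ := hgcoord
        _ = (e:ℂ)*((X:ℂ) + (Y:ℂ)*τ) := by
            rw [hX, hY]; push_cast; ring
      exact hord f hf0 hfn ⟨X, Y, hfg⟩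
    -- trace divisibility
    set t : ℤ := 2*a0 + U*b1 with htd
    have hDnd : (n:ℤ) = a0*(a0 + U*b1) - (c*b1)*(V*b1) := by rw [← hDn, hDd]
    have hαsq : ((n:ℂ)*lam)*((n:ℂ)*lam) = (t:ℂ)*((n:ℂ)*lam) - (n:ℂ) := by
      rw [hαco', htd]
      have hDC2 : ((n:ℕ):ℂ) = (a0:ℂ)*((a0:ℂ) + (U:ℂ)*(b1:ℂ)) - ((c:ℂ)*(b1:ℂ))*((V:ℂ)*(b1:ℂ)) := by
        exact_mod_cast congrArg (fun t : ℤ => (t:ℂ)) hDnd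
      push_cast
      linear_combination ((c:ℂ)*(b1:ℂ)^2)*hcτ2 + hDC2
    have htα : (t:ℂ)*((n:ℂ)*lam) = (n:ℂ)*((A:ℂ)+1+(B:ℂ)*τ) := by
      linear_combination -hαsq + hA
    have h6 : ((t*a0 : ℤ):ℂ) + ((t*(c*b1) : ℤ):ℂ)*τ = ((n*(A+1) : ℤ):ℂ) + ((n*B : ℤ):ℂ)*τ := by
      push_cast
      linear_combination htα - (t:ℂ)*hαco'
    obtain ⟨hT1, hT2⟩ := hLI2 _ _ _ _ h6
    have hαcτ2 : ((n:ℂ)*lam)*τ = (V:ℂ)*(b1:ℂ) + ((a0:ℂ) + (U:ℂ)*(b1:ℂ))*τ := by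
      rw [hαco']; push_cast
      linear_combination (b1:ℂ)*hcτ2
    have htατ : (t:ℂ)*(((n:ℂ)*lam)*τ) = (n:ℂ)*((CC:ℂ) + ((EE:ℂ)+1)*τ) := by
      linear_combination -τ*hαsq + hC
    have h7 : ((t*(V*b1) : ℤ):ℂ) + ((t*(a0 + U*b1) : ℤ):ℂ)*τ = ((n*CC : ℤ):ℂ) + ((n*(EE+1) : ℤ):ℂ)*τ := by
      push_cast
      linear_combination htατ - (t:ℂ)*hαcτ2
    obtain ⟨hT3, hT4⟩ := hLI2 _ _ _ _ h7
    have hTU : t*(U*b1) = (n:ℤ)*(EE - A) := by linear_combination hT4 - hT1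
    have hTdvd : (n:ℤ) ∣ t := dvd4 a0 b1 t hgcd ⟨A+1, hT1⟩ ⟨B, hT2⟩ ⟨EE - A, hTU⟩ ⟨CC, hT3⟩
    exact ⟨a0, b1, hgcd, hDnd, htd ▸ hTdvd⟩
  · rintro ⟨a, b, hab, hdet, hTr⟩
    obtain ⟨s, hs⟩ := hTr
    have hnZ : (1:ℤ) ≤ (n:ℤ) := by exact_mod_cast hn
    have hDne : (a + U*b)*a - (-(V*b))*(-(c*b)) ≠ 0 := by
      have he : (a + U*b)*a - (-(V*b))*(-(c*b)) = (n:ℤ) := by linear_combination -hdet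
      rw [he]; omega
    obtain ⟨e1,e2,e3,e4,hbz⟩ := bez a b hab
    obtain ⟨x, y, X1, X2, X3, Y1, Y2, Y3, ⟨hG1a, hG1b⟩, hG2a, hG2b⟩ :=
      gen (a + U*b) (-(V*b)) (-(c*b)) a hDne ⟨e3, -e4, -e2, e1 - e3, by linear_combination hbz⟩
    -- casted integer facts
    have hdetC : (n:ℂ) = (a:ℂ)*((a:ℂ) + (U:ℂ)*(b:ℂ)) - ((c:ℂ)*(b:ℂ))*((V:ℂ)*(b:ℂ)) := by
      have := congrArg (fun t : ℤ => (t:ℂ)) hdet; push_cast at this; linear_combination this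
    have hsC2 : (n:ℂ)*(s:ℂ) = 2*(a:ℂ) + (U:ℂ)*(b:ℂ) := by
      have := congrArg (fun t : ℤ => (t:ℂ)) hs; push_cast at this; linear_combination -this
    have hG1aC : (1:ℂ) = (X1:ℂ)*(x:ℂ) + (X2:ℂ)*((a:ℂ)+(U:ℂ)*(b:ℂ)) - (X3:ℂ)*(V:ℂ)*(b:ℂ) := by
      have := congrArg (fun t : ℤ => (t:ℂ)) hG1a; push_cast at this; linear_combination this
    have hG1bC : (0:ℂ) = (X1:ℂ)*(y:ℂ) - (X2:ℂ)*(c:ℂ)*(b:ℂ) + (X3:ℂ)*(a:ℂ) := by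
      have := congrArg (fun t : ℤ => (t:ℂ)) hG1b; push_cast at this; linear_combination this
    have hG2aC : (0:ℂ) = (Y1:ℂ)*(x:ℂ) + (Y2:ℂ)*((a:ℂ)+(U:ℂ)*(b:ℂ)) - (Y3:ℂ)*(V:ℂ)*(b:ℂ) := by
      have := congrArg (fun t : ℤ => (t:ℂ)) hG2a; push_cast at this; linear_combination this
    have hG2bC : (1:ℂ) = (Y1:ℂ)*(y:ℂ) - (Y2:ℂ)*(c:ℂ)*(b:ℂ) + (Y3:ℂ)*(a:ℂ) := by
      have := congrArg (fun t : ℤ => (t:ℂ)) hG2b; push_cast at this; linear_combination this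
    -- complex objects
    set W : ℂ := (x:ℂ) + (y:ℂ)*τ with hW
    set αc : ℂ := (a:ℂ) + (c:ℂ)*(b:ℂ)*τ with hαdef
    set Ab : ℂ := (a:ℂ) + (U:ℂ)*(b:ℂ) - (c:ℂ)*(b:ℂ)*τ with hAbdef
    set g₀ : ℂ := αc*W/(n:ℂ) with hg₀
    set lam₀ : ℂ := αc/(n:ℂ) with hlam₀
    -- products
    have hαW : αc * W = ((a:ℂ)*(x:ℂ) + (b:ℂ)*(y:ℂ)*(V:ℂ))
        + ((a:ℂ)*(y:ℂ) + (b:ℂ)*(x:ℂ)*(c:ℂ) + (b:ℂ)*(y:ℂ)*(U:ℂ))*τ := by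
      rw [hαdef, hW]; linear_combination ((b:ℂ)*(y:ℂ))*hcτ2
    have hNα : Ab * αc = (n:ℂ) := by
      rw [hαdef, hAbdef]
      linear_combination (-(c:ℂ)*(b:ℂ)^2)*hcτ2 - hdetC
    have hαAb : αc * Ab = (n:ℂ) := by rw [mul_comm]; exact hNα
    have hαcτ : αc * τ = (V:ℂ)*(b:ℂ) + ((a:ℂ) + (U:ℂ)*(b:ℂ))*τ := by
      rw [hαdef]; linear_combination (b:ℂ)*hcτ2
    have hαnτ : αc * (-((V:ℂ)*(b:ℂ)) + (a:ℂ)*τ) = (n:ℂ)*τ := by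
      rw [hαdef]; linear_combination ((a:ℂ)*(b:ℂ))*hcτ2 - τ*hdetC
    have hα2 : αc * αc = (n:ℂ)*(s:ℂ)*αc - (n:ℂ) := by
      rw [hαdef]
      linear_combination ((c:ℂ)*(b:ℂ)^2)*hcτ2 + hdetC - ((a:ℂ) + (c:ℂ)*(b:ℂ)*τ)*hsC2
    have hsAb : (n:ℂ)*(s:ℂ) = Ab + αc := by
      rw [hαdef, hAbdef]; linear_combination hsC2
    -- generator identities
    have hg1C : (1:ℂ) = (X1:ℂ)*W + Ab*((X2:ℂ) + (X3:ℂ)*τ) := by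
      rw [hW, hAbdef]
      linear_combination hG1aC + τ*hG1bC + ((b:ℂ)*(X3:ℂ))*hcτ2
    have hg2C : τ = (Y1:ℂ)*W + Ab*((Y2:ℂ) + (Y3:ℂ)*τ) := by
      rw [hW, hAbdef]
      linear_combination hG2aC + τ*hG2bC + ((b:ℂ)*(Y3:ℂ))*hcτ2
    have hng : (n:ℂ)*g₀ = αc*W := by
      rw [hg₀]; field_simp
    have hαg : αc*g₀ = (s:ℂ)*(αc*W) - W := by
      rw [hg₀, show αc*(αc*W/(n:ℂ)) = (αc*αc)*W/(n:ℂ) from by ring, hα2]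
      field_simp
    refine ⟨g₀, lam₀, ⟨⟨a*x + b*y*V, a*y + b*x*c + b*y*U, by
      rw [hng, hαW]; push_cast; ring⟩, ?_⟩, ?_, ?_⟩
    · -- order exactly n
      rintro m hm0 hmn ⟨M, K, hMK⟩
      have h1 : (m:ℂ)*(αc*W) = (n:ℂ)*((M:ℂ) + (K:ℂ)*τ) := by
        rw [← hng, ← hMK]; ring
      have h2 : (n:ℂ)*((m:ℂ)*W) = (n:ℂ)*(Ab*((M:ℂ) + (K:ℂ)*τ)) := by
        calc (n:ℂ)*((m:ℂ)*W) = (m:ℂ)*((Ab*αc)*W) := by rw [hNα]; ring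
        _ = Ab*((m:ℂ)*(αc*W)) := by ring
        _ = Ab*((n:ℂ)*((M:ℂ) + (K:ℂ)*τ)) := by rw [h1]
        _ = (n:ℂ)*(Ab*((M:ℂ) + (K:ℂ)*τ)) := by ring
      have h3 : (m:ℂ)*W = Ab*((M:ℂ) + (K:ℂ)*τ) := mul_left_cancel₀ hn0 h2
      have hAbMK : Ab*((M:ℂ) + (K:ℂ)*τ)
          = (((a:ℂ)+(U:ℂ)*(b:ℂ))*(M:ℂ) - (b:ℂ)*(K:ℂ)*(V:ℂ))
            + (((a:ℂ)+(U:ℂ)*(b:ℂ))*(K:ℂ) - (c:ℂ)*(b:ℂ)*(M:ℂ) - (b:ℂ)*(K:ℂ)*(U:ℂ))*τ := by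
        rw [hAbdef]; linear_combination (-(b:ℂ)*(K:ℂ))*hcτ2
      have h4 : (((m:ℤ)*x : ℤ):ℂ) + (((m:ℤ)*y : ℤ):ℂ)*τ
          = (((a+U*b)*M - b*K*V : ℤ):ℂ) + (((a+U*b)*K - c*b*M - b*K*U : ℤ):ℂ)*τ := by
        push_cast
        linear_combination h3 + hAbMK - (m:ℂ)*hW
      obtain ⟨E1, E2⟩ := hLI2 _ _ _ _ h4
      -- integer divisibilities
      have eqA : (X1*M + (m:ℤ)*X2)*(a + U*b) - (X1*K + (m:ℤ)*X3)*(V*b) = (m:ℤ) := by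
        linear_combination -(X1*E1) - (m:ℤ)*hG1a
      have eqB : -((X1*M + (m:ℤ)*X2)*(c*b)) + (X1*K + (m:ℤ)*X3)*a = 0 := by
        linear_combination -(X1*E2) - (m:ℤ)*hG1b
      have eqC : (Y1*M + (m:ℤ)*Y2)*(a + U*b) - (Y1*K + (m:ℤ)*Y3)*(V*b) = 0 := by
        linear_combination -(Y1*E1) - (m:ℤ)*hG2a
      have eqD : -((Y1*M + (m:ℤ)*Y2)*(c*b)) + (Y1*K + (m:ℤ)*Y3)*a = (m:ℤ) := by
        linear_combination -(Y1*E2) - (m:ℤ)*hG2b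
      have hd1 : (n:ℤ) ∣ (m:ℤ)*a := ⟨X1*M + (m:ℤ)*X2, by
        linear_combination -(a*eqA) - (V*b)*eqB - (X1*M + (m:ℤ)*X2)*hdet⟩
      have hd2 : (n:ℤ) ∣ (m:ℤ)*(c*b) := ⟨X1*K + (m:ℤ)*X3, by
        linear_combination -((c*b)*eqA) - (a + U*b)*eqB - (X1*K + (m:ℤ)*X3)*hdet⟩
      have hd4 : (n:ℤ) ∣ (m:ℤ)*(V*b) := ⟨Y1*M + (m:ℤ)*Y2, by
        linear_combination -((V*b)*eqD) - a*eqC - (Y1*M + (m:ℤ)*Y2)*hdet⟩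
      have hdapU : (n:ℤ) ∣ (m:ℤ)*(a + U*b) := ⟨Y1*K + (m:ℤ)*Y3, by
        linear_combination -((a+U*b)*eqD) - (c*b)*eqC - (Y1*K + (m:ℤ)*Y3)*hdet⟩
      have hd3 : (n:ℤ) ∣ (m:ℤ)*(U*b) := by
        have heq : (m:ℤ)*(U*b) = (m:ℤ)*(a + U*b) - (m:ℤ)*a := by ring
        rw [heq]; exact dvd_sub hdapU hd1
      have := dvd4 a b (m:ℤ) hab hd1 hd2 hd3 hd4
      have hle : (n:ℤ) ≤ (m:ℤ) := Int.le_of_dvd (by exact_mod_cast hm0) this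
      omega
    · -- lam₀ '' latt = lattAdj
      ext z
      constructor
      · rintro ⟨w1, ⟨m, k, rfl⟩, rfl⟩
        refine ⟨m*X2 + k*Y2, m*X3 + k*Y3, m*X1 + k*Y1, ?_⟩
        show lam₀ * ((m:ℂ) + (k:ℂ)*τ) = _
        apply mul_left_cancel₀ hn0
        have hL : (n:ℂ)*(lam₀*((m:ℂ)+(k:ℂ)*τ)) = αc*((m:ℂ)+(k:ℂ)*τ) := by
          rw [hlam₀]; field_simp
        have hR : (n:ℂ)*(((m*X2 + k*Y2 : ℤ):ℂ) + ((m*X3 + k*Y3 : ℤ):ℂ)*τ + ((m*X1 + k*Y1 : ℤ):ℂ)*g₀)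
            = (n:ℂ)*(((m*X2 + k*Y2 : ℤ):ℂ) + ((m*X3 + k*Y3 : ℤ):ℂ)*τ) + ((m*X1 + k*Y1 : ℤ):ℂ)*(αc*W) := by
          rw [← hng]; ring
        rw [hL, hR]
        push_cast
        linear_combination (αc*(m:ℂ))*hg1C + (αc*(k:ℂ))*hg2C
          + ((m:ℂ)*(X2:ℂ) + (k:ℂ)*(Y2:ℂ) + ((m:ℂ)*(X3:ℂ) + (k:ℂ)*(Y3:ℂ))*τ)*hNα
      · rintro ⟨m, k, l, rfl⟩
        refine ⟨((m*(a+U*b) - k*(V*b) + l*x : ℤ):ℂ) + ((-(m*(c*b)) + k*a + l*y : ℤ):ℂ)*τ,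
          ⟨m*(a+U*b) - k*(V*b) + l*x, -(m*(c*b)) + k*a + l*y, rfl⟩, ?_⟩
        show lam₀ * _ = _
        apply mul_left_cancel₀ hn0
        have hL : (n:ℂ)*(lam₀*(((m*(a+U*b) - k*(V*b) + l*x : ℤ):ℂ) + ((-(m*(c*b)) + k*a + l*y : ℤ):ℂ)*τ))
            = αc*(((m*(a+U*b) - k*(V*b) + l*x : ℤ):ℂ) + ((-(m*(c*b)) + k*a + l*y : ℤ):ℂ)*τ) := by
          rw [hlam₀]; field_simp
        have hR : (n:ℂ)*((m:ℂ) + (k:ℂ)*τ + (l:ℂ)*g₀)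
            = (n:ℂ)*((m:ℂ) + (k:ℂ)*τ) + (l:ℂ)*(αc*W) := by
          rw [← hng]; ring
        rw [hL, hR]
        push_cast
        linear_combination (m:ℂ)*hNα + (k:ℂ)*hαnτ + (l:ℂ)*hαW
          + ((m:ℂ)*((U:ℂ)*(b:ℂ) - (c:ℂ)*(b:ℂ)*τ) - (k:ℂ)*(V:ℂ)*(b:ℂ) + (l:ℂ)*(x:ℂ)
            + ((-((m:ℂ)*(c:ℂ)*(b:ℂ)) + (k:ℂ)*(a:ℂ) + (l:ℂ)*(y:ℂ)))*τ)*hαdef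
          - ((b:ℂ)*(l:ℂ)*(y:ℂ))*hcτ2
    · -- lam₀ '' lattAdj = (·/n) '' latt
      ext z
      constructor
      · rintro ⟨w1, ⟨m, k, l, rfl⟩, rfl⟩
        refine ⟨((a*m + V*b*k + l*(s*(a*x + b*y*V) - x) : ℤ):ℂ)
            + ((a*k + c*b*m + U*b*k + l*(s*(a*y + b*x*c + b*y*U) - y) : ℤ):ℂ)*τ,
          ⟨a*m + V*b*k + l*(s*(a*x + b*y*V) - x), a*k + c*b*m + U*b*k + l*(s*(a*y + b*x*c + b*y*U) - y), rfl⟩, ?_⟩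
        show _ / (n:ℂ) = lam₀ * _
        apply mul_left_cancel₀ hn0
        have hL : (n:ℂ)*((((a*m + V*b*k + l*(s*(a*x + b*y*V) - x) : ℤ):ℂ)
              + ((a*k + c*b*m + U*b*k + l*(s*(a*y + b*x*c + b*y*U) - y) : ℤ):ℂ)*τ) / (n:ℂ))
            = ((a*m + V*b*k + l*(s*(a*x + b*y*V) - x) : ℤ):ℂ)
              + ((a*k + c*b*m + U*b*k + l*(s*(a*y + b*x*c + b*y*U) - y) : ℤ):ℂ)*τ := by
          field_simp
        have hR : (n:ℂ)*(lam₀*((m:ℂ) + (k:ℂ)*τ + (l:ℂ)*g₀))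
            = αc*((m:ℂ) + (k:ℂ)*τ) + (l:ℂ)*((s:ℂ)*(αc*W) - W) := by
          rw [hlam₀, ← hαg]; field_simp
        rw [hL, hR]
        push_cast
        linear_combination -((m:ℂ)*hαdef) - (k:ℂ)*hαcτ - ((l:ℂ)*(s:ℂ))*hαW + (l:ℂ)*hW
      · rintro ⟨w1, ⟨m, k, rfl⟩, rfl⟩
        refine ⟨((m*(s - X2) - k*Y2 : ℤ):ℂ) + ((-(m*X3) + k*(s - Y3) : ℤ):ℂ)*τ + ((-(m*X1) - k*Y1 : ℤ):ℂ)*g₀,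
          ⟨m*(s - X2) - k*Y2, -(m*X3) + k*(s - Y3), -(m*X1) - k*Y1, rfl⟩, ?_⟩
        show lam₀ * _ = _ / (n:ℂ)
        apply mul_left_cancel₀ hn0
        have hL : (n:ℂ)*(lam₀*(((m*(s - X2) - k*Y2 : ℤ):ℂ) + ((-(m*X3) + k*(s - Y3) : ℤ):ℂ)*τ + ((-(m*X1) - k*Y1 : ℤ):ℂ)*g₀))
            = αc*(((m*(s - X2) - k*Y2 : ℤ):ℂ) + ((-(m*X3) + k*(s - Y3) : ℤ):ℂ)*τ)
              + ((-(m*X1) - k*Y1 : ℤ):ℂ)*((s:ℂ)*(αc*W) - W) := by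
          rw [hlam₀, ← hαg]; field_simp
        have hR : (n:ℂ)*(((m:ℂ) + (k:ℂ)*τ)/(n:ℂ)) = (m:ℂ) + (k:ℂ)*τ := by field_simp
        rw [hL, hR]
        have e1 : (m:ℂ) + (k:ℂ)*τ = ((m:ℂ)*(X1:ℂ) + (k:ℂ)*(Y1:ℂ))*W
            + Ab*(((m:ℂ)*(X2:ℂ) + (k:ℂ)*(Y2:ℂ)) + ((m:ℂ)*(X3:ℂ) + (k:ℂ)*(Y3:ℂ))*τ) := by
          linear_combination (m:ℂ)*hg1C + (k:ℂ)*hg2C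
        push_cast
        linear_combination (((s:ℂ)*αc - 1)*e1)
          + (((m:ℂ)*(X2:ℂ) + (k:ℂ)*(Y2:ℂ)) + ((m:ℂ)*(X3:ℂ) + (k:ℂ)*(Y3:ℂ))*τ)*hsAb
          + ((s:ℂ)*(((m:ℂ)*(X2:ℂ) + (k:ℂ)*(Y2:ℂ)) + ((m:ℂ)*(X3:ℂ) + (k:ℂ)*(Y3:ℂ))*τ))*hαAb
end
end

section
/- Let τ ∈ ℂ with Im τ > 0, let L_τ = {m + k·τ : m, k ∈ ℤ}, let n ≥ 1 be an integer, and let a, b, A, B be integers with (a + b·τ)·τ = A + B·τ and a·B − b·A = n. Set λ = (a + b·τ)/n and M = [[a, A],[b, B]]. Then n·λ²·L_τ = L_τ if and only if every entry of M² is divisible by n. -/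
noncomputable section

theorem stmt_9 (τ : ℂ) (hτ : 0 < τ.im) (n : ℕ) (hn : 1 ≤ n) (a b A B : ℤ)
    (hquad : ((a : ℂ) + (b : ℂ) * τ) * τ = (A : ℂ) + (B : ℂ) * τ)
    (hdet : a * B - b * A = (n : ℤ)) :
    ((fun x => (n : ℂ) * (((a : ℂ) + (b : ℂ) * τ) / (n : ℂ)) ^ 2 * x) '' latt τ = latt τ) ↔
    (∀ i j : Fin 2,
      (n : ℤ) ∣ ((!![a, A; b, B] : Matrix (Fin 2) (Fin 2) ℤ) * !![a, A; b, B]) i j) := by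
  have hnZ : (n : ℤ) ≠ 0 := by exact_mod_cast (by omega : n ≠ 0)
  have hnC : (n : ℂ) ≠ 0 := by exact_mod_cast Nat.cast_ne_zero.mpr (by omega)
  have ind : ∀ x y : ℤ, (x : ℂ) + (y : ℂ) * τ = 0 → x = 0 ∧ y = 0 := by
    intro x y h
    have him := congrArg Complex.im h
    simp [Complex.add_im, Complex.mul_im] at him
    have hy0 : y = 0 := him.resolve_right hτ.ne'
    subst hy0
    simp at h
    exact ⟨by exact_mod_cast h, rfl⟩
  set p : ℤ := a * a + A * b with hp_def
  set q : ℤ := a * A + A * B with hq_def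
  set r : ℤ := b * a + B * b with hr_def
  set s : ℤ := b * A + B * B with hs_def
  have hμ2 : ((a : ℂ) + (b : ℂ) * τ) ^ 2 = (p : ℂ) + (r : ℂ) * τ := by
    push_cast [hp_def, hr_def]
    linear_combination (b : ℂ) * hquad
  have hμ2τ : ((a : ℂ) + (b : ℂ) * τ) ^ 2 * τ = (q : ℂ) + (s : ℂ) * τ := by
    push_cast [hq_def, hs_def]
    linear_combination ((a : ℂ) + (b : ℂ) * τ + (B : ℂ)) * hquad
  have hdet2 : p * s - q * r = (n : ℤ) ^ 2 := by
    simp only [hp_def, hq_def, hr_def, hs_def]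
    linear_combination (a * B - b * A + (n : ℤ)) * hdet
  have entries : ∀ i j : Fin 2,
      ((!![a, A; b, B] : Matrix (Fin 2) (Fin 2) ℤ) * !![a, A; b, B]) i j
        = !![p, q; r, s] i j := by
    intro i j
    fin_cases i <;> fin_cases j <;>
      simp [Matrix.mul_apply, Fin.sum_univ_two, hp_def, hq_def, hr_def, hs_def]
  constructor
  · intro h
    have mem1 : ((n : ℂ) * (((a : ℂ) + (b : ℂ) * τ) / (n : ℂ)) ^ 2 * 1) ∈ latt τ := by
      rw [← h]
      exact ⟨1, ⟨1, 0, by push_cast; ring⟩, rfl⟩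
    have memτ : ((n : ℂ) * (((a : ℂ) + (b : ℂ) * τ) / (n : ℂ)) ^ 2 * τ) ∈ latt τ := by
      rw [← h]
      exact ⟨τ, ⟨0, 1, by push_cast; ring⟩, rfl⟩
    obtain ⟨m1, k1, hm1⟩ := mem1
    obtain ⟨m2, k2, hm2⟩ := memτ
    have hm1' : ((a : ℂ) + (b : ℂ) * τ) ^ 2 = ((m1 : ℂ) + (k1 : ℂ) * τ) * (n : ℂ) := by
      field_simp at hm1
      exact mul_left_cancel₀ hnC (by linear_combination (n : ℂ) * hm1)
    have hm2' : ((a : ℂ) + (b : ℂ) * τ) ^ 2 * τ = ((m2 : ℂ) + (k2 : ℂ) * τ) * (n : ℂ) := by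
      field_simp at hm2
      exact mul_left_cancel₀ hnC (by linear_combination (n : ℂ) * hm2)
    have e1 : ((p - n * m1 : ℤ) : ℂ) + ((r - n * k1 : ℤ) : ℂ) * τ = 0 := by
      push_cast
      linear_combination hm1' - hμ2
    have e2 : ((q - n * m2 : ℤ) : ℂ) + ((s - n * k2 : ℤ) : ℂ) * τ = 0 := by
      push_cast
      linear_combination hm2' - hμ2τ
    obtain ⟨ep, er⟩ := ind _ _ e1
    obtain ⟨eq', es⟩ := ind _ _ e2
    intro i j
    rw [entries i j]
    fin_cases i <;> fin_cases j <;> simp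
    · exact ⟨m1, by linarith⟩
    · exact ⟨m2, by linarith⟩
    · exact ⟨k1, by linarith⟩
    · exact ⟨k2, by linarith⟩
  · intro hdvd
    obtain ⟨p', hp'⟩ : (n : ℤ) ∣ p := by
      have := hdvd 0 0; rw [entries 0 0] at this; simpa using this
    obtain ⟨q', hq'⟩ : (n : ℤ) ∣ q := by
      have := hdvd 0 1; rw [entries 0 1] at this; simpa using this
    obtain ⟨r', hr'⟩ : (n : ℤ) ∣ r := by
      have := hdvd 1 0; rw [entries 1 0] at this; simpa using this
    obtain ⟨s', hs'⟩ : (n : ℤ) ∣ s := by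
      have := hdvd 1 1; rw [entries 1 1] at this; simpa using this
    have hdet1 : p' * s' - q' * r' = 1 := by
      have h2 : (n : ℤ) * (n : ℤ) * (p' * s' - q' * r') = (n : ℤ) * (n : ℤ) * 1 := by
        linear_combination hdet2 - s' * n * hp' - p * hs' + r' * n * hq' + q * hr'
      exact mul_left_cancel₀ (mul_ne_zero hnZ hnZ) h2
    have hpC : (p : ℂ) = (n : ℂ) * (p' : ℂ) := by exact_mod_cast congrArg (Int.cast : ℤ → ℂ) hp'
    have hqC : (q : ℂ) = (n : ℂ) * (q' : ℂ) := by exact_mod_cast congrArg (Int.cast : ℤ → ℂ) hq'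
    have hrC : (r : ℂ) = (n : ℂ) * (r' : ℂ) := by exact_mod_cast congrArg (Int.cast : ℤ → ℂ) hr'
    have hsC : (s : ℂ) = (n : ℂ) * (s' : ℂ) := by exact_mod_cast congrArg (Int.cast : ℤ → ℂ) hs'
    have hdC : (p' : ℂ) * (s' : ℂ) - (q' : ℂ) * (r' : ℂ) = 1 := by exact_mod_cast congrArg (Int.cast : ℤ → ℂ) hdet1
    ext z
    constructor
    · rintro ⟨w, ⟨m, k, rfl⟩, rfl⟩
      refine ⟨m * p' + k * q', m * r' + k * s', ?_⟩
      push_cast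
      field_simp
      linear_combination ((m : ℂ)) * hμ2 + ((k : ℂ)) * hμ2τ +
        ((m : ℂ)) * hpC + ((k : ℂ)) * hqC +
        ((m : ℂ) * τ) * hrC + ((k : ℂ) * τ) * hsC
    · rintro ⟨m, k, rfl⟩
      refine ⟨((m * s' - k * q' : ℤ) : ℂ) + ((-(m * r') + k * p' : ℤ) : ℂ) * τ,
        ⟨m * s' - k * q', -(m * r') + k * p', rfl⟩, ?_⟩
      push_cast
      have hμ2' : ((a : ℂ) + (b : ℂ) * τ) ^ 2 = (n : ℂ) * ((p' : ℂ) + (r' : ℂ) * τ) := by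
        rw [hμ2, hpC, hrC]; ring
      have hμ2τ' : ((a : ℂ) + (b : ℂ) * τ) ^ 2 * τ = (n : ℂ) * ((q' : ℂ) + (s' : ℂ) * τ) := by
        rw [hμ2τ, hqC, hsC]; ring
      field_simp
      linear_combination ((m : ℂ) * (s' : ℂ) - (k : ℂ) * (q' : ℂ)) * hμ2' +
        (-((m : ℂ) * (r' : ℂ)) + (k : ℂ) * (p' : ℂ)) * hμ2τ' +
        ((m : ℂ) + (k : ℂ) * τ) * (n : ℂ) * hdC
end
end

section
/- Let u, v ∈ ℚ with Δ = u² + 4v < 0, written u = u₁/u₂ and v = v₁/v₂ in lowest terms with u₂, v₂ > 0, and let d = gcd(u₂, v₂). Let n ≥ 2 be an integer and suppose there exist integers a, b' with gcd(a, b') = 1 such that n = a·(a + (u₁v₂/d)·b') − ((u₂v₂/d)·b')·((u₂v₁/d)·b') and n divides 2a + (u₁v₂/d)·b'. Then n = 2, or n = 3, or (n : ℚ) = −u₂²v₂²·Δ/(4d²), or (n : ℚ) = −u₂²v₂²·Δ/d². -/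
noncomputable section

set_option maxHeartbeats 1000000 in
theorem stmt_10 (u v : ℚ) (u₁ u₂ v₁ v₂ : ℤ) (hu₂ : 0 < u₂) (hv₂ : 0 < v₂)
    (hu : u = (u₁ : ℚ) / (u₂ : ℚ)) (hv : v = (v₁ : ℚ) / (v₂ : ℚ))
    (hcu : Int.gcd u₁ u₂ = 1) (hcv : Int.gcd v₁ v₂ = 1)
    (d : ℤ) (hd : d = Int.gcd u₂ v₂)
    (hΔ : u ^ 2 + 4 * v < 0)
    (n : ℕ) (hn : 2 ≤ n)
    (h : ∃ a b' : ℤ, Int.gcd a b' = 1 ∧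
        (n : ℤ) = a * (a + u₁ * v₂ / d * b') - (u₂ * v₂ / d * b') * (u₂ * v₁ / d * b') ∧
        (n : ℤ) ∣ 2 * a + u₁ * v₂ / d * b') :
    n = 2 ∨ n = 3 ∨
      (n : ℚ) = -((u₂ : ℚ) ^ 2 * (v₂ : ℚ) ^ 2 * (u ^ 2 + 4 * v)) / (4 * (d : ℚ) ^ 2) ∨
      (n : ℚ) = -((u₂ : ℚ) ^ 2 * (v₂ : ℚ) ^ 2 * (u ^ 2 + 4 * v)) / (d : ℚ) ^ 2 := by
  obtain ⟨a, b, hg, he, hdvd⟩ := h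
  have hu₂' : u₂ ≠ 0 := hu₂.ne'
  have hv₂' : v₂ ≠ 0 := hv₂.ne'
  have hdpos : 0 < d := by
    rw [hd]
    have : Int.gcd u₂ v₂ ≠ 0 := by
      simp only [ne_eq, Int.gcd_eq_zero_iff, not_and_or]
      exact Or.inl hu₂'
    exact_mod_cast Nat.pos_of_ne_zero this
  have hd0 : d ≠ 0 := hdpos.ne'
  have hdu : d ∣ u₂ := hd ▸ Int.gcd_dvd_left u₂ v₂
  have hdv : d ∣ v₂ := hd ▸ Int.gcd_dvd_right u₂ v₂
  obtain ⟨m, hm⟩ := hdu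
  obtain ⟨k, hk⟩ := hdv
  have e1 : u₁ * v₂ / d = u₁ * k := by
    rw [hk, show u₁ * (d * k) = d * (u₁ * k) by ring, Int.mul_ediv_cancel_left _ hd0]
  have e2 : u₂ * v₂ / d = u₂ * k := by
    rw [hk, show u₂ * (d * k) = d * (u₂ * k) by ring, Int.mul_ediv_cancel_left _ hd0]
  have e3 : u₂ * v₁ / d = m * v₁ := by
    rw [hm, show d * m * v₁ = d * (m * v₁) by ring, Int.mul_ediv_cancel_left _ hd0]
  rw [e1, e2, e3] at he
  rw [e1] at hdvd
  obtain ⟨D, hD⟩ : ∃ D : ℤ, D = (u₁ * k) ^ 2 + 4 * ((u₂ * k) * (m * v₁)) := ⟨_, rfl⟩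
  have key : 4 * (n : ℤ) = (2 * a + u₁ * k * b) ^ 2 - D * b ^ 2 := by
    rw [hD]; linear_combination 4 * he
  have hu₂Q : (u₂ : ℚ) ≠ 0 := Int.cast_ne_zero.mpr hu₂'
  have hv₂Q : (v₂ : ℚ) ≠ 0 := Int.cast_ne_zero.mpr hv₂'
  have hdQ : (d : ℚ) ≠ 0 := Int.cast_ne_zero.mpr hd0
  have hAq : (D : ℚ) * (d : ℚ) ^ 2 = (u₂ : ℚ) ^ 2 * (v₂ : ℚ) ^ 2 * (u ^ 2 + 4 * v) := by
    subst hm hk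
    rw [hu, hv, hD]
    have hdm : ((d : ℚ) * (m : ℚ)) ≠ 0 := by
      have : ((d * m : ℤ) : ℚ) ≠ 0 := Int.cast_ne_zero.mpr hu₂'
      push_cast at this; exact this
    have hdk : ((d : ℚ) * (k : ℚ)) ≠ 0 := by
      have : ((d * k : ℤ) : ℚ) ≠ 0 := Int.cast_ne_zero.mpr hv₂'
      push_cast at this; exact this
    have hm0 : (m : ℚ) ≠ 0 := right_ne_zero_of_mul hdm
    have hk0 : (k : ℚ) ≠ 0 := right_ne_zero_of_mul hdk
    push_cast
    field_simp
  have hRHSneg : (u₂ : ℚ) ^ 2 * (v₂ : ℚ) ^ 2 * (u ^ 2 + 4 * v) < 0 := by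
    have h1 : (0:ℚ) < (u₂ : ℚ) ^ 2 * (v₂ : ℚ) ^ 2 := by positivity
    nlinarith
  have hDneg : D < 0 := by
    have hq : (D : ℚ) < 0 := by
      have h2 : (0:ℚ) < (d:ℚ)^2 := by positivity
      nlinarith [hAq]
    exact_mod_cast hq
  rcases eq_or_ne b 0 with hb | hb
  · exfalso
    subst hb
    simp [Int.gcd] at hg
    have ha : a = 1 ∨ a = -1 := Int.natAbs_eq_iff.mp hg |>.imp id id
    have : (n : ℤ) = 1 := by rcases ha with rfl | rfl <;> simpa using he
    omega
  · rcases eq_or_ne (2 * a + u₁ * k * b) 0 with ht | ht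
    · have hba : b ∣ 2 * a := ⟨-(u₁ * k), by linear_combination ht⟩
      have hb2 : b ∣ 2 := by
        have hco : IsCoprime b a := by
          rw [Int.isCoprime_iff_gcd_eq_one, Int.gcd_comm]; exact hg
        exact hco.dvd_of_dvd_mul_right hba
      have h2 : b ≤ 2 := Int.le_of_dvd (by norm_num) hb2
      have h1 : -b ≤ 2 := Int.le_of_dvd (by norm_num) ((neg_dvd).mpr hb2)
      have h1' : -2 ≤ b := by linarith
      have hb4 : b ^ 2 = 1 ∨ b ^ 2 = 4 := by
        interval_cases b <;> revert hb <;> norm_num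
      have keyt : 4 * (n : ℤ) = -D * b ^ 2 := by
        rw [key, ht]; ring
      rcases hb4 with hb4 | hb4
      · right; right; left
        rw [← hAq]
        have hz : 4 * (n : ℤ) = -D := by rw [keyt, hb4]; ring
        have hzq : 4 * (n : ℚ) = -(D : ℚ) := by exact_mod_cast hz
        rw [eq_div_iff (by positivity)]
        linear_combination (d:ℚ)^2 * hzq
      · right; right; right
        rw [← hAq]
        have hz : 4 * (n : ℤ) = -D * 4 := by rw [keyt, hb4]
        have hz' : (n : ℤ) = -D := by linarith
        have hzq : (n : ℚ) = -(D : ℚ) := by exact_mod_cast hz'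
        rw [eq_div_iff (by positivity)]
        linear_combination (d:ℚ)^2 * hzq
    · obtain ⟨s, hs⟩ := hdvd
      have hs0 : s ≠ 0 := by
        intro h0; apply ht; rw [hs, h0, mul_zero]
      have hs1 : 1 ≤ s ^ 2 := by
        have := Int.one_le_abs (by simpa using hs0)
        nlinarith [sq_abs s]
      have hb1 : 1 ≤ b ^ 2 := by
        have := Int.one_le_abs (by simpa using hb)
        nlinarith [sq_abs b]
      have hn2 : (2 : ℤ) ≤ (n : ℤ) := by exact_mod_cast hn
      have ht2 : (n : ℤ) ^ 2 ≤ (2 * a + u₁ * k * b) ^ 2 := by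
        rw [hs, mul_pow]
        calc (n : ℤ) ^ 2 = (n : ℤ) ^ 2 * 1 := by ring
          _ ≤ (n : ℤ) ^ 2 * s ^ 2 := mul_le_mul_of_nonneg_left hs1 (sq_nonneg _)
      have hDb : 1 ≤ (-D) * b ^ 2 := by
        have hD1 : (1:ℤ) ≤ -D := by linarith
        have := mul_le_mul hD1 hb1 (by norm_num) (by linarith)
        linarith
      have h4 : (n : ℤ) ^ 2 + 1 ≤ 4 * (n : ℤ) := by
        have hrw : (2 * a + u₁ * k * b) ^ 2 - D * b ^ 2
            = (2 * a + u₁ * k * b) ^ 2 + (-D) * b ^ 2 := by ring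
        rw [hrw] at key
        linarith
      have hle : (n : ℤ) ≤ 3 := by nlinarith [h4, hn2]
      have : n = 2 ∨ n = 3 := by omega
      tauto
end
end

section
/- Let u, v ∈ ℚ with Δ = u² + 4v < 0, written u = u₁/u₂ and v = v₁/v₂ in lowest terms with u₂, v₂ > 0, and let d = gcd(u₂, v₂). Then there exist an integer n and integers a, b' with gcd(a, b') = 1 such that (n : ℚ) = −u₂²v₂²·Δ/(4d²), n = a·(a + (u₁v₂/d)·b') − ((u₂v₂/d)·b')·((u₂v₁/d)·b'), and n divides 2a + (u₁v₂/d)·b', if and only if 2d divides u₁v₂. Moreover, when 2d divides u₁v₂, this is realized by b' = ±1 and a = −(u₁v₂/(2d))·b'. -/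
noncomputable section

theorem stmt_11 (u v : ℚ) (u₁ u₂ v₁ v₂ : ℤ) (hu₂ : 0 < u₂) (hv₂ : 0 < v₂)
    (hu : u = (u₁ : ℚ) / (u₂ : ℚ)) (hv : v = (v₁ : ℚ) / (v₂ : ℚ))
    (hcu : Int.gcd u₁ u₂ = 1) (hcv : Int.gcd v₁ v₂ = 1)
    (d : ℤ) (hd : d = Int.gcd u₂ v₂)
    (hΔ : u ^ 2 + 4 * v < 0) :
    ((∃ n a b' : ℤ, Int.gcd a b' = 1 ∧
        (n : ℚ) = -((u₂ : ℚ) ^ 2 * (v₂ : ℚ) ^ 2 * (u ^ 2 + 4 * v)) / (4 * (d : ℚ) ^ 2) ∧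
        n = a * (a + u₁ * v₂ / d * b') - (u₂ * v₂ / d * b') * (u₂ * v₁ / d * b') ∧
        n ∣ 2 * a + u₁ * v₂ / d * b') ↔
      2 * d ∣ u₁ * v₂) ∧
    (2 * d ∣ u₁ * v₂ → ∀ b' : ℤ, (b' = 1 ∨ b' = -1) → ∀ a : ℤ,
      (a : ℚ) = -((u₁ : ℚ) * (v₂ : ℚ) / (2 * (d : ℚ))) * (b' : ℚ) →
      Int.gcd a b' = 1 ∧
      ((a * (a + u₁ * v₂ / d * b') - (u₂ * v₂ / d * b') * (u₂ * v₁ / d * b') : ℤ) : ℚ) =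
        -((u₂ : ℚ) ^ 2 * (v₂ : ℚ) ^ 2 * (u ^ 2 + 4 * v)) / (4 * (d : ℚ) ^ 2) ∧
      (a * (a + u₁ * v₂ / d * b') - (u₂ * v₂ / d * b') * (u₂ * v₁ / d * b')) ∣
        2 * a + u₁ * v₂ / d * b') := by
  have hdpos : 0 < d := by
    rw [hd]
    exact_mod_cast Int.gcd_pos_of_ne_zero_left v₂ hu₂.ne'
  have hd0 : d ≠ 0 := hdpos.ne'
  have hdu : d ∣ u₂ := hd ▸ Int.gcd_dvd_left u₂ v₂
  have hdv : d ∣ v₂ := hd ▸ Int.gcd_dvd_right u₂ v₂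
  set p : ℤ := u₁ * v₂ / d with hp
  set q : ℤ := u₂ * v₂ / d with hq
  set r : ℤ := u₂ * v₁ / d with hr
  have hP : d * p = u₁ * v₂ := Int.mul_ediv_cancel' (Dvd.dvd.mul_left hdv u₁)
  have hQ : d * q = u₂ * v₂ := Int.mul_ediv_cancel' (Dvd.dvd.mul_right hdu v₂)
  have hR : d * r = u₂ * v₁ := Int.mul_ediv_cancel' (Dvd.dvd.mul_right hdu v₁)
  have hu₂0 : (u₂ : ℚ) ≠ 0 := by exact_mod_cast hu₂.ne'
  have hv₂0 : (v₂ : ℚ) ≠ 0 := by exact_mod_cast hv₂.ne'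
  have hdQ : (d : ℚ) ≠ 0 := by exact_mod_cast hd0
  have hZ : d ^ 2 * (p ^ 2 + 4 * q * r) = (u₁ * v₂) ^ 2 + 4 * (u₂ * v₂) * (u₂ * v₁) := by
    linear_combination (d * p + u₁ * v₂) * hP + (4 * d * r) * hQ + (4 * u₂ * v₂) * hR
  have hZQ : ((d : ℚ)) ^ 2 * ((p : ℚ) ^ 2 + 4 * (q : ℚ) * (r : ℚ)) =
      ((u₁ : ℚ) * v₂) ^ 2 + 4 * ((u₂ : ℚ) * v₂) * ((u₂ : ℚ) * v₁) := by exact_mod_cast hZ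
  have hmain : -((u₂ : ℚ) ^ 2 * (v₂ : ℚ) ^ 2 * (u ^ 2 + 4 * v)) / (4 * (d : ℚ) ^ 2) =
      ((-(p ^ 2 + 4 * q * r) : ℤ) : ℚ) / 4 := by
    subst hu hv
    push_cast
    field_simp
    linear_combination hZQ
  have key : ∀ n : ℤ,
      ((n : ℚ) = -((u₂ : ℚ) ^ 2 * (v₂ : ℚ) ^ 2 * (u ^ 2 + 4 * v)) / (4 * (d : ℚ) ^ 2)) ↔
      4 * n = -(p ^ 2 + 4 * q * r) := by
    intro n
    rw [hmain, eq_div_iff (by norm_num : (4 : ℚ) ≠ 0)]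
    constructor
    · intro h
      have h2 : ((4 * n : ℤ) : ℚ) = ((-(p ^ 2 + 4 * q * r) : ℤ) : ℚ) := by
        push_cast at h ⊢; linarith
      exact_mod_cast h2
    · intro h
      have h2 : ((4 * n : ℤ) : ℚ) = ((-(p ^ 2 + 4 * q * r) : ℤ) : ℚ) := by exact_mod_cast h
      push_cast at h2 ⊢
      linarith
  constructor
  · constructor
    · rintro ⟨n, a, b', hg, hn, hqf, hdvd⟩
      have h4 : 4 * n = -(p ^ 2 + 4 * q * r) := (key n).1 hn
      have heven : Even p := by
        have h2 : Even (p ^ 2) := ⟨-2 * n - 2 * q * r, by linarith⟩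
        rwa [Int.even_pow' (by norm_num)] at h2
      obtain ⟨k, hk⟩ := heven
      exact ⟨k, by rw [← hP, hk]; ring⟩
    · rintro ⟨m, hm⟩
      have hpm : p = 2 * m := by
        have h2 : d * p = d * (2 * m) := by rw [hP, hm]; ring
        exact mul_left_cancel₀ hd0 h2
      refine ⟨-(m ^ 2 + q * r), -m, 1, by simp, ?_, ?_, ?_⟩
      · exact (key _).2 (by rw [hpm]; ring)
      · rw [hpm]; ring
      · have h0 : 2 * -m + p * 1 = 0 := by rw [hpm]; ring
        rw [h0]
        exact dvd_zero _
  · rintro ⟨m, hm⟩ b' hb' a ha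
    have hpm : p = 2 * m := by
      have h2 : d * p = d * (2 * m) := by rw [hP, hm]; ring
      exact mul_left_cancel₀ hd0 h2
    have hmq : (u₁ : ℚ) * v₂ = 2 * d * m := by exact_mod_cast hm
    rcases hb' with rfl | rfl
    · have haz : a = -m := by
        have h2 : (a : ℚ) = ((-m : ℤ) : ℚ) := by
          rw [ha, hmq]; push_cast; field_simp
        exact_mod_cast h2
      refine ⟨by simp, ?_, ?_⟩
      · exact (key _).2 (by rw [haz, hpm]; ring)
      · have h0 : 2 * a + p * 1 = 0 := by rw [haz, hpm]; ring
        rw [h0]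
        exact dvd_zero _
    · have haz : a = m := by
        have h2 : (a : ℚ) = ((m : ℤ) : ℚ) := by
          rw [ha, hmq]; push_cast; field_simp
        exact_mod_cast h2
      refine ⟨by simp, ?_, ?_⟩
      · exact (key _).2 (by rw [haz, hpm]; ring)
      · have h0 : 2 * a + p * -1 = 0 := by rw [haz, hpm]; ring
        rw [h0]
        exact dvd_zero _
end
end

section
/- Let u, v ∈ ℚ with Δ = u² + 4v < 0, written u = u₁/u₂ and v = v₁/v₂ in lowest terms with u₂, v₂ > 0, and let d = gcd(u₂, v₂). Then there exist an integer n and integers a, b' with gcd(a, b') = 1 such that (n : ℚ) = −u₂²v₂²·Δ/d², n = a·(a + (u₁v₂/d)·b') − ((u₂v₂/d)·b')·((u₂v₁/d)·b'), and n divides 2a + (u₁v₂/d)·b', if and only if 2d does not divide u₁v₂. Moreover, when 2d does not divide u₁v₂, this is realized by b' = ±2 and a = −(u₁v₂/(2d))·b'. -/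
noncomputable section

theorem stmt_12 (u v : ℚ) (u₁ u₂ v₁ v₂ : ℤ) (hu₂ : 0 < u₂) (hv₂ : 0 < v₂)
    (hu : u = (u₁ : ℚ) / (u₂ : ℚ)) (hv : v = (v₁ : ℚ) / (v₂ : ℚ))
    (hcu : Int.gcd u₁ u₂ = 1) (hcv : Int.gcd v₁ v₂ = 1)
    (d : ℤ) (hd : d = Int.gcd u₂ v₂)
    (hΔ : u ^ 2 + 4 * v < 0) :
    ((∃ n a b' : ℤ, Int.gcd a b' = 1 ∧
        (n : ℚ) = -((u₂ : ℚ) ^ 2 * (v₂ : ℚ) ^ 2 * (u ^ 2 + 4 * v)) / ((d : ℚ) ^ 2) ∧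
        n = a * (a + u₁ * v₂ / d * b') - (u₂ * v₂ / d * b') * (u₂ * v₁ / d * b') ∧
        n ∣ 2 * a + u₁ * v₂ / d * b') ↔
      ¬(2 * d ∣ u₁ * v₂)) ∧
    (¬(2 * d ∣ u₁ * v₂) → ∀ b' : ℤ, (b' = 2 ∨ b' = -2) → ∀ a : ℤ,
      (a : ℚ) = -((u₁ : ℚ) * (v₂ : ℚ) / (2 * (d : ℚ))) * (b' : ℚ) →
      Int.gcd a b' = 1 ∧
      ((a * (a + u₁ * v₂ / d * b') - (u₂ * v₂ / d * b') * (u₂ * v₁ / d * b') : ℤ) : ℚ) =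
        -((u₂ : ℚ) ^ 2 * (v₂ : ℚ) ^ 2 * (u ^ 2 + 4 * v)) / ((d : ℚ) ^ 2) ∧
      (a * (a + u₁ * v₂ / d * b') - (u₂ * v₂ / d * b') * (u₂ * v₁ / d * b')) ∣
        2 * a + u₁ * v₂ / d * b') := by
  have hu₂' : u₂ ≠ 0 := hu₂.ne'
  have hv₂' : v₂ ≠ 0 := hv₂.ne'
  have hd0 : 0 < d := by
    rw [hd]
    exact_mod_cast Int.gcd_pos_of_ne_zero_left v₂ hu₂'
  have hd' : d ≠ 0 := hd0.ne'
  have hdu : d ∣ u₂ := hd ▸ Int.gcd_dvd_left u₂ v₂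
  have hdv : d ∣ v₂ := hd ▸ Int.gcd_dvd_right u₂ v₂
  set P : ℤ := u₁ * v₂ / d with hPdef
  set Q : ℤ := u₂ * v₂ / d with hQdef
  set R : ℤ := u₂ * v₁ / d with hRdef
  have hP : d * P = u₁ * v₂ := Int.mul_ediv_cancel' (Dvd.dvd.mul_left hdv u₁)
  have hQ : d * Q = u₂ * v₂ := Int.mul_ediv_cancel' (Dvd.dvd.mul_left hdv u₂)
  have hR : d * R = u₂ * v₁ := Int.mul_ediv_cancel' (Dvd.dvd.mul_right hdu v₁)
  set N : ℤ := -(P ^ 2 + 4 * Q * R) with hN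
  have hNZ : N * d ^ 2 = -(u₁ ^ 2 * v₂ ^ 2 + 4 * u₂ ^ 2 * v₂ * v₁) := by
    rw [hN]
    linear_combination (-(d * P + u₁ * v₂)) * hP + (-4 * d * R) * hQ + (-4 * u₂ * v₂) * hR
  have hKey : ((N : ℤ) : ℚ) = -((u₂ : ℚ) ^ 2 * (v₂ : ℚ) ^ 2 * (u ^ 2 + 4 * v)) / ((d : ℚ) ^ 2) := by
    have hu2q : (u₂ : ℚ) ≠ 0 := Int.cast_ne_zero.mpr hu₂'
    have hv2q : (v₂ : ℚ) ≠ 0 := Int.cast_ne_zero.mpr hv₂'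
    have hdq : (d : ℚ) ≠ 0 := Int.cast_ne_zero.mpr hd'
    have hq : ((N : ℤ) : ℚ) * (d : ℚ) ^ 2
        = -((u₁ : ℚ) ^ 2 * (v₂ : ℚ) ^ 2 + 4 * (u₂ : ℚ) ^ 2 * (v₂ : ℚ) * (v₁ : ℚ)) := by
      exact_mod_cast congrArg (fun x : ℤ => (x : ℚ)) hNZ
    rw [hu, hv]
    field_simp
    linear_combination hq
  have hNpos : 0 < N := by
    have hq : (0 : ℚ) < ((N : ℤ) : ℚ) := by
      rw [hKey]
      apply div_pos
      · have h1 : (0 : ℚ) < (u₂ : ℚ) ^ 2 * (v₂ : ℚ) ^ 2 := by positivity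
        nlinarith
      · positivity
    exact_mod_cast hq
  have hpar : (2 * d ∣ u₁ * v₂) ↔ (2 ∣ P) := by
    rw [← hP]
    constructor
    · rintro ⟨k, hk⟩
      exact ⟨k, by apply mul_left_cancel₀ hd'; linarith [hk]⟩
    · rintro ⟨k, hk⟩
      exact ⟨k, by rw [hk]; ring⟩
  have gcdhelp : ∀ x y : ℤ, ¬ (2:ℤ) ∣ x → (y = 2 ∨ y = -2) → Int.gcd x y = 1 := by
    intro x y hx hy
    rw [← Int.isCoprime_iff_gcd_eq_one]
    obtain ⟨k, hk⟩ : ∃ k, x = 2 * k + 1 := ⟨x / 2, by omega⟩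
    rcases hy with rfl | rfl
    · exact ⟨1, -k, by linarith⟩
    · exact ⟨1, k, by linarith⟩
  constructor
  · constructor
    · rintro ⟨n, a, b', hg, h1, h2, h3⟩
      rw [hpar]
      rintro ⟨m, hm⟩
      have hn : n = N := by exact_mod_cast h1.trans hKey.symm
      subst hn
      have key : (2 * a + P * b') ^ 2 = N * (4 - b' ^ 2) := by
        linear_combination (-4 : ℤ) * h2 + b' ^ 2 * hN
      have h2ab : 2 ∣ a ∧ 2 ∣ b' := by
        by_cases ht : 2 * a + P * b' = 0
        · have h0 : N * (4 - b' ^ 2) = 0 := by rw [← key, ht]; ring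
          have hb4 : 4 - b' ^ 2 = 0 := by
            rcases mul_eq_zero.mp h0 with h | h
            · exact absurd h hNpos.ne'
            · exact h
          have h2b : 2 ∣ b' := by
            have hfac : (b' - 2) * (b' + 2) = 0 := by linear_combination -hb4
            rcases mul_eq_zero.mp hfac with h | h
            · exact ⟨1, by omega⟩
            · exact ⟨-1, by omega⟩
          have hab : a = -(m * b') := by
            rw [hm] at ht; linarith
          exact ⟨hab ▸ (dvd_neg.mpr (h2b.mul_left m)), h2b⟩
        · have h4N : (4:ℤ) ∣ N := ⟨-(m ^ 2 + Q * R), by rw [hN, hm]; ring⟩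
          have habs : N ≤ |2 * a + P * b'| :=
            Int.le_of_dvd (abs_pos.mpr ht) ((dvd_abs _ _).mpr h3)
          have hsq : N ^ 2 ≤ (2 * a + P * b') ^ 2 := by
            calc N ^ 2 ≤ |2 * a + P * b'| ^ 2 := pow_le_pow_left₀ hNpos.le habs 2
              _ = (2 * a + P * b') ^ 2 := sq_abs _
          have hle : N ≤ 4 - b' ^ 2 := by nlinarith [hsq, key, hNpos]
          have hb2 : (0:ℤ) ≤ b' ^ 2 := sq_nonneg b'
          have hN4 : N = 4 := by omega
          have hb0 : b' = 0 := by
            have h0 : b' ^ 2 = 0 := le_antisymm (by omega) hb2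
            exact pow_eq_zero_iff (by norm_num) |>.mp h0
          rw [hb0, hN4] at key
          have ha4 : a ^ 2 = 4 := by linarith [key]
          have hfac : (a - 2) * (a + 2) = 0 := by linear_combination ha4
          have h2a : 2 ∣ a := by
            rcases mul_eq_zero.mp hfac with h | h
            · exact ⟨1, by omega⟩
            · exact ⟨-1, by omega⟩
          exact ⟨h2a, hb0 ▸ dvd_zero 2⟩
      have hdg : (2:ℤ) ∣ (Int.gcd a b' : ℤ) := Int.dvd_coe_gcd h2ab.1 h2ab.2
      rw [hg] at hdg
      norm_num at hdg
    · intro hnd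
      have hoddP : ¬ (2:ℤ) ∣ P := fun h => hnd (hpar.mpr h)
      refine ⟨N, -P, 2,
        gcdhelp _ _ (fun h => hoddP ((dvd_neg).mp h)) (Or.inl rfl),
        hKey, by rw [hN]; ring, ?_⟩
      rw [show 2 * (-P) + P * 2 = 0 by ring]
      exact dvd_zero _
  · intro hnd b' hb a ha
    have hoddP : ¬ (2:ℤ) ∣ P := fun h => hnd (hpar.mpr h)
    have hdq : (d : ℚ) ≠ 0 := Int.cast_ne_zero.mpr hd'
    have hPq : (d : ℚ) * (P : ℚ) = (u₁ : ℚ) * (v₂ : ℚ) := by exact_mod_cast congrArg (fun x : ℤ => (x : ℚ)) hP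
    rcases hb with rfl | rfl
    · have haP : a = -P := by
        have hq : (a : ℚ) = ((-P : ℤ) : ℚ) := by
          rw [ha]; push_cast; field_simp; linear_combination hPq
        exact_mod_cast hq
      subst haP
      refine ⟨gcdhelp _ _ (fun h => hoddP ((dvd_neg).mp h)) (Or.inl rfl), ?_, ?_⟩
      · rw [show (-P) * (-P + P * 2) - Q * 2 * (R * 2) = N by rw [hN]; ring]
        exact hKey
      · rw [show 2 * (-P) + P * 2 = 0 by ring]
        exact dvd_zero _
    · have haP : a = P := by
        have hq : (a : ℚ) = ((P : ℤ) : ℚ) := by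
          rw [ha]; push_cast; field_simp; linear_combination (-1 : ℚ) * hPq
        exact_mod_cast hq
      subst haP
      refine ⟨gcdhelp _ _ hoddP (Or.inr rfl), ?_, ?_⟩
      · rw [show P * (P + P * (-2)) - Q * (-2) * (R * (-2)) = N by rw [hN]; ring]
        exact hKey
      · rw [show 2 * P + P * (-2) = 0 by ring]
        exact dvd_zero _
end
end

section
/- Let u, v ∈ ℚ with Δ = u² + 4v < 0, written u = u₁/u₂ and v = v₁/v₂ in lowest terms with u₂, v₂ > 0, and let d = gcd(u₂, v₂). Suppose n ≥ 2 and m ≥ 2 are integers such that both admit integers a, b' with gcd(a, b') = 1 satisfying k = a·(a + (u₁v₂/d)·b') − ((u₂v₂/d)·b')·((u₂v₁/d)·b') and k ∣ 2a + (u₁v₂/d)·b' (for k = n and for k = m respectively, with possibly different pairs (a, b')). Then n = m. In other words, for each CM elliptic curve E = ℂ/(ℤ + ℤτ), τ² = uτ + v, there is at most one n ≥ 2 for which E admits a cyclic subgroup C of order n with (E, C) ∼ (E/C, E[n]/C). -/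
lemma sq_one_or_four_le (b : ℤ) (hb : b ≠ 0) : b ^ 2 = 1 ∨ 4 ≤ b ^ 2 := by
  have h : b ≤ -2 ∨ b = -1 ∨ b = 1 ∨ 2 ≤ b := by omega
  rcases h with h | h | h | h
  · right; nlinarith
  · left; rw [h]; norm_num
  · left; rw [h]; norm_num
  · right; nlinarith

lemma key_lemma (P Q R : ℤ) (hD : P ^ 2 + 4 * (Q * R) < 0) (n : ℕ) (hn : 2 ≤ n)
    (h : ∃ a b : ℤ, Int.gcd a b = 1 ∧ (n : ℤ) = a * (a + P * b) - (Q * b) * (R * b) ∧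
      (n : ℤ) ∣ 2 * a + P * b) :
    (n : ℤ) = if P ^ 2 + 4 * (Q * R) = -4 then 2
      else if P % 2 = 0 then -(P ^ 2 + 4 * (Q * R)) / 4 else -(P ^ 2 + 4 * (Q * R)) := by
  obtain ⟨a, b, hg, hval, s, hs⟩ := h
  have key4 : 4 * (n : ℤ) = (2 * a + P * b) ^ 2 - (P ^ 2 + 4 * (Q * R)) * b ^ 2 := by
    rw [hval]; ring
  have hPsq : P % 2 = 0 ∧ P ^ 2 % 4 = 0 ∨ P % 2 = 1 ∧ P ^ 2 % 4 = 1 := by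
    rcases Int.even_or_odd P with ⟨k, hk⟩ | ⟨k, hk⟩
    · left
      have h1 : P ^ 2 = 4 * (k * k) := by rw [hk]; ring
      omega
    · right
      have h1 : P ^ 2 = 4 * (k * k + k) + 1 := by rw [hk]; ring
      omega
  have hD4 : (P ^ 2 + 4 * (Q * R)) % 4 = P ^ 2 % 4 := by omega
  -- b ≠ 0
  rcases eq_or_ne b 0 with hb | hb
  · exfalso
    rw [hb] at hg hval
    have ha : a = 1 ∨ a = -1 := by
      have := Int.gcd_zero_right a ▸ hg
      rcases Int.natAbs_eq a with h1 | h1 <;> omega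
    rcases ha with ha | ha <;> rw [ha] at hval <;> norm_num at hval <;> omega
  have hb2 : b ^ 2 = 1 ∨ 4 ≤ b ^ 2 := sq_one_or_four_le b hb
  rcases eq_or_ne s 0 with hs0 | hs0
  · -- trace zero case
    rw [hs0, mul_zero] at hs
    have hbdvd : b ∣ 2 := by
      have h2a : b ∣ 2 * a := ⟨-P, by linarith⟩
      exact Int.dvd_of_dvd_mul_left_of_gcd_one h2a (by rwa [Int.gcd_comm])
    have hble : b ≤ 2 := Int.le_of_dvd (by norm_num) hbdvd
    have hbge : -2 ≤ b := by
      have := Int.le_of_dvd (show (0:ℤ) < 2 by norm_num) ((neg_dvd).mpr hbdvd)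
      omega
    have haodd : b = 2 ∨ b = -2 → a % 2 = 1 := by
      intro hbv
      have h2 : ¬ (2:ℤ) ∣ a := by
        intro h2
        have h3 : (2:ℤ) ∣ b := by rcases hbv with h | h <;> rw [h] <;> norm_num
        have := Int.dvd_gcd h2 h3
        rw [hg] at this
        norm_num at this
      omega
    have hbv : b = -2 ∨ b = -1 ∨ b = 1 ∨ b = 2 := by omega
    rcases hbv with hbv | hbv | hbv | hbv <;> subst hbv
    · -- b = -2
      have hP2 : P % 2 = 1 := by have := haodd (by norm_num); omega
      have h4 : 4 * (n : ℤ) = -(P ^ 2 + 4 * (Q * R)) * 4 := by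
        rw [key4]
        have h5 : 2 * a + P * (-2) = 0 := by omega
        rw [h5]; ring
      rw [if_neg (by omega), if_neg (by omega)]
      omega
    · -- b = -1
      have hP2 : P % 2 = 0 := by omega
      have h4 : 4 * (n : ℤ) = -(P ^ 2 + 4 * (Q * R)) := by
        rw [key4]
        have h5 : 2 * a + P * (-1) = 0 := by omega
        rw [h5]; ring
      rw [if_neg (by omega), if_pos hP2]
      omega
    · -- b = 1
      have hP2 : P % 2 = 0 := by omega
      have h4 : 4 * (n : ℤ) = -(P ^ 2 + 4 * (Q * R)) := by
        rw [key4]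
        have h5 : 2 * a + P * 1 = 0 := by omega
        rw [h5]; ring
      rw [if_neg (by omega), if_pos hP2]
      omega
    · -- b = 2
      have hP2 : P % 2 = 1 := by have := haodd (by norm_num); omega
      have h4 : 4 * (n : ℤ) = -(P ^ 2 + 4 * (Q * R)) * 4 := by
        rw [key4]
        have h5 : 2 * a + P * 2 = 0 := by omega
        rw [h5]; ring
      rw [if_neg (by omega), if_neg (by omega)]
      omega
  · -- s ≠ 0
    have hs2 : 1 ≤ s ^ 2 := by rcases hs0.lt_or_gt with h | h <;> nlinarith
    have hb2' : 1 ≤ b ^ 2 := by rcases hb2 with h | h <;> omega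
    have key4' : 4 * (n : ℤ) = (n : ℤ) ^ 2 * s ^ 2 + (-(P ^ 2 + 4 * (Q * R))) * b ^ 2 := by
      rw [key4, hs]; ring
    have hDpos : 1 ≤ -(P ^ 2 + 4 * (Q * R)) := by omega
    have hNge : (2 : ℤ) ≤ (n : ℤ) := by exact_mod_cast hn
    have hNle : (n : ℤ) ≤ 3 := by
      nlinarith [mul_le_mul_of_nonneg_left hs2 (sq_nonneg (n : ℤ)),
        mul_le_mul_of_nonneg_left hb2' (by omega : (0:ℤ) ≤ -(P ^ 2 + 4 * (Q * R)))]
    have hs2le : s ^ 2 = 1 := by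
      nlinarith [mul_le_mul_of_nonneg_left hb2' (by omega : (0:ℤ) ≤ -(P ^ 2 + 4 * (Q * R)))]
    rw [hs2le, mul_one] at key4'
    -- now 4n = n² + f·b² with f ≥ 1, b² = 1 or ≥ 4
    have hn34 : (n : ℤ) = 2 ∨ (n : ℤ) = 3 := by omega
    rcases hn34 with hN | hN <;> rw [hN] at key4' ⊢
    · -- f * b² = 4
      have hfb : -(P ^ 2 + 4 * (Q * R)) * b ^ 2 = 4 := by omega
      rcases hb2 with h1 | h1
      · rw [h1, mul_one] at hfb
        rw [if_pos (by omega)]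
      · exfalso
        have hf1 : -(P ^ 2 + 4 * (Q * R)) = 1 := by
          nlinarith [mul_le_mul_of_nonneg_left h1 (by omega : (0:ℤ) ≤ -(P ^ 2 + 4 * (Q * R)))]
        omega
    · -- f * b² = 3
      have hfb : -(P ^ 2 + 4 * (Q * R)) * b ^ 2 = 3 := by omega
      rcases hb2 with h1 | h1
      · rw [h1, mul_one] at hfb
        rw [if_neg (by omega), if_neg (by omega)]
        omega
      · exfalso
        nlinarith [mul_le_mul_of_nonneg_left h1 (by omega : (0:ℤ) ≤ -(P ^ 2 + 4 * (Q * R)))]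

noncomputable section

theorem stmt_15 (u v : ℚ) (u₁ u₂ v₁ v₂ : ℤ) (hu₂ : 0 < u₂) (hv₂ : 0 < v₂)
    (hu : u = (u₁ : ℚ) / (u₂ : ℚ)) (hv : v = (v₁ : ℚ) / (v₂ : ℚ))
    (hcu : Int.gcd u₁ u₂ = 1) (hcv : Int.gcd v₁ v₂ = 1)
    (d : ℤ) (hd : d = Int.gcd u₂ v₂)
    (hΔ : u ^ 2 + 4 * v < 0)
    (n m : ℕ) (hn : 2 ≤ n) (hm : 2 ≤ m)
    (hne : ∃ a b' : ℤ, Int.gcd a b' = 1 ∧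
        (n : ℤ) = a * (a + u₁ * v₂ / d * b') - (u₂ * v₂ / d * b') * (u₂ * v₁ / d * b') ∧
        (n : ℤ) ∣ 2 * a + u₁ * v₂ / d * b')
    (hme : ∃ a b' : ℤ, Int.gcd a b' = 1 ∧
        (m : ℤ) = a * (a + u₁ * v₂ / d * b') - (u₂ * v₂ / d * b') * (u₂ * v₁ / d * b') ∧
        (m : ℤ) ∣ 2 * a + u₁ * v₂ / d * b') :
    n = m := by
  have hd0 : 0 < d := by
    rw [hd]
    exact_mod_cast Int.gcd_pos_of_ne_zero_left v₂ (by omega)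
  have hdu : d ∣ u₂ := hd ▸ Int.gcd_dvd_left u₂ v₂
  have hdv : d ∣ v₂ := hd ▸ Int.gcd_dvd_right u₂ v₂
  obtain ⟨u₂', hu₂'⟩ := hdu
  obtain ⟨v₂', hv₂'⟩ := hdv
  have hd0' : d ≠ 0 := by omega
  have hP : u₁ * v₂ / d = u₁ * v₂' := by
    rw [hv₂', show u₁ * (d * v₂') = d * (u₁ * v₂') by ring, Int.mul_ediv_cancel_left _ hd0']
  have hQ : u₂ * v₂ / d = u₂ * v₂' := by
    rw [hv₂', show u₂ * (d * v₂') = d * (u₂ * v₂') by ring, Int.mul_ediv_cancel_left _ hd0']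
  have hR : u₂ * v₁ / d = u₂' * v₁ := by
    rw [hu₂', show d * u₂' * v₁ = d * (u₂' * v₁) by ring, Int.mul_ediv_cancel_left _ hd0']
  set P := u₁ * v₂' with hPd
  set Q := u₂ * v₂' with hQd
  set R := u₂' * v₁ with hRd
  rw [hP, hQ, hR] at hne hme
  -- discriminant negative over ℤ
  have hv₂'pos : 0 < v₂' := by nlinarith
  have hu₂q : (u₂ : ℚ) ≠ 0 := by exact_mod_cast (by omega : u₂ ≠ 0)
  have hv₂q : (v₂ : ℚ) ≠ 0 := by exact_mod_cast (by omega : v₂ ≠ 0)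
  have hXq : ((u₁ ^ 2 * v₂ + 4 * u₂ ^ 2 * v₁ : ℤ) : ℚ) < 0 := by
    push_cast
    have h1 : ((u₁ : ℚ) ^ 2 * v₂ + 4 * u₂ ^ 2 * v₁) = (u ^ 2 + 4 * v) * (u₂ ^ 2 * v₂) := by
      rw [hu, hv]; field_simp
    rw [h1]
    apply mul_neg_of_neg_of_pos hΔ
    have h2 : (0:ℚ) < u₂ := by exact_mod_cast hu₂
    have h3 : (0:ℚ) < v₂ := by exact_mod_cast hv₂
    positivity
  have hX : u₁ ^ 2 * v₂ + 4 * u₂ ^ 2 * v₁ < 0 := by exact_mod_cast hXq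
  have hint1 : (P ^ 2 + 4 * (Q * R)) * d = v₂' * (u₁ ^ 2 * v₂ + 4 * u₂ ^ 2 * v₁) := by
    rw [hPd, hQd, hRd, hu₂', hv₂']; ring
  have hD : P ^ 2 + 4 * (Q * R) < 0 := by
    nlinarith [mul_neg_of_pos_of_neg hv₂'pos hX]
  have h1 := key_lemma P Q R hD n hn hne
  have h2 := key_lemma P Q R hD m hm hme
  have : (n : ℤ) = (m : ℤ) := by rw [h1, h2]
  exact_mod_cast this
end
end
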